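/- arXiv:1507.00135 — 3 statements merged into one kernel-verified Lean document; each statement's English description precedes it below -/
import Mathlib

section
/- Let G be an irreducible subgroup of PL_o([a,c]), where a < c. If χ : G → ℝ is a non-zero character that does not vanish identically on ker σ_ℓ and does not vanish identically on ker σ_r, then [χ] ∈ Σ¹(G). (Equivalently, S(G, ker χ_ℓ)^c ∩ S(G, ker χ_r)^c ⊆ Σ¹(G).) -/
open Set

/-- A map `g : ℝ → ℝ` is *finitary piecewise linear* if there is a finite set of
breakpoints outside of which `g` is locally affine. -/
def IsFinitaryPL (g : ℝ → ℝ) : Prop :=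
  ∃ B : Finset ℝ, ∀ t : ℝ, t ∉ B →
    ∃ m b : ℝ, ∃ ε : ℝ, 0 < ε ∧ ∀ u : ℝ, |u - t| < ε → g u = m * u + b

/-- The support of a map of the real line. -/
def suppOf (g : ℝ → ℝ) : Set ℝ := {t : ℝ | g t ≠ t}

/-- `PLo I` is the set of orientation-preserving (i.e. strictly increasing) finitary
piecewise linear homeomorphisms of `ℝ` with support contained in `I`. -/
def PLo (I : Set ℝ) : Set (Equiv.Perm ℝ) :=
  {g : Equiv.Perm ℝ | StrictMono ⇑g ∧ IsFinitaryPL ⇑g ∧ suppOf ⇑g ⊆ I}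

/-- The right derivative of `g` at `a`. -/
noncomputable def rightSlope (g : ℝ → ℝ) (a : ℝ) : ℝ := derivWithin g (Ici a) a

/-- The left derivative of `g` at `c`. -/
noncomputable def leftSlope (g : ℝ → ℝ) (c : ℝ) : ℝ := derivWithin g (Iic c) c

/-- The amplitude of the translation with which `g` coincides near `+∞`. -/
noncomputable def amplTop (g : ℝ → ℝ) : ℝ :=
  Filter.limUnder Filter.atTop (fun t => g t - t)

/-- The amplitude of the translation with which `g` coincides near `-∞`. -/
noncomputable def amplBot (g : ℝ → ℝ) : ℝ :=
  Filter.limUnder Filter.atBot (fun t => g t - t)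

/-- A character of a group is a homomorphism into `(ℝ, +)`. -/
def IsChar {Γ : Type*} [Group Γ] (χ : Γ → ℝ) : Prop :=
  ∀ g h : Γ, χ (g * h) = χ g + χ h

/-- Two characters lie on the same ray: `ψ` is a positive multiple of `χ`. -/
def SameRayChar {Γ : Type*} (χ ψ : Γ → ℝ) : Prop :=
  ∃ r : ℝ, 0 < r ∧ ∀ g : Γ, ψ g = r * χ g

/-- The subgraph `Γ(G, X)_χ` of the Cayley graph of `G` with respect to the generating
set `X`, spanned by the vertices `g` with `χ g ≥ 0`, is connected. -/
def CayleyConnected {Γ : Type*} [Group Γ] (X : Set Γ) (χ : Γ → ℝ) : Prop :=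
  ∀ g h : Γ, 0 ≤ χ g → 0 ≤ χ h →
    Relation.ReflTransGen
      (fun u v : Γ => 0 ≤ χ u ∧ 0 ≤ χ v ∧ ∃ x ∈ X, v = u * x ∨ u = v * x) g h

/-- `[χ] ∈ Σ¹(G)`: for every generating set `X` of `G` the subgraph `Γ(G,X)_χ`
of the Cayley graph is connected. -/
def MemSigma1 {Γ : Type*} [Group Γ] (χ : Γ → ℝ) : Prop :=
  ∀ X : Set Γ, Subgroup.closure X = ⊤ → CayleyConnected X χ

/-- The character `χ_ℓ = ln ∘ σ_ℓ` of a subgroup `G` of `PL_o([a,c])`. -/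
noncomputable def chiL (G : Subgroup (Equiv.Perm ℝ)) (a : ℝ) : G → ℝ :=
  fun g => Real.log (rightSlope (⇑(g : Equiv.Perm ℝ)) a)

/-- The character `χ_r = ln ∘ σ_r` of a subgroup `G` of `PL_o([a,c])`. -/
noncomputable def chiR (G : Subgroup (Equiv.Perm ℝ)) (c : ℝ) : G → ℝ :=
  fun g => Real.log (leftSlope (⇑(g : Equiv.Perm ℝ)) c)

namespace BNSAux

/-! ### Character basics -/

section Char
variable {Γ : Type*} [Group Γ] {χ : Γ → ℝ}

def IsCharAux (χ : Γ → ℝ) : Prop := ∀ g h : Γ, χ (g * h) = χ g + χ h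

lemma chi_one (hχ : IsCharAux χ) : χ 1 = 0 := by
  have h := hχ 1 1; rw [one_mul] at h; linarith

lemma chi_inv (hχ : IsCharAux χ) (g : Γ) : χ g⁻¹ = -χ g := by
  have h := hχ g g⁻¹; rw [mul_inv_cancel] at h
  have := chi_one hχ; linarith

lemma chi_pow (hχ : IsCharAux χ) (g : Γ) : ∀ n : ℕ, χ (g ^ n) = n * χ g := by
  intro n; induction n with
  | zero => simpa using chi_one hχ
  | succ n ih => rw [pow_succ, hχ, ih]; push_cast; ring

lemma chi_conj (hχ : IsCharAux χ) (h g : Γ) : χ (h * g * h⁻¹) = χ g := by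
  rw [hχ, hχ, chi_inv hχ]; ring

end Char

/-! ### Words and staircases -/

section Words
variable {Γ : Type*} [Group Γ]

variable (X : Set Γ) (χ : Γ → ℝ)

/-- letters -/
def Lett (x : Γ) : Prop := x ∈ X ∨ x⁻¹ ∈ X

/-- `g` admits a word in the letters all of whose prefixes have nonnegative `χ`-value. -/
def Stair (g : Γ) : Prop :=
  ∃ L : List Γ, (∀ ℓ ∈ L, Lett X ℓ) ∧ L.prod = g ∧ ∀ n : ℕ, 0 ≤ χ ((L.take n).prod)

variable {X χ}

lemma Lett.inv {x : Γ} (h : Lett X x) : Lett X x⁻¹ := by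
  rcases h with h | h
  · exact Or.inr (by simpa)
  · exact Or.inl h

lemma stair_one (hχ : IsCharAux χ) : Stair X χ (1 : Γ) :=
  ⟨[], by simp, by simp, by simp [chi_one hχ]⟩

lemma stair_nonneg {g : Γ} (h : Stair X χ g) : 0 ≤ χ g := by
  obtain ⟨L, -, hp, hv⟩ := h
  have := hv L.length
  rwa [List.take_length, hp] at this

lemma stair_concat (hχ : IsCharAux χ) {g : Γ} {L : List Γ} (hst : Stair X χ g)
    (hL : ∀ ℓ ∈ L, Lett X ℓ) (hval : ∀ n : ℕ, 0 ≤ χ g + χ ((L.take n).prod)) :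
    Stair X χ (g * L.prod) := by
  obtain ⟨W, hWl, hWp, hWv⟩ := hst
  refine ⟨W ++ L, ?_, by rw [List.prod_append, hWp], ?_⟩
  · intro ℓ hℓ; rcases List.mem_append.1 hℓ with h | h
    · exact hWl ℓ h
    · exact hL ℓ h
  · intro n
    rw [List.take_append, List.prod_append, hχ]
    rcases le_or_gt n W.length with hn | hn
    · have h0 : n - W.length = 0 := Nat.sub_eq_zero_of_le hn
      rw [h0]; simpa [chi_one hχ] using hWv n
    · rw [List.take_of_length_le (le_of_lt hn), hWp]
      exact hval _

/-- formal inverse of a word -/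
def invWord : List Γ → List Γ
  | [] => []
  | a :: t => invWord t ++ [a⁻¹]

lemma invWord_lett {L : List Γ} (h : ∀ ℓ ∈ L, Lett X ℓ) :
    ∀ ℓ ∈ invWord L, Lett X ℓ := by
  induction L with
  | nil => simp [invWord]
  | cons a t ih =>
      intro ℓ hℓ
      rcases List.mem_append.1 hℓ with h' | h'
      · exact ih (fun x hx => h x (List.mem_cons_of_mem _ hx)) ℓ h'
      · rcases List.mem_singleton.1 h' with rfl
        exact (h a (List.mem_cons_self)).inv

lemma invWord_prod (L : List Γ) : (invWord L).prod = L.prod⁻¹ := by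
  induction L with
  | nil => simp [invWord]
  | cons a t ih => simp [invWord, ih, mul_inv_rev]

lemma invWord_take (hχ : IsCharAux χ) (L : List Γ) :
    ∀ n : ℕ, ∃ m : ℕ, χ (((invWord L).take n).prod) = χ ((L.take m).prod) - χ L.prod := by
  have hadd : ∀ g h : Γ, χ (g * h) = χ g + χ h := hχ
  induction L with
  | nil => intro n; exact ⟨0, by simp [invWord, chi_one hχ]⟩
  | cons a t ih =>
      intro n
      show ∃ m, χ (((invWord t ++ [a⁻¹]).take n).prod) = _
      rw [List.take_append, List.prod_append]
      rcases le_or_gt n (invWord t).length with hn | hn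
      · have h0 : n - (invWord t).length = 0 := Nat.sub_eq_zero_of_le hn
        obtain ⟨m, hm⟩ := ih n
        refine ⟨m + 1, ?_⟩
        rw [h0]
        simp only [List.take_zero, List.prod_nil, mul_one, List.take_succ_cons, List.prod_cons,
          hadd, hm]
        ring
      · have h1 : 1 ≤ n - (invWord t).length := Nat.one_le_iff_ne_zero.2 (by omega)
        rw [List.take_of_length_le (le_of_lt hn), List.take_of_length_le (by simpa using h1),
          invWord_prod]
        refine ⟨0, ?_⟩
        simp only [List.prod_cons, List.prod_singleton, List.take_zero, List.prod_nil,
          mul_one, hadd, chi_inv hχ, chi_one hχ]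
        ring

lemma exists_word (hX : Subgroup.closure X = ⊤) (g : Γ) :
    ∃ L : List Γ, (∀ ℓ ∈ L, Lett X ℓ) ∧ L.prod = g := by
  have hg : g ∈ Subgroup.closure X := by rw [hX]; trivial
  induction hg using Subgroup.closure_induction with
  | mem x hx => exact ⟨[x], fun ℓ hℓ => by rw [List.mem_singleton.1 hℓ]; exact Or.inl hx, by simp⟩
  | one => exact ⟨[], by simp, by simp⟩
  | mul x y hx hy ihx ihy =>
      obtain ⟨L1, hl1, hp1⟩ := ihx; obtain ⟨L2, hl2, hp2⟩ := ihy
      refine ⟨L1 ++ L2, ?_, by rw [List.prod_append, hp1, hp2]⟩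
      intro ℓ hℓ; rcases List.mem_append.1 hℓ with h | h
      · exact hl1 ℓ h
      · exact hl2 ℓ h
  | inv x hx ihx =>
      obtain ⟨L, hl, hp⟩ := ihx
      exact ⟨invWord L, invWord_lett hl, by rw [invWord_prod, hp]⟩

lemma word_dip (χ : Γ → ℝ) (hχ : IsCharAux χ) (L : List Γ) :
    ∃ C : ℝ, 0 ≤ C ∧ ∀ n : ℕ, -C ≤ χ ((L.take n).prod) := by
  classical
  have hne : (Finset.range (L.length + 1)).Nonempty := ⟨0, by simp⟩
  set F := (Finset.range (L.length + 1)).image (fun n => χ ((L.take n).prod)) with hF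
  have hFne : F.Nonempty := hne.image _
  refine ⟨max 0 (-(F.min' hFne)), le_max_left _ _, ?_⟩
  intro n
  have key : ∀ k : ℕ, k ≤ L.length → F.min' hFne ≤ χ ((L.take k).prod) := by
    intro k hk
    exact Finset.min'_le _ _ (Finset.mem_image.2 ⟨k, Finset.mem_range.2 (by omega), rfl⟩)
  have : F.min' hFne ≤ χ ((L.take n).prod) := by
    rcases le_or_gt n L.length with hn | hn
    · exact key n hn
    · rw [List.take_of_length_le (le_of_lt hn)]
      have := key L.length le_rfl
      rwa [List.take_length] at this
  have h2 : -(max 0 (-(F.min' hFne))) ≤ F.min' hFne := by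
    have := le_max_right 0 (-(F.min' hFne)); linarith
  linarith

lemma pow_word (hχ : IsCharAux χ) {L : List Γ} {C : ℝ}
    (hl : ∀ ℓ ∈ L, Lett X ℓ) (hC : 0 ≤ C)
    (hd : ∀ n : ℕ, -C ≤ χ ((L.take n).prod)) (hy : 0 ≤ χ L.prod) :
    ∀ m : ℕ, ∃ Lm : List Γ, (∀ ℓ ∈ Lm, Lett X ℓ) ∧ Lm.prod = L.prod ^ m ∧
      ∀ n : ℕ, -C ≤ χ ((Lm.take n).prod) := by
  intro m; induction m with
  | zero => exact ⟨[], by simp, by simp, by intro n; simp only [List.take_nil, List.prod_nil, chi_one hχ]; linarith⟩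
  | succ m ih =>
      obtain ⟨Lm, hlm, hpm, hdm⟩ := ih
      refine ⟨Lm ++ L, ?_, ?_, ?_⟩
      · intro ℓ hℓ; rcases List.mem_append.1 hℓ with h | h
        · exact hlm ℓ h
        · exact hl ℓ h
      · rw [List.prod_append, hpm, pow_succ]
      · intro n
        rw [List.take_append, List.prod_append, hχ]
        rcases le_or_gt n Lm.length with hn | hn
        · have h0 : n - Lm.length = 0 := Nat.sub_eq_zero_of_le hn
          rw [h0]; simpa [chi_one hχ] using hdm n
        · rw [List.take_of_length_le (le_of_lt hn), hpm, chi_pow hχ]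
          have := hd (n - Lm.length)
          have hmn : 0 ≤ (m : ℝ) * χ L.prod := by positivity
          linarith

lemma stair_strip (hχ : IsCharAux χ) {z g : Γ} (hz : Stair X χ z) (hz0 : 0 ≤ χ z)
    (hg0 : 0 ≤ χ g) : ∀ k : ℕ, Stair X χ (g * z ^ k) → Stair X χ g := by
  intro k; induction k with
  | zero => intro h; simpa using h
  | succ k ih =>
      intro h
      apply ih
      obtain ⟨Z, hZl, hZp, hZv⟩ := hz
      have hcond : ∀ n : ℕ, 0 ≤ χ (g * z ^ (k+1)) + χ (((invWord Z).take n).prod) := by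
        intro n
        obtain ⟨m, hm⟩ := invWord_take hχ Z n
        rw [hm, hZp, hχ, chi_pow hχ]
        have h1 := hZv m
        have h2 : 0 ≤ (k : ℝ) * χ z := by positivity
        push_cast
        linarith
      have := stair_concat hχ h (invWord_lett hZl) hcond
      rw [invWord_prod, hZp] at this
      have heq : g * z ^ (k+1) * z⁻¹ = g * z ^ k := by
        rw [pow_succ, ← mul_assoc]; group
      rwa [heq] at this

lemma rtg_of_stair {g : Γ} (hst : Stair X χ g) :
    Relation.ReflTransGen
      (fun u v : Γ => 0 ≤ χ u ∧ 0 ≤ χ v ∧ ∃ x ∈ X, v = u * x ∨ u = v * x) 1 g := by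
  obtain ⟨L, hl, hp, hv⟩ := hst
  suffices h : ∀ n : ℕ, Relation.ReflTransGen
      (fun u v : Γ => 0 ≤ χ u ∧ 0 ≤ χ v ∧ ∃ x ∈ X, v = u * x ∨ u = v * x) 1 ((L.take n).prod) by
    have := h L.length
    rwa [List.take_length, hp] at this
  intro n; induction n with
  | zero => simp only [List.take_zero, List.prod_nil]; exact Relation.ReflTransGen.refl
  | succ n ih =>
      rcases lt_or_ge n L.length with hn | hn
      · have hstep : (L.take (n + 1)).prod = (L.take n).prod * L[n] :=
          List.prod_take_succ L n hn
        refine ih.tail ⟨hv n, hv (n+1), ?_⟩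
        rcases hl L[n] (List.getElem_mem hn) with hx | hx
        · exact ⟨L[n], hx, Or.inl hstep⟩
        · refine ⟨L[n]⁻¹, hx, Or.inr ?_⟩
          rw [hstep, mul_assoc, mul_inv_cancel, mul_one]
      · rw [List.take_of_length_le (by omega)]
        rwa [List.take_of_length_le hn] at ih

end Words

section Tame
variable {Γ : Type*} [Group Γ] {X : Set Γ} {χ : Γ → ℝ}

/-- all large multiples of some positive power are staircase elements -/
def Tame (X : Set Γ) (χ : Γ → ℝ) (y : Γ) : Prop :=
  ∃ p : ℕ, 0 < p ∧ ∀ j : ℕ, 0 < j → Stair X χ (y ^ (p * j))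

lemma exists_pow_mul_ge {z : ℝ} (hz : 0 < z) (p : ℕ) (hp : 0 < p) (C : ℝ) :
    ∃ j : ℕ, 0 < j ∧ C ≤ (↑(p * j)) * z := by
  obtain ⟨n, hn⟩ := exists_nat_ge (C / z)
  refine ⟨n + 1, Nat.succ_pos _, ?_⟩
  have h1 : (C / z) ≤ ((p * (n+1) : ℕ) : ℝ) := by
    have h2 : ((n : ℝ)) ≤ ((p * (n+1) : ℕ) : ℝ) := by
      push_cast
      have : (1:ℝ) ≤ (p:ℝ) := by exact_mod_cast hp
      nlinarith [Nat.cast_nonneg (α := ℝ) n]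
    linarith
  calc C = (C / z) * z := by field_simp
  _ ≤ _ := by apply mul_le_mul_of_nonneg_right h1 hz.le

lemma stair_pow_letter (hχ : IsCharAux χ) {t₀ : Γ} (ht : Lett X t₀) (h0 : 0 ≤ χ t₀) (K : ℕ) :
    Stair X χ (t₀ ^ K) := by
  refine ⟨List.replicate K t₀, ?_, by simp [List.prod_replicate], ?_⟩
  · intro ℓ hℓ; rwa [List.eq_of_mem_replicate hℓ]
  · intro n
    rw [List.take_replicate, List.prod_replicate, chi_pow hχ]
    positivity

lemma tame_link (hχ : IsCharAux χ) (hX : Subgroup.closure X = ⊤) {z y : Γ}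
    (hz : Tame X χ z) (hzpos : 0 < χ z) (hcomm : Commute z y) (hy0 : 0 ≤ χ y) :
    Tame X χ y := by
  obtain ⟨p, hp, hstz⟩ := hz
  refine ⟨1, one_pos, ?_⟩
  intro m hm
  rw [one_mul]
  obtain ⟨L, hl, hLp⟩ := exists_word hX y
  obtain ⟨C, hC0, hCd⟩ := word_dip χ hχ L
  obtain ⟨Lm, hlm, hLmp, hLmd⟩ := pow_word hχ hl hC0 hCd (by rw [hLp]; exact hy0) m
  obtain ⟨j, hj, hjC⟩ := exists_pow_mul_ge hzpos p hp C
  have hZ : Stair X χ (z ^ (p * j)) := hstz j hj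
  have h1 : Stair X χ (z ^ (p * j) * y ^ m) := by
    have hcat := stair_concat hχ hZ hlm ?_
    · rwa [hLmp, hLp] at hcat
    · intro n
      have hval := hLmd n
      have hpow : χ (z ^ (p * j)) = (↑(p * j)) * χ z := chi_pow hχ _ _
      rw [hpow]; linarith
  have h2 : Stair X χ (y ^ m * (z ^ p) ^ j) := by
    rw [← pow_mul]
    rwa [((hcomm.pow_pow (p * j) m).eq)] at h1
  have hzp : Stair X χ (z ^ p) := by
    have := hstz 1 one_pos; rwa [mul_one] at this
  have hzp0 : 0 ≤ χ (z ^ p) := by rw [chi_pow hχ]; positivity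
  have hym0 : 0 ≤ χ (y ^ m) := by rw [chi_pow hχ]; positivity
  have hfin := stair_strip hχ hzp hzp0 hym0 j h2
  simpa using hfin

lemma tame_rot (hχ : IsCharAux χ) (hX : Subgroup.closure X = ⊤) {u g : Γ}
    (hu : Tame X χ u) (hupos : 0 < χ u) (hu' : Tame X χ (g * u * g⁻¹)) (hg0 : 0 ≤ χ g) :
    Stair X χ g := by
  obtain ⟨p, hp, hpu⟩ := hu
  obtain ⟨p', hp', hpu'⟩ := hu'
  obtain ⟨L, hl, hLp⟩ := exists_word hX g
  obtain ⟨C, hC0, hCd⟩ := word_dip χ hχ L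
  obtain ⟨j, hj, hjC⟩ := exists_pow_mul_ge hupos (p' * p) (Nat.mul_pos hp' hp) C
  set N : ℕ := p' * (p * j) with hN
  have hNeq : p' * p * j = N := by rw [hN]; ring
  have hZ : Stair X χ ((g * u * g⁻¹) ^ N) := hpu' (p * j) (Nat.mul_pos hp hj)
  have hχZ : χ ((g * u * g⁻¹) ^ N) = (↑(p' * p * j)) * χ u := by
    rw [chi_pow hχ, chi_conj hχ, hNeq]
  have h1 : Stair X χ ((g * u * g⁻¹) ^ N * g) := by
    have hcat := stair_concat hχ hZ hl ?_
    · rwa [hLp] at hcat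
    · intro n
      have := hCd n
      rw [hχZ]; linarith
  have hconj : (g * u * g⁻¹) ^ N = g * u ^ N * g⁻¹ := by
    have := map_pow (MulAut.conj g) u N
    simpa [MulAut.conj_apply] using this.symm
  have h2 : Stair X χ (g * (u ^ p) ^ (p' * j)) := by
    have heq : (g * u * g⁻¹) ^ N * g = g * (u ^ p) ^ (p' * j) := by
      rw [hconj, ← pow_mul]
      have : p * (p' * j) = N := by rw [hN]; ring
      rw [this]; group
    rwa [heq] at h1
  have hzp : Stair X χ (u ^ p) := by
    have := hpu 1 one_pos; rwa [mul_one] at this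
  have hzp0 : 0 ≤ χ (u ^ p) := by rw [chi_pow hχ]; positivity
  exact stair_strip hχ hzp hzp0 hg0 (p' * j) h2

end Tame

section PL

/-- gluing of locally affine maps on an open interval -/
lemma glue_affine {g : ℝ → ℝ} {p q : ℝ} (hpq : p < q)
    (hloc : ∀ t ∈ Ioo p q, ∃ m b ε : ℝ, 0 < ε ∧ ∀ u : ℝ, |u - t| < ε → g u = m * u + b) :
    ∃ m b : ℝ, ∀ t ∈ Ioo p q, g t = m * t + b := by
  classical
  set t₀ : ℝ := (p + q) / 2 with ht₀
  have ht₀mem : t₀ ∈ Ioo p q := ⟨by simp only [ht₀]; linarith, by simp only [ht₀]; linarith⟩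
  obtain ⟨m₀, b₀, ε₀, hε₀, h₀⟩ := hloc t₀ ht₀mem
  refine ⟨m₀, b₀, ?_⟩
  set U : Set ℝ := {t : ℝ | ∃ δ : ℝ, 0 < δ ∧ ∀ u : ℝ, |u - t| < δ → g u = m₀ * u + b₀} with hU
  set V : Set ℝ := {t : ℝ | ∃ m b δ : ℝ, (m, b) ≠ (m₀, b₀) ∧ 0 < δ ∧
      ∀ u : ℝ, |u - t| < δ → g u = m * u + b} with hV
  have hUopen : IsOpen U := by
    rw [Metric.isOpen_iff]
    rintro t ⟨δ, hδ, ht⟩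
    refine ⟨δ / 2, by linarith, ?_⟩
    intro s hs
    rw [Metric.mem_ball, Real.dist_eq] at hs
    refine ⟨δ / 2, by linarith, ?_⟩
    intro u hu
    apply ht
    have : |u - t| ≤ |u - s| + |s - t| := abs_sub_le _ _ _
    linarith
  have hVopen : IsOpen V := by
    rw [Metric.isOpen_iff]
    rintro t ⟨m, b, δ, hmb, hδ, ht⟩
    refine ⟨δ / 2, by linarith, ?_⟩
    intro s hs
    rw [Metric.mem_ball, Real.dist_eq] at hs
    refine ⟨m, b, δ / 2, hmb, by linarith, ?_⟩
    intro u hu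
    apply ht
    have : |u - t| ≤ |u - s| + |s - t| := abs_sub_le _ _ _
    linarith
  have hsub : Ioo p q ⊆ U ∪ V := by
    intro t ht
    obtain ⟨m, b, ε, hε, hmb⟩ := hloc t ht
    by_cases h : (m, b) = (m₀, b₀)
    · left
      have h1 : m = m₀ := congrArg Prod.fst h
      have h2 : b = b₀ := congrArg Prod.snd h
      exact ⟨ε, hε, fun u hu => by rw [hmb u hu, h1, h2]⟩
    · right
      exact ⟨m, b, ε, h, hε, hmb⟩
  have hdisjN : ∀ t, t ∈ Ioo p q → t ∈ U → t ∈ V → False := by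
    rintro t _ ⟨δ₁, hδ₁, h1⟩ ⟨m, b, δ₂, hmb, hδ₂, h2⟩
    set δ := min δ₁ δ₂ with hδdef
    have hδpos : 0 < δ := lt_min hδ₁ hδ₂
    have hd1 : δ ≤ δ₁ := min_le_left _ _
    have hd2 : δ ≤ δ₂ := min_le_right _ _
    have e1 : g t = m₀ * t + b₀ := h1 t (by simpa using hδ₁)
    have e2 : g t = m * t + b := h2 t (by simpa using hδ₂)
    have e1' : g (t + δ/2) = m₀ * (t + δ/2) + b₀ := by
      apply h1; rw [show t + δ/2 - t = δ/2 by ring, abs_of_pos (by linarith)]; linarith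
    have e2' : g (t + δ/2) = m * (t + δ/2) + b := by
      apply h2; rw [show t + δ/2 - t = δ/2 by ring, abs_of_pos (by linarith)]; linarith
    have hA : m₀ * t + b₀ = m * t + b := e1.symm.trans e2
    have hB : m₀ * (t + δ/2) + b₀ = m * (t + δ/2) + b := e1'.symm.trans e2'
    have hmm : m₀ * (δ/2) = m * (δ/2) := by ring_nf at hA hB ⊢; linarith
    have hm : m = m₀ := (mul_right_cancel₀ (by positivity : (δ/2 : ℝ) ≠ 0) hmm).symm
    have hb : b = b₀ := by rw [hm] at hA; linarith
    exact hmb (by rw [hm, hb])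
  have hpc : IsPreconnected (Ioo p q) := isPreconnected_Ioo
  have hUne : (Ioo p q ∩ U).Nonempty := ⟨t₀, ht₀mem, ε₀, hε₀, h₀⟩
  have hVempty : ∀ t ∈ Ioo p q, t ∉ V := by
    intro t ht htV
    have hVne : (Ioo p q ∩ V).Nonempty := ⟨t, ht, htV⟩
    obtain ⟨s, hsI, hsU, hsV⟩ := hpc U V hUopen hVopen hsub hUne hVne
    exact hdisjN s hsI hsU hsV
  intro t ht
  have htU : t ∈ U := by
    rcases hsub ht with h | h
    · exact h
    · exact absurd h (hVempty t ht)
  obtain ⟨δ, hδ, hback⟩ := htU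
  exact hback t (by simpa using hδ)

variable {a c : ℝ}

lemma fix_outside {g : Equiv.Perm ℝ} (hg : g ∈ PLo (Icc a c)) {t : ℝ}
    (ht : t ∉ Icc a c) : g t = t := by
  by_contra h
  exact ht (hg.2.2 h)

lemma fix_left {g : Equiv.Perm ℝ} (hg : g ∈ PLo (Icc a c)) (hac : a ≤ c) : g a = a := by
  rcases lt_trichotomy (g a) a with h | h | h
  · have h1 : g (g a) = g a := fix_outside hg (by simp only [mem_Icc]; push_neg; intro h'; linarith)
    have h2 : g (g a) < g a := hg.1 h
    rw [h1] at h2; exact absurd h2 (lt_irrefl _)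
  · exact h
  · exfalso
    rcases lt_trichotomy (g.symm a) a with h' | h' | h'
    · have h1 : g (g.symm a) = g.symm a :=
        fix_outside hg (by simp only [mem_Icc]; push_neg; intro h''; linarith)
      rw [Equiv.apply_symm_apply] at h1
      rw [← h1] at h'; exact absurd h' (lt_irrefl _)
    · have h1 := congrArg g h'
      rw [Equiv.apply_symm_apply] at h1
      linarith
    · have := hg.1 h'
      rw [Equiv.apply_symm_apply] at this
      linarith
lemma fix_right {g : Equiv.Perm ℝ} (hg : g ∈ PLo (Icc a c)) (hac : a ≤ c) : g c = c := by
  rcases lt_trichotomy (g c) c with h | h | h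
  · exfalso
    rcases lt_trichotomy (g.symm c) c with h' | h' | h'
    · have := hg.1 h'
      rw [Equiv.apply_symm_apply] at this
      linarith
    · have h1 := congrArg g h'
      rw [Equiv.apply_symm_apply] at h1
      linarith
    · have h1 : g (g.symm c) = g.symm c :=
        fix_outside hg (by simp only [mem_Icc]; push_neg; intro h''; linarith)
      rw [Equiv.apply_symm_apply] at h1
      rw [← h1] at h'; exact absurd h' (lt_irrefl _)
  · exact h
  · have h1 : g (g c) = g c := fix_outside hg (by simp only [mem_Icc]; push_neg; intro h'; linarith)
    have h2 : g c < g (g c) := hg.1 h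
    rw [h1] at h2; exact absurd h2 (lt_irrefl _)

/-- there is an interval to the right of `a` free of breakpoints -/
lemma breakfree_right (B : Finset ℝ) (hac : a < c) :
    ∃ q : ℝ, a < q ∧ q ≤ c ∧ ∀ t : ℝ, a < t → t < q → t ∉ B := by
  classical
  by_cases hne : (B.filter (fun b => a < b)).Nonempty
  · refine ⟨min c ((B.filter (fun b => a < b)).min' hne), ?_, min_le_left _ _, ?_⟩
    · apply lt_min hac
      have hmem := (B.filter (fun b => a < b)).min'_mem hne
      rw [Finset.mem_filter] at hmem
      exact hmem.2
    · intro t ht1 ht2 htB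
      have htB' : t ∈ B.filter (fun b => a < b) := by
        rw [Finset.mem_filter]; exact ⟨htB, ht1⟩
      have hle := (B.filter (fun b => a < b)).min'_le t htB'
      have h2 : t < (B.filter (fun b => a < b)).min' hne :=
        lt_of_lt_of_le ht2 (min_le_right _ _)
      linarith
  · refine ⟨c, hac, le_rfl, ?_⟩
    intro t ht1 _ htB
    exact hne ⟨t, by rw [Finset.mem_filter]; exact ⟨htB, ht1⟩⟩

lemma breakfree_left (B : Finset ℝ) (hac : a < c) :
    ∃ q : ℝ, a ≤ q ∧ q < c ∧ ∀ t : ℝ, q < t → t < c → t ∉ B := by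
  classical
  by_cases hne : (B.filter (fun b => b < c)).Nonempty
  · refine ⟨max a ((B.filter (fun b => b < c)).max' hne), le_max_left _ _, ?_, ?_⟩
    · apply max_lt hac
      have hmem := (B.filter (fun b => b < c)).max'_mem hne
      rw [Finset.mem_filter] at hmem
      exact hmem.2
    · intro t ht1 ht2 htB
      have htB' : t ∈ B.filter (fun b => b < c) := by
        rw [Finset.mem_filter]; exact ⟨htB, ht2⟩
      have hle := (B.filter (fun b => b < c)).le_max' t htB'
      have h2 : (B.filter (fun b => b < c)).max' hne < t :=
        lt_of_le_of_lt (le_max_right _ _) ht1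
      linarith
  · refine ⟨a, le_rfl, hac, ?_⟩
    intro t _ ht2 htB
    exact hne ⟨t, by rw [Finset.mem_filter]; exact ⟨htB, ht2⟩⟩

end PL

section PL2
variable {a c : ℝ}

lemma triv_right {g : Equiv.Perm ℝ} (hg : g ∈ PLo (Icc a c)) (hac : a < c)
    (hd : rightSlope (⇑g) a = 1) :
    ∃ α : ℝ, a < α ∧ α < c ∧ ∀ t : ℝ, t ≤ α → g t = t := by
  obtain ⟨B, hB⟩ := hg.2.1
  obtain ⟨q, haq, hqc, hq⟩ := breakfree_right (a := a) (c := c) B hac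
  have hloc : ∀ t ∈ Ioo a q, ∃ m b ε : ℝ, 0 < ε ∧ ∀ u : ℝ, |u - t| < ε → g u = m * u + b :=
    fun t ht => hB t (hq t ht.1 ht.2)
  obtain ⟨m, b, hmb⟩ := glue_affine haq hloc
  -- m is positive
  have hq3 : a + (q - a) / 3 ∈ Ioo a q := ⟨by linarith, by linarith⟩
  have hq23 : a + 2 * (q - a) / 3 ∈ Ioo a q := ⟨by linarith, by linarith⟩
  have hmono := hg.1 (show a + (q - a) / 3 < a + 2 * (q - a) / 3 by linarith)
  rw [hmb _ hq3, hmb _ hq23] at hmono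
  have hm : 0 < m := by nlinarith
  -- g a = a
  have hga : g a = a := fix_left hg hac.le
  -- m * a + b = a
  have hkey : m * a + b = a := by
    rcases lt_trichotomy (m * a + b) a with h | h | h
    · exfalso
      -- pick u ∈ (a, q) with m * u + b < a
      have hustar : a < (a - b) / m := by
        rw [lt_div_iff₀ hm]; linarith
      set u := min (a + (q - a) / 2) ((a + (a - b) / m) / 2) with hu
      have hu1 : a < u := by
        apply lt_min (by linarith) (by linarith)
      have hu2 : u < q := lt_of_le_of_lt (min_le_left _ _) (by linarith)
      have hu3 : u < (a - b) / m := lt_of_le_of_lt (min_le_right _ _) (by linarith)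
      have hgu : g u = m * u + b := hmb u ⟨hu1, hu2⟩
      have : g u < a := by
        rw [hgu]
        have := (lt_div_iff₀ hm).1 hu3
        linarith
      have hmono2 : g a < g u := hg.1 hu1
      rw [hga] at hmono2
      linarith
    · exact h
    · exfalso
      -- the value y := (a + (m*a+b))/2 has no preimage
      set y := (a + (m * a + b)) / 2 with hy
      have hy1 : a < y := by simp only [hy]; linarith
      have hy2 : y < m * a + b := by simp only [hy]; linarith
      obtain ⟨s, hs⟩ := g.surjective y
      rcases lt_trichotomy s a with h' | h' | h'
      · have : g s = s := fix_outside hg (by simp only [mem_Icc]; push_neg; intro h''; linarith)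
        rw [this] at hs; linarith
      · rw [h'] at hs; rw [hga] at hs; linarith
      · -- s > a
        rcases lt_or_ge s q with h'' | h''
        · have : g s = m * s + b := hmb s ⟨h', h''⟩
          rw [this] at hs
          nlinarith
        · -- s ≥ q
          have hmid : a + (q - a) / 2 ∈ Ioo a q := ⟨by linarith, by linarith⟩
          have hmono2 : g (a + (q - a) / 2) < g s := hg.1 (by linarith)
          rw [hmb _ hmid] at hmono2
          rw [hs] at hmono2
          nlinarith
  -- derivative computation: m = 1
  have hderiv : HasDerivWithinAt (⇑g) m (Ici a) a := by
    have haff : HasDerivAt (fun u : ℝ => m * u + b) m a := by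
      simpa using ((hasDerivAt_id a).const_mul m).add_const b
    have hev : ⇑g =ᶠ[nhdsWithin a (Ici a)] (fun u : ℝ => m * u + b) := by
      have hmem : Ico a q ∈ nhdsWithin a (Ici a) :=
        Ico_mem_nhdsGE_of_mem ⟨le_rfl, haq⟩
      filter_upwards [hmem] with t ht
      rcases eq_or_lt_of_le ht.1 with h | h
      · rw [← h, hga]; linarith [hkey]
      · exact hmb t ⟨h, ht.2⟩
    exact (haff.hasDerivWithinAt).congr_of_eventuallyEq hev (by rw [hga]; linarith [hkey])
  have hm1 : m = 1 := by
    have := hderiv.derivWithin (uniqueDiffOn_Ici a a self_mem_Ici)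
    rw [← this]
    exact hd.symm ▸ rfl
  have hb0 : b = 0 := by rw [hm1] at hkey; linarith
  refine ⟨a + (q - a) / 2, by linarith, by linarith, ?_⟩
  intro t ht
  rcases lt_trichotomy t a with h | h | h
  · exact fix_outside hg (by simp only [mem_Icc]; push_neg; intro h''; linarith)
  · rw [h]; exact hga
  · have : g t = m * t + b := hmb t ⟨h, by linarith⟩
    rw [this, hm1, hb0]; ring

lemma triv_left {g : Equiv.Perm ℝ} (hg : g ∈ PLo (Icc a c)) (hac : a < c)
    (hd : leftSlope (⇑g) c = 1) :
    ∃ γ : ℝ, a < γ ∧ γ < c ∧ ∀ t : ℝ, γ ≤ t → g t = t := by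
  obtain ⟨B, hB⟩ := hg.2.1
  obtain ⟨q, haq, hqc, hq⟩ := breakfree_left (a := a) (c := c) B hac
  have hloc : ∀ t ∈ Ioo q c, ∃ m b ε : ℝ, 0 < ε ∧ ∀ u : ℝ, |u - t| < ε → g u = m * u + b :=
    fun t ht => hB t (hq t ht.1 ht.2)
  obtain ⟨m, b, hmb⟩ := glue_affine hqc hloc
  have hq3 : q + (c - q) / 3 ∈ Ioo q c := ⟨by linarith, by linarith⟩
  have hq23 : q + 2 * (c - q) / 3 ∈ Ioo q c := ⟨by linarith, by linarith⟩
  have hmono := hg.1 (show q + (c - q) / 3 < q + 2 * (c - q) / 3 by linarith)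
  rw [hmb _ hq3, hmb _ hq23] at hmono
  have hm : 0 < m := by nlinarith
  have hgc : g c = c := fix_right hg hac.le
  have hkey : m * c + b = c := by
    rcases lt_trichotomy (m * c + b) c with h | h | h
    · exfalso
      -- y := (c + (m*c+b))/2 has no preimage
      set y := (c + (m * c + b)) / 2 with hy
      have hy1 : y < c := by simp only [hy]; linarith
      have hy2 : m * c + b < y := by simp only [hy]; linarith
      obtain ⟨s, hs⟩ := g.surjective y
      rcases lt_trichotomy s c with h' | h' | h'
      · rcases lt_or_ge q s with h'' | h''
        · have : g s = m * s + b := hmb s ⟨h'', h'⟩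
          rw [this] at hs
          nlinarith
        · have hmid : q + (c - q) / 2 ∈ Ioo q c := ⟨by linarith, by linarith⟩
          have hmono2 : g s < g (q + (c - q) / 2) := hg.1 (by linarith)
          rw [hmb _ hmid] at hmono2
          rw [hs] at hmono2
          nlinarith
      · rw [h'] at hs; rw [hgc] at hs; linarith
      · have : g s = s := fix_outside hg (by simp only [mem_Icc]; push_neg; intro h''; linarith)
        rw [this] at hs; linarith
    · exact h
    · exfalso
      have hustar : (c - b) / m < c := by
        rw [div_lt_iff₀ hm]; linarith
      set u := max (c - (c - q) / 2) ((c + (c - b) / m) / 2) with hu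
      have hu1 : u < c := by
        apply max_lt (by linarith) (by linarith)
      have hu2 : q < u := lt_of_lt_of_le (by linarith) (le_max_left _ _)
      have hu3 : (c - b) / m < u := lt_of_lt_of_le (by linarith) (le_max_right _ _)
      have hgu : g u = m * u + b := hmb u ⟨hu2, hu1⟩
      have : c < g u := by
        rw [hgu]
        have := (div_lt_iff₀ hm).1 hu3
        linarith
      have hmono2 : g u < g c := hg.1 hu1
      rw [hgc] at hmono2
      linarith
  have hderiv : HasDerivWithinAt (⇑g) m (Iic c) c := by
    have haff : HasDerivAt (fun u : ℝ => m * u + b) m c := by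
      simpa using ((hasDerivAt_id c).const_mul m).add_const b
    have hev : ⇑g =ᶠ[nhdsWithin c (Iic c)] (fun u : ℝ => m * u + b) := by
      have hmem : Ioc q c ∈ nhdsWithin c (Iic c) :=
        Ioc_mem_nhdsLE_of_mem ⟨hqc, le_rfl⟩
      filter_upwards [hmem] with t ht
      rcases eq_or_lt_of_le ht.2 with h | h
      · rw [h, hgc]; linarith [hkey]
      · exact hmb t ⟨ht.1, h⟩
    exact (haff.hasDerivWithinAt).congr_of_eventuallyEq hev (by rw [hgc]; linarith [hkey])
  have hm1 : m = 1 := by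
    have := hderiv.derivWithin (uniqueDiffOn_Iic c c self_mem_Iic)
    rw [← this]
    exact hd.symm ▸ rfl
  have hb0 : b = 0 := by rw [hm1] at hkey; linarith
  refine ⟨c - (c - q) / 2, by linarith, by linarith, ?_⟩
  intro t ht
  rcases lt_trichotomy t c with h | h | h
  · have : g t = m * t + b := hmb t ⟨by linarith, h⟩
    rw [this, hm1, hb0]; ring
  · rw [h]; exact hgc
  · exact fix_outside hg (by simp only [mem_Icc]; push_neg; intro h''; linarith)

end PL2

section Dyn
variable {a c : ℝ} {G : Subgroup (Equiv.Perm ℝ)}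

lemma orbit_inf (hG : (G : Set (Equiv.Perm ℝ)) ⊆ PLo (Icc a c)) (hac : a < c)
    (hirr : ∀ t : ℝ, a < t → t < c → ∃ g ∈ G, g t ≠ t)
    {s y : ℝ} (hs : s ∈ Ioo a c) (hy : y ∈ Ioo a c) :
    ∃ h : G, ((h : Equiv.Perm ℝ)) s < y := by
  classical
  set E : Set ℝ := Set.range (fun h : G => ((h : Equiv.Perm ℝ)) s) with hE
  have hsE : s ∈ E := ⟨1, by simp⟩
  have hEsub : E ⊆ Ioo a c := by
    rintro e ⟨h, rfl⟩
    have hmem := hG h.2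
    have h1 : ((h : Equiv.Perm ℝ)) a = a := fix_left hmem hac.le
    have h2 : ((h : Equiv.Perm ℝ)) c = c := fix_right hmem hac.le
    constructor
    · have := hmem.1 hs.1; rwa [h1] at this
    · have := hmem.1 hs.2; rwa [h2] at this
  have hne : E.Nonempty := ⟨s, hsE⟩
  have hbdd : BddBelow E := ⟨a, fun e he => (hEsub he).1.le⟩
  set ι := sInf E with hι
  have hιa : a ≤ ι := le_csInf hne (fun e he => (hEsub he).1.le)
  have hιs : ι ≤ s := csInf_le hbdd hsE
  rcases eq_or_lt_of_le hιa with heq | hlt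
  · obtain ⟨e, heE, helt⟩ := exists_lt_of_csInf_lt hne (by rw [← hι, ← heq]; exact hy.1)
    obtain ⟨h, rfl⟩ := heE
    exact ⟨h, helt⟩
  · exfalso
    have hstep : ∀ h : G, ι ≤ ((h : Equiv.Perm ℝ)) ι := by
      intro h
      by_contra hcon
      push_neg at hcon
      have hmono := (hG h.2).1
      have hinv : ι < ((h : Equiv.Perm ℝ))⁻¹ ι := by
        by_contra h2
        push_neg at h2
        have h3 := hmono.monotone h2
        rw [Equiv.Perm.coe_inv, Equiv.apply_symm_apply] at h3
        linarith
      obtain ⟨e, heE, helt⟩ := exists_lt_of_csInf_lt hne hinv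
      obtain ⟨h', rfl⟩ := heE
      have h4 := hmono helt
      rw [Equiv.Perm.coe_inv, Equiv.apply_symm_apply] at h4
      have h5 : ((h : Equiv.Perm ℝ)) (((h' : Equiv.Perm ℝ)) s) ∈ E :=
        ⟨h * h', by simp [Subgroup.coe_mul]⟩
      have := csInf_le hbdd h5
      linarith
    have hfixall : ∀ h : G, ((h : Equiv.Perm ℝ)) ι = ι := by
      intro h
      have h1 := hstep h
      have h2 := hstep h⁻¹
      have h3 : ((h⁻¹ : G) : Equiv.Perm ℝ) = ((h : Equiv.Perm ℝ))⁻¹ := by simp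
      rw [h3] at h2
      have h4 := (hG h.2).1.monotone h2
      rw [Equiv.Perm.coe_inv, Equiv.apply_symm_apply] at h4
      linarith
    obtain ⟨g, hgG, hgne⟩ := hirr ι hlt (lt_of_le_of_lt hιs hs.2)
    exact hgne (hfixall ⟨g, hgG⟩)

lemma perm_commute_of_disjoint {f g : Equiv.Perm ℝ}
    (h : ∀ t : ℝ, f t ≠ t → g t = t) (h' : ∀ t : ℝ, g t ≠ t → f t = t) : f * g = g * f := by
  apply Equiv.ext
  intro t
  rw [Equiv.Perm.mul_apply, Equiv.Perm.mul_apply]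
  by_cases hf : f t = t
  · by_cases hgt : g t = t
    · rw [hgt, hf, hgt]
    · have hgfix : g (g t) ≠ g t := fun e => hgt (g.injective e)
      rw [h' (g t) hgfix, hf]
  · have hgt : g t = t := h t hf
    have hffix : f (f t) ≠ f t := fun e => hf (f.injective e)
    rw [hgt, h (f t) hffix]

lemma sep_commute {w b : G} {α γ' : ℝ} (hsep : γ' ≤ α)
    (hwfix : ∀ t : ℝ, t ≤ α → ((w : Equiv.Perm ℝ)) t = t)
    (hbfix : ∀ t : ℝ, γ' ≤ t → ((b : Equiv.Perm ℝ)) t = t) :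
    Commute w b := by
  have hperm : ((w : Equiv.Perm ℝ)) * b = ((b : Equiv.Perm ℝ)) * w := by
    apply perm_commute_of_disjoint
    · intro t ht
      apply hbfix
      by_contra h2
      push_neg at h2
      exact ht (hwfix t (by linarith))
    · intro t ht
      apply hwfix
      by_contra h2
      push_neg at h2
      exact ht (hbfix t (by linarith))
  have : w * b = b * w := Subtype.ext (by simpa [Subgroup.coe_mul] using hperm)
  exact this

lemma conj_fixes_le (hG : (G : Set (Equiv.Perm ℝ)) ⊆ PLo (Icc a c)) (hac : a < c)
    {h w : G} {α : ℝ} (hα : a < α) (hαc : α < c)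
    (hwfix : ∀ t : ℝ, t ≤ α → ((w : Equiv.Perm ℝ)) t = t) :
    a < ((h : Equiv.Perm ℝ)) α ∧ ((h : Equiv.Perm ℝ)) α < c ∧
      ∀ t : ℝ, t ≤ ((h : Equiv.Perm ℝ)) α → ((h * w * h⁻¹ : G) : Equiv.Perm ℝ) t = t := by
  have hmono := (hG h.2).1
  have ha := fix_left (hG h.2) hac.le
  have hc := fix_right (hG h.2) hac.le
  refine ⟨?_, ?_, ?_⟩
  · have := hmono hα; rwa [ha] at this
  · have := hmono hαc; rwa [hc] at this
  · intro t ht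
    have hcoe : ((h * w * h⁻¹ : G) : Equiv.Perm ℝ) t
        = ((h : Equiv.Perm ℝ)) (((w : Equiv.Perm ℝ)) (((h : Equiv.Perm ℝ))⁻¹ t)) := by
      simp [Subgroup.coe_mul, Equiv.Perm.mul_apply]
    rw [hcoe]
    have hle : ((h : Equiv.Perm ℝ))⁻¹ t ≤ α := by
      by_contra h2
      push_neg at h2
      have := hmono h2
      rw [Equiv.Perm.coe_inv, Equiv.apply_symm_apply] at this
      linarith
    rw [hwfix _ hle, Equiv.Perm.coe_inv, Equiv.apply_symm_apply]

lemma conj_fixes_ge (hG : (G : Set (Equiv.Perm ℝ)) ⊆ PLo (Icc a c)) (hac : a < c)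
    {h v : G} {γ : ℝ} (hγ : a < γ) (hγc : γ < c)
    (hvfix : ∀ t : ℝ, γ ≤ t → ((v : Equiv.Perm ℝ)) t = t) :
    a < ((h : Equiv.Perm ℝ)) γ ∧ ((h : Equiv.Perm ℝ)) γ < c ∧
      ∀ t : ℝ, ((h : Equiv.Perm ℝ)) γ ≤ t → ((h * v * h⁻¹ : G) : Equiv.Perm ℝ) t = t := by
  have hmono := (hG h.2).1
  have ha := fix_left (hG h.2) hac.le
  have hc := fix_right (hG h.2) hac.le
  refine ⟨?_, ?_, ?_⟩
  · have := hmono hγ; rwa [ha] at this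
  · have := hmono hγc; rwa [hc] at this
  · intro t ht
    have hcoe : ((h * v * h⁻¹ : G) : Equiv.Perm ℝ) t
        = ((h : Equiv.Perm ℝ)) (((v : Equiv.Perm ℝ)) (((h : Equiv.Perm ℝ))⁻¹ t)) := by
      simp [Subgroup.coe_mul, Equiv.Perm.mul_apply]
    rw [hcoe]
    have hle : γ ≤ ((h : Equiv.Perm ℝ))⁻¹ t := by
      by_contra h2
      push_neg at h2
      have := hmono h2
      rw [Equiv.Perm.coe_inv, Equiv.apply_symm_apply] at this
      linarith
    rw [hvfix _ hle, Equiv.Perm.coe_inv, Equiv.apply_symm_apply]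

end Dyn

end BNSAux

open BNSAux in
/-- **Addendum (Statement 13).** Let `G ≤ PL_o([a,c])` be irreducible. If the
non-zero character `χ` of `G` vanishes identically neither on `ker σ_ℓ` nor on
`ker σ_r`, then `[χ] ∈ Σ¹(G)`. -/
theorem memSigma1_of_not_vanishing_on_kernels
    (a c : ℝ) (hac : a < c)
    (G : Subgroup (Equiv.Perm ℝ)) (hG : (G : Set (Equiv.Perm ℝ)) ⊆ PLo (Icc a c))
    (hirr : ∀ t : ℝ, a < t → t < c → ∃ g ∈ G, g t ≠ t)
    (χ : G → ℝ) (hχ : IsChar χ) (hne : χ ≠ 0)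
    (hL : ∃ g : G, rightSlope (⇑(g : Equiv.Perm ℝ)) a = 1 ∧ χ g ≠ 0)
    (hR : ∃ g : G, leftSlope (⇑(g : Equiv.Perm ℝ)) c = 1 ∧ χ g ≠ 0) :
    MemSigma1 χ := by
  intro X hX
  have hχ' : IsCharAux χ := fun g h => hχ g h
  -- the element u, trivial near a, with positive character value
  obtain ⟨gL, hgL1, hgL2⟩ := hL
  obtain ⟨αL, hαL1, hαL2, hfixL⟩ := triv_right (hG gL.2) hac hgL1
  obtain ⟨u, hu0, hufix⟩ : ∃ u : G, 0 < χ u ∧ ∀ t : ℝ, t ≤ αL → ((u : Equiv.Perm ℝ)) t = t := by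
    rcases lt_or_gt_of_ne hgL2 with h | h
    · refine ⟨gL⁻¹, by rw [chi_inv hχ']; linarith, ?_⟩
      intro t ht
      have h1 : ((gL⁻¹ : G) : Equiv.Perm ℝ) = ((gL : Equiv.Perm ℝ))⁻¹ := by simp
      rw [h1, ← hfixL t ht, Equiv.Perm.coe_inv, Equiv.symm_apply_apply, hfixL t ht]
    · exact ⟨gL, h, hfixL⟩
  -- the element v, trivial near c, with positive character value
  obtain ⟨gR, hgR1, hgR2⟩ := hR
  obtain ⟨γR, hγR1, hγR2, hfixR⟩ := triv_left (hG gR.2) hac hgR1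
  obtain ⟨v, hv0, hvfix⟩ : ∃ v : G, 0 < χ v ∧ ∀ t : ℝ, γR ≤ t → ((v : Equiv.Perm ℝ)) t = t := by
    rcases lt_or_gt_of_ne hgR2 with h | h
    · refine ⟨gR⁻¹, by rw [chi_inv hχ']; linarith, ?_⟩
      intro t ht
      have h1 : ((gR⁻¹ : G) : Equiv.Perm ℝ) = ((gR : Equiv.Perm ℝ))⁻¹ := by simp
      rw [h1, ← hfixR t ht, Equiv.Perm.coe_inv, Equiv.symm_apply_apply, hfixR t ht]
    · exact ⟨gR, h, hfixR⟩
  -- a letter with positive character value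
  obtain ⟨g₀, hg₀⟩ : ∃ g₀ : G, χ g₀ ≠ 0 := by
    by_contra hall
    push_neg at hall
    exact hne (funext fun g => hall g)
  obtain ⟨t₀, hlet, ht₀⟩ : ∃ t₀ : G, Lett X t₀ ∧ 0 < χ t₀ := by
    obtain ⟨L₀, hl₀, hp₀⟩ := exists_word hX g₀
    have hzero : ∀ M : List G, (∀ ℓ ∈ M, χ ℓ = 0) → χ M.prod = 0 := by
      intro M
      induction M with
      | nil => intro _; simpa using chi_one hχ'
      | cons x t ih =>
          intro hall
          rw [List.prod_cons, hχ', hall x (List.mem_cons_self),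
            ih (fun ℓ hℓ => hall ℓ (List.mem_cons_of_mem _ hℓ))]
          ring
    have : ∃ ℓ ∈ L₀, χ ℓ ≠ 0 := by
      by_contra hall
      push_neg at hall
      exact hg₀ (by rw [← hp₀]; exact hzero L₀ hall)
    obtain ⟨ℓ₀, hℓmem, hℓne⟩ := this
    rcases lt_or_gt_of_ne hℓne with h | h
    · exact ⟨ℓ₀⁻¹, (hl₀ ℓ₀ hℓmem).inv, by rw [chi_inv hχ']; linarith⟩
    · exact ⟨ℓ₀, hl₀ ℓ₀ hℓmem, h⟩
  -- the seed: a conjugate of u by a power of t₀, all of whose powers are staircases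
  obtain ⟨Lu, hLul, hLup⟩ := exists_word hX u
  obtain ⟨Cu, hCu0, hCud⟩ := word_dip χ hχ' Lu
  obtain ⟨K, -, hK⟩ := exists_pow_mul_ge ht₀ 1 one_pos Cu
  have hKχ : Cu ≤ (K : ℝ) * χ t₀ := by
    have : ((1 * K : ℕ) : ℝ) = (K : ℝ) := by push_cast; ring
    rwa [this] at hK
  set w₀ : G := t₀ ^ K * u * (t₀ ^ K)⁻¹ with hw₀
  have hconjpow : ∀ m : ℕ, w₀ ^ m = t₀ ^ K * u ^ m * (t₀ ^ K)⁻¹ := by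
    intro m
    rw [hw₀]
    have := map_pow (MulAut.conj (t₀ ^ K)) u m
    simpa [MulAut.conj_apply] using this.symm
  have hseed : ∀ m : ℕ, Stair X χ (w₀ ^ m) := by
    intro m
    have s1 : Stair X χ (t₀ ^ K) := stair_pow_letter hχ' hlet ht₀.le K
    obtain ⟨Lm, hlm, hpm, hdm⟩ := pow_word hχ' hLul hCu0 hCud (by rw [hLup]; exact hu0.le) m
    have s2 : Stair X χ (t₀ ^ K * u ^ m) := by
      have hcat := stair_concat hχ' s1 hlm ?_
      · rwa [hpm, hLup] at hcat
      · intro n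
        have := hdm n
        rw [chi_pow hχ']
        linarith
    have s3 : Stair X χ (t₀ ^ K * u ^ m * (t₀⁻¹) ^ K) := by
      have hval : ∀ n : ℕ, 0 ≤ χ (t₀ ^ K * u ^ m)
          + χ (((List.replicate K t₀⁻¹).take n).prod) := by
        intro n
        rw [List.take_replicate, List.prod_replicate, chi_pow hχ', chi_inv hχ',
          hχ', chi_pow hχ', chi_pow hχ']
        have h1 : ((min n K : ℕ) : ℝ) ≤ (K : ℝ) := by
          exact_mod_cast Nat.cast_le.2 (min_le_right n K)
        have h2 : 0 ≤ (m : ℝ) * χ u := by positivity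
        nlinarith [ht₀.le]
      have hcat := stair_concat hχ' s2
        (fun ℓ hℓ => by rw [List.eq_of_mem_replicate hℓ]; exact hlet.inv) hval
      rwa [List.prod_replicate] at hcat
    rw [hconjpow, ← inv_pow]
    exact s3
  have hw₀tame : Tame X χ w₀ := by
    refine ⟨1, one_pos, fun j hj => ?_⟩
    rw [one_mul]
    exact hseed j
  -- every element trivial near `a` with positive character value is tame
  have hT : ((t₀ ^ K : G) : Equiv.Perm ℝ) = ((t₀ : Equiv.Perm ℝ)) ^ K := by simp
  have hTmono := (hG (t₀ ^ K).2).1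
  have hα₀ := conj_fixes_le (a := a) (c := c) hG hac (h := t₀ ^ K) (w := u) hαL1 hαL2 hufix
  set α₀ : ℝ := ((t₀ ^ K : G) : Equiv.Perm ℝ) αL with hα₀def
  have hw₀fix : ∀ t : ℝ, t ≤ α₀ → ((w₀ : Equiv.Perm ℝ)) t = t := hα₀.2.2
  have hw₀χ : 0 < χ w₀ := by rw [hw₀, chi_conj hχ']; exact hu0
  have htameA : ∀ (w : G) (α : ℝ), a < α → α < c →
      (∀ t : ℝ, t ≤ α → ((w : Equiv.Perm ℝ)) t = t) → 0 < χ w → Tame X χ w := by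
    intro w α hα1 hα2 hwfix hw0
    set β := min α₀ α with hβ
    have hβ1 : a < β := lt_min hα₀.1 hα1
    have hβ2 : β < c := lt_of_le_of_lt (min_le_right _ _) hα2
    obtain ⟨h, hh⟩ := orbit_inf hG hac hirr (s := γR) (y := β) ⟨hγR1, hγR2⟩ ⟨hβ1, hβ2⟩
    have hb := conj_fixes_ge (a := a) (c := c) hG hac (h := h) (v := v) hγR1 hγR2 hvfix
    set b : G := h * v * h⁻¹ with hbdef
    have hb0 : 0 < χ b := by rw [hbdef, chi_conj hχ']; exact hv0
    have hcomm1 : Commute w₀ b :=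
      sep_commute (le_trans hh.le (min_le_left _ _)) hw₀fix hb.2.2
    have hcomm2 : Commute b w :=
      (sep_commute (le_trans hh.le (min_le_right _ _)) hwfix hb.2.2).symm
    have hbtame : Tame X χ b := tame_link hχ' hX hw₀tame hw₀χ hcomm1 hb0.le
    exact tame_link hχ' hX hbtame hb0 hcomm2 hw0.le
  -- every element with nonnegative character value is a staircase
  have hstair : ∀ g : G, 0 ≤ χ g → Stair X χ g := by
    intro g hg0
    have hutame : Tame X χ u := htameA u αL hαL1 hαL2 hufix hu0
    have hgu := conj_fixes_le (a := a) (c := c) hG hac (h := g) (w := u) hαL1 hαL2 hufix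
    have hu'χ : 0 < χ (g * u * g⁻¹) := by rw [chi_conj hχ']; exact hu0
    have hu'tame : Tame X χ (g * u * g⁻¹) :=
      htameA (g * u * g⁻¹) _ hgu.1 hgu.2.1 hgu.2.2 hu'χ
    exact tame_rot hχ' hX hutame hu0 hu'tame hg0
  -- conclude connectivity
  intro g h hg hh
  have h1 := rtg_of_stair (hstair g hg)
  have h2 := rtg_of_stair (hstair h hh)
  have hsymm : Symmetric (fun y z : G => 0 ≤ χ y ∧ 0 ≤ χ z ∧ ∃ x ∈ X, z = y * x ∨ y = z * x) := by
    rintro y z ⟨hy, hz, x, hxX, heq⟩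
    exact ⟨hz, hy, x, hxX, heq.symm⟩
  exact ((@Relation.ReflTransGen.stdSymm _ _ ⟨fun _ _ hyz => hsymm hyz⟩).symm _ _ h1).trans h2
end

section
/- Let {G_i : i ∈ I} be a family of groups and let G = ⨁_{i∈I} G_i be their restricted direct product (the subgroup of the full product consisting of families with all but finitely many coordinates equal to the identity). For each i ∈ I let π_i : G → G_i denote the canonical projection, and let π_i^* : S(G_i) → S(G) be the induced embedding [χ̄] ↦ [χ̄ ∘ π_i]. Then Σ¹(G)^c = ⋃_{i∈I} π_i^*(Σ¹(G_i)^c); that is, a non-zero character χ : G → ℝ represents a point of the complement of Σ¹(G) if and only if there exist an index i ∈ I and a non-zero character χ̄ : G_i → ℝ with [χ̄] ∉ Σ¹(G_i) and [χ] = [χ̄ ∘ π_i]. -/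
open Set

/-- The restricted direct product of a family of groups: the subgroup of the full
product consisting of families with all but finitely many coordinates trivial. -/
def restrictedProd {ι : Type*} (Gi : ι → Type*) [∀ i, Group (Gi i)] :
    Subgroup (∀ i, Gi i) where
  carrier := {g : ∀ i, Gi i | {i : ι | g i ≠ 1}.Finite}
  one_mem' := by
    have : {i : ι | (1 : ∀ i, Gi i) i ≠ 1} = ∅ := by
      ext i; simp
    simp only [Set.mem_setOf_eq, this]
    exact Set.finite_empty
  mul_mem' := by
    intro f g hf hg
    apply (Set.Finite.union hf hg).subset
    intro i hi
    simp only [Set.mem_setOf_eq, Pi.mul_apply] at hi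
    by_contra hmem
    simp only [Set.mem_union, Set.mem_setOf_eq, not_or, not_not] at hmem
    exact hi (by rw [hmem.1, hmem.2, one_mul])
  inv_mem' := by
    intro f hf
    apply Set.Finite.subset hf
    intro i hi
    simp only [Set.mem_setOf_eq, Pi.inv_apply, ne_eq] at hi ⊢
    intro h
    exact hi (by rw [h, inv_one])



namespace Sigma1Aux

variable {Γ : Type*} [Group Γ]

theorem chi_one {χ : Γ → ℝ} (h : IsChar χ) : χ 1 = 0 := by
  have h1 := h 1 1; rw [mul_one] at h1; linarith

theorem chi_inv {χ : Γ → ℝ} (h : IsChar χ) (g : Γ) : χ g⁻¹ = - χ g := by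
  have h1 := h g⁻¹ g; rw [inv_mul_cancel, chi_one h] at h1; linarith

/-- letters -/
def Lett (Y : Set Γ) (x : Γ) : Prop := x ∈ Y ∨ x⁻¹ ∈ Y

theorem Lett.inv {Y : Set Γ} {x : Γ} (h : Lett Y x) : Lett Y x⁻¹ := by
  rcases h with h | h
  · exact Or.inr (by simpa using h)
  · exact Or.inl h

def Rel (Y : Set Γ) (χ : Γ → ℝ) (u v : Γ) : Prop :=
  0 ≤ χ u ∧ 0 ≤ χ v ∧ ∃ x ∈ Y, v = u * x ∨ u = v * x

def Conn (Y : Set Γ) (χ : Γ → ℝ) (u v : Γ) : Prop := Relation.ReflTransGen (Rel Y χ) u v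

theorem rel_symm {Y : Set Γ} {χ : Γ → ℝ} : Symmetric (Rel Y χ) := by
  rintro u v ⟨hu, hv, x, hx, h | h⟩
  · exact ⟨hv, hu, x, hx, Or.inr h⟩
  · exact ⟨hv, hu, x, hx, Or.inl h⟩

theorem Conn.symm {Y : Set Γ} {χ : Γ → ℝ} {u v : Γ} (h : Conn Y χ u v) : Conn Y χ v u :=
  by haveI : Std.Symm (Rel Y χ) := ⟨fun a b h => rel_symm h⟩; exact Std.Symm.symm (r := Relation.ReflTransGen (Rel Y χ)) _ _ h

theorem Conn.trans {Y : Set Γ} {χ : Γ → ℝ} {u v w : Γ} (h : Conn Y χ u v)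
    (h' : Conn Y χ v w) : Conn Y χ u w := Relation.ReflTransGen.trans h h'

theorem Conn.nonneg {Y : Set Γ} {χ : Γ → ℝ} {u v : Γ} (h : Conn Y χ u v)
    (hu : 0 ≤ χ u) : 0 ≤ χ v := by
  induction h with
  | refl => exact hu
  | tail _ hrel _ => exact hrel.2.1

theorem Conn.translate {Y : Set Γ} {χ : Γ → ℝ} (hχ : IsChar χ) {u v : Γ} (t : Γ)
    (ht : 0 ≤ χ t) (h : Conn Y χ u v) : Conn Y χ (t * u) (t * v) := by
  induction h with
  | refl => exact Relation.ReflTransGen.refl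
  | tail _ hrel ih =>
      rename_i b c _
      refine Relation.ReflTransGen.tail ih ?_
      obtain ⟨hb, hc, x, hx, hbc | hbc⟩ := hrel
      · exact ⟨by rw [hχ]; linarith, by rw [hχ]; linarith, x, hx,
          Or.inl (by rw [hbc, mul_assoc])⟩
      · exact ⟨by rw [hχ]; linarith, by rw [hχ]; linarith, x, hx,
          Or.inr (by rw [hbc, mul_assoc])⟩

theorem rel_letter {Y : Set Γ} {χ : Γ → ℝ} {u x : Γ} (hx : Lett Y x)
    (hu : 0 ≤ χ u) (hux : 0 ≤ χ (u * x)) : Rel Y χ u (u * x) := by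
  rcases hx with hx | hx
  · exact ⟨hu, hux, x, hx, Or.inl rfl⟩
  · exact ⟨hu, hux, x⁻¹, hx, Or.inr (by group)⟩

theorem conn_of_word {Y : Set Γ} {χ : Γ → ℝ} :
    ∀ (L : List Γ) (u : Γ), (∀ x ∈ L, Lett Y x) →
      (∀ n : ℕ, 0 ≤ χ (u * (L.take n).prod)) → Conn Y χ u (u * L.prod) := by
  intro L
  induction L with
  | nil =>
      intro u _ h
      simp only [List.prod_nil, mul_one]
      exact Relation.ReflTransGen.refl
  | cons x L ih =>
      intro u hL h
      have hu : 0 ≤ χ u := by simpa using h 0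
      have hux : 0 ≤ χ (u * x) := by
        have := h 1
        simpa using this
      have step : Rel Y χ u (u * x) := rel_letter (hL x (by simp)) hu hux
      have tail : Conn Y χ (u * x) ((u * x) * L.prod) := by
        refine ih (u * x) (fun z hz => hL z (by simp [hz])) ?_
        intro n
        have := h (n + 1)
        simpa [List.take_succ_cons, mul_assoc] using this
      have : Conn Y χ u ((u * x) * L.prod) := Relation.ReflTransGen.head step tail
      simpa [mul_assoc] using this

theorem chi_list_sum {χ : Γ → ℝ} (hχ : IsChar χ) :
    ∀ L : List Γ, χ L.prod = (L.map χ).sum := by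
  intro L
  induction L with
  | nil => simpa using chi_one hχ
  | cons x L ih => simp [hχ x L.prod, ih]

theorem exists_word {Y : Set Γ} (hY : Subgroup.closure Y = ⊤) (g : Γ) :
    ∃ L : List Γ, (∀ x ∈ L, Lett Y x) ∧ L.prod = g := by
  have hg : g ∈ Subgroup.closure Y := by rw [hY]; trivial
  induction hg using Subgroup.closure_induction with
  | mem x hx => exact ⟨[x], by simpa [Lett] using Or.inl hx, by simp⟩
  | one => exact ⟨[], by simp, by simp⟩
  | mul a b _ _ iha ihb =>
      obtain ⟨L1, hL1, hp1⟩ := iha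
      obtain ⟨L2, hL2, hp2⟩ := ihb
      exact ⟨L1 ++ L2, by
        intro x hx
        rcases List.mem_append.mp hx with h | h
        exacts [hL1 x h, hL2 x h], by simp [hp1, hp2]⟩
  | inv a _ iha =>
      obtain ⟨L, hL, hp⟩ := iha
      refine ⟨(L.map (fun x => x⁻¹)).reverse, ?_, by rw [← List.prod_inv_reverse, hp]⟩
      intro x hx
      rw [List.mem_reverse, List.mem_map] at hx
      obtain ⟨l, hl, rfl⟩ := hx
      exact (hL l hl).inv

theorem exists_pump {Y : Set Γ} {χ : Γ → ℝ} (hχ : IsChar χ)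
    (hY : Subgroup.closure Y = ⊤) (hne : χ ≠ 0) : ∃ y : Γ, Lett Y y ∧ 0 < χ y := by
  obtain ⟨g, hg⟩ := Function.ne_iff.mp hne
  obtain ⟨L, hL, hp⟩ := exists_word hY g
  have : ∃ x ∈ L, χ x ≠ 0 := by
    by_contra hcon
    push_neg at hcon
    apply hg
    show χ g = 0
    rw [← hp, chi_list_sum hχ]
    apply List.sum_eq_zero
    intro a ha
    rw [List.mem_map] at ha
    obtain ⟨l, hl, rfl⟩ := ha
    exact hcon l hl
  obtain ⟨x, hxL, hx0⟩ := this
  rcases lt_or_gt_of_ne hx0 with h | h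
  · exact ⟨x⁻¹, (hL x hxL).inv, by rw [chi_inv hχ]; linarith⟩
  · exact ⟨x, hL x hxL, h⟩


theorem chi_pow {χ : Γ → ℝ} (hχ : IsChar χ) (m : Γ) :
    ∀ n : ℕ, χ (m ^ n) = n * χ m := by
  intro n
  induction n with
  | zero => simpa using chi_one hχ
  | succ n ih => rw [pow_succ, hχ, ih]; push_cast; ring

theorem defect {Y : Set Γ} {χ : Γ → ℝ} (hχ : IsChar χ)
    (hY : Subgroup.closure Y = ⊤) (w : Γ) :
    ∃ N : ℝ, ∀ u : Γ, 0 ≤ χ u → N ≤ χ u → Conn Y χ u (u * w) := by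
  obtain ⟨L, hL, hp⟩ := exists_word hY w
  refine ⟨Finset.sup' (Finset.range (L.length + 1)) (by simp) 
    (fun n => -χ ((L.take n).prod)), ?_⟩
  intro u hu hN
  have key : ∀ n : ℕ, 0 ≤ χ (u * (L.take n).prod) := by
    intro n
    rcases le_or_gt n L.length with h | h
    · have hmem : n ∈ Finset.range (L.length + 1) := by
        simp; omega
      have := Finset.le_sup' (fun n => -χ ((L.take n).prod)) hmem
      rw [hχ]; linarith
    · rw [List.take_of_length_le (by omega)]
      have hmem : L.length ∈ Finset.range (L.length + 1) := by simp
      have := Finset.le_sup' (fun n => -χ ((L.take n).prod)) hmem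
      rw [List.take_of_length_le (le_refl _)] at this
      rw [hχ]; linarith
  have := conn_of_word L u hL key
  rwa [hp] at this

theorem conn_one_mul {Y : Set Γ} {χ : Γ → ℝ} (hχ : IsChar χ) {m : Γ} {u : Γ}
    (hm : Conn Y χ 1 m) (hu : 0 ≤ χ u) : Conn Y χ u (u * m) := by
  have := Conn.translate hχ u hu hm
  simpa using this

theorem conn_one_pow {Y : Set Γ} {χ : Γ → ℝ} (hχ : IsChar χ) {m : Γ}
    (hm : Conn Y χ 1 m) (h0 : 0 ≤ χ m) : ∀ n : ℕ, Conn Y χ 1 (m ^ n) := by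
  intro n
  induction n with
  | zero => rw [pow_zero]; exact Relation.ReflTransGen.refl
  | succ n ih =>
      have h1 : 0 ≤ χ (m ^ n) := by
        rw [chi_pow hχ]; positivity
      have := (ih.trans (conn_one_mul hχ hm h1))
      rwa [← pow_succ] at this

theorem ladder {Y : Set Γ} {χ : Γ → ℝ} (hχ : IsChar χ)
    (hY : Subgroup.closure Y = ⊤) {m t u : Γ}
    (hm : Conn Y χ 1 m) (hmp : 0 < χ m) (hcomm : m * t = t * m)
    (hu : 0 ≤ χ u) (hut : 0 ≤ χ (u * t)) : Conn Y χ u (u * t) := by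
  obtain ⟨N, hNdef⟩ := defect hχ hY t
  obtain ⟨n, hn⟩ := exists_nat_ge ((N - χ u) / χ m)
  have hn' : N ≤ χ u + n * χ m := by
    rw [div_le_iff₀ hmp] at hn; linarith
  have hchin : χ (u * m ^ n) = χ u + n * χ m := by rw [hχ, chi_pow hχ]
  have c1 : Conn Y χ u (u * m ^ n) :=
    conn_one_mul hχ (conn_one_pow hχ hm hmp.le n) hu
  have c2 : Conn Y χ (u * m ^ n) (u * m ^ n * t) := by
    apply hNdef <;> rw [hchin]
    · positivity
    · exact hn'
  have c3 : u * m ^ n * t = u * t * m ^ n := by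
    rw [mul_assoc, mul_assoc, ((show Commute m t from hcomm).pow_left n).eq]
  have c4 : ∀ s : ℕ, Conn Y χ (u * t) (u * t * m ^ s) := by
    intro s
    induction s with
    | zero => rw [pow_zero, mul_one]; exact Relation.ReflTransGen.refl
    | succ s ih =>
        have h1 : 0 ≤ χ (u * t * m ^ s) := by
          rw [hχ, chi_pow hχ]; positivity
        have := ih.trans (conn_one_mul hχ hm h1)
        rw [pow_succ, ← mul_assoc]
        exact this
  exact (c1.trans c2).trans (by rw [c3]; exact (c4 n).symm)

theorem cycle {Y : Set Γ} {χ : Γ → ℝ} (hχ : IsChar χ)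
    (hY : Subgroup.closure Y = ⊤) {z : Γ} (hz : 0 < χ z) :
    ∃ h : Γ, Conn Y χ 1 (h⁻¹ * z * h) := by
  obtain ⟨L, hL, hp⟩ := exists_word hY z
  set f : ℕ → ℝ := fun n => χ ((L.take n).prod) with hf
  obtain ⟨k, hkmem, hkmin⟩ := Finset.exists_min_image (Finset.range (L.length + 1)) f
    ⟨0, by simp⟩
  have hk_le : k ≤ L.length := by
    simp only [Finset.mem_range] at hkmem; omega
  have fmin : ∀ r : ℕ, f k ≤ f r := by
    intro r
    rcases le_or_gt r L.length with h | h
    · exact hkmin r (by simp; omega)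
    · have : f r = f L.length := by
        simp only [hf]
        rw [List.take_of_length_le (le_of_lt h), List.take_of_length_le (le_refl _)]
      rw [this]
      exact hkmin L.length (by simp)
  set A := L.take k with hA
  set B := L.drop k with hB
  have hAB : A ++ B = L := List.take_append_drop k L
  have hBprod : B.prod = A.prod⁻¹ * z := by
    have : A.prod * B.prod = z := by rw [← List.prod_append, hAB, hp]
    rw [← this]; group
  have hval : (B ++ A).prod = A.prod⁻¹ * z * A.prod := by
    rw [List.prod_append, hBprod]
  have hletters : ∀ x ∈ B ++ A, Lett Y x := by
    intro x hx
    rcases List.mem_append.mp hx with h | h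
    · exact hL x (List.drop_subset k L h)
    · exact hL x (List.take_subset k L h)
  have hkey : ∀ n : ℕ, 0 ≤ χ (((B ++ A).take n).prod) := by
    intro n
    rcases le_or_gt n B.length with h | h
    · rw [List.take_append_of_le_length h]
      have htake : A ++ B.take n = L.take (k + n) := by
        rw [List.take_add]
      have : χ ((B.take n).prod) = f (k + n) - f k := by
        have h2 : A.prod * (B.take n).prod = (L.take (k+n)).prod := by
          rw [← List.prod_append, htake]
        have h3 := hχ A.prod (B.take n).prod
        rw [h2] at h3
        simp only [hf]
        linarith
      rw [this]
      have := fmin (k + n)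
      linarith
    · have hn : n = B.length + (n - B.length) := by omega
      rw [hn, List.take_append]
      have hAt : A.take (n - B.length) = L.take (min (n - B.length) k) := by
        rw [hA, List.take_take]
      have h3 := hχ B.prod (A.take (n - B.length)).prod
      rw [List.take_of_length_le (l := B) (by omega), Nat.add_sub_cancel_left, List.prod_append, h3, hBprod, hχ, chi_inv hχ, hAt]
      have h4 := fmin (min (n - B.length) k)
      have h5 : f k ≤ 0 := by
        have := hkmin 0 (by simp)
        simpa [hf, chi_one hχ] using this
      simp only [hf] at h4 ⊢
      linarith
  refine ⟨A.prod, ?_⟩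
  rw [← hval]
  have := conn_of_word (B ++ A) 1 hletters (by intro n; rw [one_mul]; exact hkey n)
  simpa using this

end Sigma1Aux

namespace Sigma1Aux

section Product

variable {ι : Type*} [DecidableEq ι] {Gi : ι → Type*} [∀ i, Group (Gi i)]
set_option linter.unusedSectionVars false

theorem mem_rp {g : ∀ i, Gi i} : g ∈ restrictedProd Gi ↔ {i | g i ≠ 1}.Finite := Iff.rfl

theorem iota_mem (i : ι) (a : Gi i) : Pi.mulSingle i a ∈ restrictedProd Gi := by
  rw [mem_rp]
  apply Set.Finite.subset (Set.finite_singleton i)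
  intro j hj
  simp only [Set.mem_setOf_eq] at hj
  by_contra h
  exact hj (Pi.mulSingle_eq_of_ne h a)

/-- The canonical injection of a factor into the restricted product. -/
def iota (i : ι) : Gi i →* ↥(restrictedProd Gi) where
  toFun a := ⟨Pi.mulSingle i a, iota_mem i a⟩
  map_one' := by
    apply Subtype.ext
    simp
  map_mul' a b := by
    apply Subtype.ext
    funext j
    by_cases hj : j = i
    · subst hj; simp
    · simp [Pi.mulSingle_eq_of_ne hj]

theorem iota_coord_same (i : ι) (a : Gi i) :
    ((iota i a : ↥(restrictedProd Gi)) : ∀ j, Gi j) i = a := Pi.mulSingle_eq_same i a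

theorem iota_coord_ne {i j : ι} (hj : j ≠ i) (a : Gi i) :
    ((iota i a : ↥(restrictedProd Gi)) : ∀ j, Gi j) j = 1 := Pi.mulSingle_eq_of_ne hj a

theorem coord_mul (i : ι) (g h : ↥(restrictedProd Gi)) :
    ((g * h : ↥(restrictedProd Gi)) : ∀ j, Gi j) i
      = (g : ∀ j, Gi j) i * (h : ∀ j, Gi j) i := rfl

theorem coord_inv (i : ι) (g : ↥(restrictedProd Gi)) :
    ((g⁻¹ : ↥(restrictedProd Gi)) : ∀ j, Gi j) i = ((g : ∀ j, Gi j) i)⁻¹ := rfl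

theorem coord_one (i : ι) :
    ((1 : ↥(restrictedProd Gi)) : ∀ j, Gi j) i = 1 := rfl

theorem commute_of_disjoint {a b : ↥(restrictedProd Gi)}
    (h : ∀ j, (a : ∀ j, Gi j) j = 1 ∨ (b : ∀ j, Gi j) j = 1) : a * b = b * a := by
  apply Subtype.ext
  funext j
  rw [coord_mul, coord_mul]
  rcases h j with h1 | h1 <;> rw [h1] <;> simp

theorem chi_sum {χ : ↥(restrictedProd Gi) → ℝ} (hχ : IsChar χ) (s : Finset ι) :
    ∀ k : ↥(restrictedProd Gi), (∀ j, (k : ∀ j, Gi j) j ≠ 1 → j ∈ s) →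
      χ k = ∑ j ∈ s, χ (iota j ((k : ∀ j, Gi j) j)) := by
  induction s using Finset.induction_on with
  | empty =>
      intro k hk
      have : k = 1 := by
        apply Subtype.ext
        funext j
        by_contra hj
        exact absurd (hk j hj) (by simp)
      rw [this, chi_one hχ, Finset.sum_empty]
  | @insert a s ha ih =>
      intro k hk
      have hk'mem : Function.update (k : ∀ j, Gi j) a 1 ∈ restrictedProd Gi := by
        rw [mem_rp]
        apply Set.Finite.subset k.2
        intro j hj
        simp only [Set.mem_setOf_eq] at hj ⊢
        by_cases hja : j = a
        · subst hja; simp at hj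
        · rwa [Function.update_of_ne hja] at hj
      set k' : ↥(restrictedProd Gi) := ⟨Function.update (k : ∀ j, Gi j) a 1, hk'mem⟩ with hk'
      have hcoord : ∀ j, j ≠ a → (k' : ∀ j, Gi j) j = (k : ∀ j, Gi j) j := by
        intro j hja
        exact Function.update_of_ne hja _ _
      have hcoorda : (k' : ∀ j, Gi j) a = 1 := Function.update_self _ _ _
      have hdecomp : k = iota a ((k : ∀ j, Gi j) a) * k' := by
        apply Subtype.ext
        funext j
        rw [coord_mul]
        by_cases hja : j = a
        · subst hja
          rw [iota_coord_same, hcoorda, mul_one]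
        · rw [iota_coord_ne hja, hcoord j hja, one_mul]
      have hsum' : χ k' = ∑ j ∈ s, χ (iota j ((k' : ∀ j, Gi j) j)) := by
        apply ih
        intro j hj
        by_cases hja : j = a
        · subst hja; exact absurd hcoorda hj
        · rw [hcoord j hja] at hj
          rcases Finset.mem_insert.mp (hk j hj) with h | h
          · exact absurd h hja
          · exact h
      calc χ k = χ (iota a ((k : ∀ j, Gi j) a) * k') := by rw [← hdecomp]
        _ = χ (iota a ((k : ∀ j, Gi j) a)) + χ k' := hχ _ _
        _ = χ (iota a ((k : ∀ j, Gi j) a)) + ∑ j ∈ s, χ (iota j ((k : ∀ j, Gi j) j)) := by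
              rw [hsum']
              congr 1
              apply Finset.sum_congr rfl
              intro j hj
              rw [hcoord j (fun h => ha (h ▸ hj))]
        _ = ∑ j ∈ insert a s, χ (iota j ((k : ∀ j, Gi j) j)) := by rw [Finset.sum_insert ha]

theorem chi_coord {χ : ↥(restrictedProd Gi) → ℝ} (hχ : IsChar χ) {i : ι}
    (hother : ∀ j, j ≠ i → ∀ a : Gi j, χ (iota j a) = 0) (g : ↥(restrictedProd Gi)) :
    χ g = χ (iota i ((g : ∀ j, Gi j) i)) := by
  have hfin : {j | (g : ∀ j, Gi j) j ≠ 1}.Finite := g.2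
  have hsum := chi_sum hχ (insert i hfin.toFinset) g (by
    intro j hj
    simp [Set.Finite.mem_toFinset, hj])
  rw [hsum]
  rw [Finset.sum_eq_single i]
  · intro b hb hbi
    exact hother b hbi _
  · intro h
    exact absurd (Finset.mem_insert_self i _) h

theorem chi_zero_of_all {χ : ↥(restrictedProd Gi) → ℝ} (hχ : IsChar χ)
    (h : ∀ j, ∀ a : Gi j, χ (iota j a) = 0) (g : ↥(restrictedProd Gi)) : χ g = 0 := by
  have hfin : {j | (g : ∀ j, Gi j) j ≠ 1}.Finite := g.2
  rw [chi_sum hχ hfin.toFinset g (by intro j hj; simpa [Set.Finite.mem_toFinset] using hj)]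
  apply Finset.sum_eq_zero
  intro j _
  exact h j _

/-- existence of a connected positive element supported at one coordinate -/
theorem exists_local_pump {Y : Set ↥(restrictedProd Gi)} {χ : ↥(restrictedProd Gi) → ℝ}
    (hχ : IsChar χ) (hY : Subgroup.closure Y = ⊤) {i : ι} {a : Gi i}
    (ha : χ (iota i a) ≠ 0) :
    ∃ m : ↥(restrictedProd Gi), Conn Y χ 1 m ∧ 0 < χ m ∧
      ∀ j, j ≠ i → (m : ∀ j, Gi j) j = 1 := by
  -- make positive
  obtain ⟨a', ha'⟩ : ∃ a' : Gi i, 0 < χ (iota i a') := by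
    rcases lt_or_gt_of_ne ha with h | h
    · exact ⟨a⁻¹, by rw [map_inv, chi_inv hχ]; linarith⟩
    · exact ⟨a, h⟩
  obtain ⟨h₁, hconn⟩ := cycle hχ hY ha'
  refine ⟨h₁⁻¹ * iota i a' * h₁, hconn, ?_, ?_⟩
  · have : χ (h₁⁻¹ * iota i a' * h₁) = χ (iota i a') := by
      have e1 := hχ (h₁⁻¹ * iota i a') h₁
      have e2 := hχ h₁⁻¹ (iota i a')
      rw [chi_inv hχ] at e2
      rw [e1, e2]; ring
    rw [this]; exact ha'
  · intro j hj
    show ((h₁⁻¹ * iota i a' * h₁ : ↥(restrictedProd Gi)) : ∀ j, Gi j) j = 1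
    rw [coord_mul, coord_mul, coord_inv, iota_coord_ne hj]
    simp

theorem case1 {χ : ↥(restrictedProd Gi) → ℝ} (hχ : IsChar χ) {i j : ι} (hij : i ≠ j)
    {a : Gi i} {b : Gi j} (ha : χ (iota i a) ≠ 0) (hb : χ (iota j b) ≠ 0) :
    MemSigma1 χ := by
  intro Y hY g0 h0 hg0 hh0
  suffices hconn : ∀ g : ↥(restrictedProd Gi), 0 ≤ χ g → Conn Y χ 1 g from
    ((hconn g0 hg0).symm.trans (hconn h0 hh0))
  intro g hg
  obtain ⟨mi, hmiC, hmiP, hmiS⟩ := exists_local_pump hχ hY ha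
  obtain ⟨mj, hmjC, hmjP, hmjS⟩ := exists_local_pump hχ hY hb
  set u' : ↥(restrictedProd Gi) := iota j ((g : ∀ l, Gi l) j) with hu'
  set v : ↥(restrictedProd Gi) := u'⁻¹ * g with hv
  have hvj : (v : ∀ l, Gi l) j = 1 := by
    rw [hv, coord_mul, coord_inv, hu', iota_coord_same]
    simp
  have hu'_ne : ∀ l, l ≠ j → (u' : ∀ l', Gi l') l = 1 := fun l hl => iota_coord_ne hl _
  have hguv : g = u' * v := by rw [hv]; group
  have hcomm_u'v : u' * v = v * u' := commute_of_disjoint (by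
    intro l
    by_cases hl : l = j
    · subst hl; exact Or.inr hvj
    · exact Or.inl (hu'_ne l hl))
  have hcomm_mi_u' : mi * u' = u' * mi := commute_of_disjoint (by
    intro l
    by_cases hl : l = i
    · subst hl; exact Or.inr (hu'_ne _ hij)
    · exact Or.inl (hmiS l hl))
  have hcomm_mj_v : mj * v = v * mj := commute_of_disjoint (by
    intro l
    by_cases hl : l = j
    · subst hl; exact Or.inr hvj
    · exact Or.inl (hmjS l hl))
  have hchi_g : χ g = χ u' + χ v := by
    conv_lhs => rw [hguv]
    exact hχ u' v
  rcases le_or_gt 0 (χ u') with hcase | hcase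
  · have s1 : Conn Y χ 1 u' := by
      have := ladder hχ hY hmiC hmiP hcomm_mi_u' (le_of_eq (chi_one hχ).symm)
        (by rw [one_mul]; exact hcase)
      simpa using this
    have s2 : Conn Y χ u' (u' * v) :=
      ladder hχ hY hmjC hmjP hcomm_mj_v hcase (by rw [← hguv]; exact hg)
    rw [hguv]; exact s1.trans s2
  · have hv0 : 0 ≤ χ v := by linarith
    have s1 : Conn Y χ 1 v := by
      have := ladder hχ hY hmjC hmjP hcomm_mj_v (le_of_eq (chi_one hχ).symm)
        (by rw [one_mul]; exact hv0)
      simpa using this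
    have s2 : Conn Y χ v (v * u') := by
      apply ladder hχ hY hmiC hmiP hcomm_mi_u' hv0
      rw [← hcomm_u'v, ← hguv]; exact hg
    rw [hguv, hcomm_u'v]; exact s1.trans s2

theorem case2 {χ : ↥(restrictedProd Gi) → ℝ} (hχ : IsChar χ) (hne : χ ≠ 0) {i : ι}
    (hother : ∀ j, j ≠ i → ∀ a : Gi j, χ (iota j a) = 0)
    (hsig : MemSigma1 (fun a : Gi i => χ (iota i a))) : MemSigma1 χ := by
  set χ' : Gi i → ℝ := fun a => χ (iota i a) with hχ'def
  intro Y hY g0 h0 hg0 hh0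
  suffices hconn : ∀ g, 0 ≤ χ g → Conn Y χ 1 g from
    ((hconn g0 hg0).symm.trans (hconn h0 hh0))
  intro g hg
  obtain ⟨gw, hgw⟩ := Function.ne_iff.mp hne
  have hact : χ (iota i ((gw : ∀ l, Gi l) i)) ≠ 0 := by
    rw [← chi_coord hχ hother gw]; exact hgw
  obtain ⟨m, hmC, hmP, hmS⟩ := exists_local_pump hχ hY hact
  have Klem : ∀ k : ↥(restrictedProd Gi), (k : ∀ l, Gi l) i = 1 → Conn Y χ 1 k := by
    intro k hk
    have hk0 : χ k = 0 := by
      rw [chi_coord hχ hother k, hk, map_one, chi_one hχ]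
    have hcomm : m * k = k * m := commute_of_disjoint (by
      intro l
      by_cases hl : l = i
      · subst hl; exact Or.inr hk
      · exact Or.inl (hmS l hl))
    have := ladder hχ hY hmC hmP hcomm (le_of_eq (chi_one hχ).symm)
      (by rw [one_mul, hk0])
    simpa using this
  obtain ⟨y, hyL, hyP⟩ := exists_pump hχ hY hne
  have hy1 : Conn Y χ 1 y := by
    have h1 : Rel Y χ 1 (1 * y) := rel_letter hyL (le_of_eq (chi_one hχ).symm)
      (by rw [one_mul]; exact hyP.le)
    rw [one_mul] at h1
    exact Relation.ReflTransGen.single h1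
  set X' : Set (Gi i) := (fun u : ↥(restrictedProd Gi) => (u : ∀ l, Gi l) i) ''
      {u | Conn Y χ 1 u} with hX'
  have hX'gen : Subgroup.closure X' = ⊤ := by
    rw [eq_top_iff]
    rintro abar -
    obtain ⟨N, hN⟩ := defect hχ hY (iota i abar)
    obtain ⟨n, hn⟩ := exists_nat_ge (max N 0 / χ y)
    have hub : max N 0 ≤ χ (y ^ n) := by
      rw [chi_pow hχ]
      rw [div_le_iff₀ hyP] at hn
      linarith
    have hyn_conn : Conn Y χ 1 (y ^ n) := conn_one_pow hχ hy1 hyP.le n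
    have hfull : Conn Y χ 1 (y ^ n * iota i abar) :=
      hyn_conn.trans (hN (y ^ n) (le_trans (le_max_right N 0) hub)
        (le_trans (le_max_left N 0) hub))
    have hm1 : ((y ^ n : ↥(restrictedProd Gi)) : ∀ l, Gi l) i ∈ X' :=
      ⟨y ^ n, hyn_conn, rfl⟩
    have hm2 : ((y ^ n * iota i abar : ↥(restrictedProd Gi)) : ∀ l, Gi l) i ∈ X' :=
      ⟨_, hfull, rfl⟩
    have : abar = (((y ^ n : ↥(restrictedProd Gi)) : ∀ l, Gi l) i)⁻¹ *
        (((y ^ n * iota i abar : ↥(restrictedProd Gi)) : ∀ l, Gi l) i) := by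
      rw [coord_mul, iota_coord_same]; group
    rw [this]
    exact Subgroup.mul_mem _ (Subgroup.inv_mem _ (Subgroup.subset_closure hm1))
      (Subgroup.subset_closure hm2)
  have hcc := hsig X' hX'gen
  have hgi : 0 ≤ χ' ((g : ∀ l, Gi l) i) := by
    rw [hχ'def]
    simp only []
    rw [← chi_coord hχ hother g]
    exact hg
  have h1i : 0 ≤ χ' (1 : Gi i) := by
    rw [hχ'def]
    simp only []
    rw [map_one, chi_one hχ]
  have hpath := hcc ((g : ∀ l, Gi l) i) 1 hgi h1i
  have lift : ∀ vbar : Gi i,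
      Relation.ReflTransGen
        (fun u v : Gi i => 0 ≤ χ' u ∧ 0 ≤ χ' v ∧ ∃ x ∈ X', v = u * x ∨ u = v * x)
        ((g : ∀ l, Gi l) i) vbar →
      ∃ u : ↥(restrictedProd Gi), Conn Y χ g u ∧ (u : ∀ l, Gi l) i = vbar := by
    intro vbar hp
    induction hp with
    | refl => exact ⟨g, Relation.ReflTransGen.refl, rfl⟩
    | @tail b c hstep hR ih =>
        obtain ⟨u, huC, hui⟩ := ih
        obtain ⟨hb, hc, xbar, hxbar, hbc⟩ := hR
        obtain ⟨mm, hmmC, hmmcoord0⟩ := hxbar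
        have hmmcoord : (mm : ∀ l, Gi l) i = xbar := hmmcoord0
        have hchiu : χ u = χ' ((u : ∀ l, Gi l) i) := chi_coord hχ hother u
        rcases hbc with hbc | hbc
        · refine ⟨u * mm, huC.trans (conn_one_mul hχ hmmC ?_), ?_⟩
          · rw [hchiu, hui]; exact hb
          · rw [coord_mul, hui, hmmcoord]; exact hbc.symm
        · have hcoord2 : ((u * mm⁻¹ : ↥(restrictedProd Gi)) : ∀ l, Gi l) i = c := by
            rw [coord_mul, coord_inv, hui, hmmcoord, hbc]; group
          refine ⟨u * mm⁻¹, ?_, hcoord2⟩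
          have h0 : 0 ≤ χ (u * mm⁻¹) := by
            rw [chi_coord hχ hother (u * mm⁻¹), hcoord2]
            exact hc
          have hstep2 := conn_one_mul hχ hmmC h0
          rw [inv_mul_cancel_right] at hstep2
          exact huC.trans hstep2.symm
  obtain ⟨u, hgu, hui⟩ := lift 1 hpath
  exact (Klem u hui).trans hgu.symm

theorem easy {χ : ↥(restrictedProd Gi) → ℝ} {i : ι} {χ' : Gi i → ℝ}
    (hns : ¬ MemSigma1 χ') {r : ℝ} (hr : 0 < r)
    (hray : ∀ g : ↥(restrictedProd Gi), χ g = r * χ' ((g : ∀ j, Gi j) i)) :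
    ¬ MemSigma1 χ := by
  unfold MemSigma1 at hns
  push_neg at hns
  obtain ⟨X', hgen', hnc⟩ := hns
  unfold CayleyConnected at hnc
  push_neg at hnc
  obtain ⟨abar, bbar, habar, hbbar, hnot⟩ := hnc
  intro hmem
  set X : Set ↥(restrictedProd Gi) :=
    (iota i '' X') ∪ {k : ↥(restrictedProd Gi) | (k : ∀ j, Gi j) i = 1} with hX
  have hXgen : Subgroup.closure X = ⊤ := by
    rw [eq_top_iff]
    rintro g -
    have hrestmem : Function.update (g : ∀ j, Gi j) i 1 ∈ restrictedProd Gi := by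
      rw [mem_rp]
      apply Set.Finite.subset g.2
      intro l hl
      simp only [Set.mem_setOf_eq] at hl ⊢
      by_cases hla : l = i
      · subst hla; simp at hl
      · rwa [Function.update_of_ne hla] at hl
    set k : ↥(restrictedProd Gi) := ⟨Function.update (g : ∀ j, Gi j) i 1, hrestmem⟩ with hk
    have hdecomp : g = iota i ((g : ∀ j, Gi j) i) * k := by
      apply Subtype.ext
      funext l
      rw [coord_mul]
      by_cases hla : l = i
      · subst hla
        show _ = _ * Function.update (g : ∀ j, Gi j) l 1 l
        rw [iota_coord_same, Function.update_self, mul_one]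
      · show _ = _ * Function.update (g : ∀ j, Gi j) i 1 l
        rw [iota_coord_ne hla, Function.update_of_ne hla, one_mul]
    have h1 : iota i ((g : ∀ j, Gi j) i) ∈ Subgroup.closure X := by
      apply Subgroup.closure_mono Set.subset_union_left
      have : iota i ((g : ∀ j, Gi j) i) ∈ Subgroup.map (iota i) (Subgroup.closure X') := by
        rw [hgen']
        exact ⟨(g : ∀ j, Gi j) i, trivial, rfl⟩
      rwa [MonoidHom.map_closure] at this
    have h2 : k ∈ Subgroup.closure X := by
      apply Subgroup.subset_closure
      exact Or.inr (Function.update_self _ _ _)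
    rw [hdecomp]
    exact Subgroup.mul_mem _ h1 h2
  have hcc := hmem X hXgen
  have hpos : ∀ u : ↥(restrictedProd Gi), 0 ≤ χ u → 0 ≤ χ' ((u : ∀ j, Gi j) i) := by
    intro u hu
    rw [hray] at hu
    by_contra hcon
    push_neg at hcon
    nlinarith
  have hstart := hcc (iota i abar) (iota i bbar)
    (by rw [hray, iota_coord_same]; exact mul_nonneg hr.le habar)
    (by rw [hray, iota_coord_same]; exact mul_nonneg hr.le hbbar)
  have proj : ∀ u v : ↥(restrictedProd Gi),
      Relation.ReflTransGen
        (fun u v : ↥(restrictedProd Gi) => 0 ≤ χ u ∧ 0 ≤ χ v ∧ ∃ x ∈ X, v = u * x ∨ u = v * x)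
        u v →
      Relation.ReflTransGen
        (fun u v : Gi i => 0 ≤ χ' u ∧ 0 ≤ χ' v ∧ ∃ x ∈ X', v = u * x ∨ u = v * x)
        ((u : ∀ j, Gi j) i) ((v : ∀ j, Gi j) i) := by
    intro u v h
    induction h with
    | refl => exact Relation.ReflTransGen.refl
    | @tail b c hstep hR ih =>
        obtain ⟨hb, hc, x, hxX, hbc⟩ := hR
        rcases hxX with ⟨xbar, hxbar, rfl⟩ | hker
        · refine ih.tail ⟨hpos b hb, hpos c hc, xbar, hxbar, ?_⟩
          rcases hbc with h | h
          · left; rw [h, coord_mul, iota_coord_same]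
          · right; rw [h, coord_mul, iota_coord_same]
        · have hkc : (x : ∀ j, Gi j) i = 1 := hker
          have : (c : ∀ j, Gi j) i = (b : ∀ j, Gi j) i := by
            rcases hbc with h | h
            · rw [h, coord_mul, hkc, mul_one]
            · rw [h, coord_mul, hkc, mul_one]
          rw [this]; exact ih
  have hfin := proj _ _ hstart
  rw [iota_coord_same, iota_coord_same] at hfin
  exact hnot hfin


end Product

end Sigma1Aux

/-- **Corollary (Statement 14).** For the restricted direct product `G = ⨁ G_i`,
a non-zero character `χ` of `G` represents a point of `Σ¹(G)^c` if and only if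
`[χ] = [χ̄ ∘ π_i]` for some `i` and some non-zero character `χ̄` of `G_i`
with `[χ̄] ∉ Σ¹(G_i)`. -/
theorem sigma1_complement_restricted_product
    {ι : Type*} (Gi : ι → Type*) [∀ i, Group (Gi i)]
    (χ : restrictedProd Gi → ℝ) (hχ : IsChar χ) (hne : χ ≠ 0) :
    ¬ MemSigma1 χ ↔
      ∃ i : ι, ∃ χ' : Gi i → ℝ, IsChar χ' ∧ χ' ≠ 0 ∧ ¬ MemSigma1 χ' ∧
        SameRayChar (fun g : restrictedProd Gi => χ' ((g : ∀ j, Gi j) i)) χ := by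
  classical
  constructor
  · intro hns
    by_contra hR
    apply hns
    have hact : ∃ i : ι, ∃ a : Gi i, χ (Sigma1Aux.iota i a) ≠ 0 := by
      by_contra hall
      push_neg at hall
      apply hne
      funext g
      exact Sigma1Aux.chi_zero_of_all hχ hall g
    obtain ⟨i, a, hia⟩ := hact
    by_cases htwo : ∃ j : ι, ∃ b : Gi j, j ≠ i ∧ χ (Sigma1Aux.iota j b) ≠ 0
    · obtain ⟨j, b, hji, hjb⟩ := htwo
      exact Sigma1Aux.case1 hχ (Ne.symm hji) hia hjb
    · push_neg at htwo
      have hother : ∀ j, j ≠ i → ∀ b : Gi j, χ (Sigma1Aux.iota j b) = 0 := by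
        intro j hj b
        exact htwo j b hj
      by_cases hs : MemSigma1 (fun a : Gi i => χ (Sigma1Aux.iota i a))
      · exact Sigma1Aux.case2 hχ hne hother hs
      · exfalso
        apply hR
        refine ⟨i, fun a => χ (Sigma1Aux.iota i a), ?_, ?_, hs, 1, one_pos, ?_⟩
        · intro a b
          show χ (Sigma1Aux.iota i (a * b)) = _
          rw [map_mul, hχ]
        · intro h0
          exact hia (congrFun h0 a)
        · intro g
          rw [one_mul]
          exact Sigma1Aux.chi_coord hχ hother g
  · rintro ⟨i, χ', hchar', hne', hns', r, hr, hrs⟩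
    exact Sigma1Aux.easy hns' hr hrs
end

section
/- Let I = [a,c] be a compact interval of positive length, let a < a₀ < c₀ < c, and let H be an irreducible subgroup of PL_o([a₀, c₀]). Choose a homeomorphism f ∈ PL_o(I) whose support contains ]a, a₀] ∪ [c₀, c[, and let G be the subgroup of PL_o(I) generated by H ∪ {f}. Let N be the normal closure of H in G. Then {[χ_ℓ], [χ_r]} ⊆ Σ¹(G)^c ⊆ S(G, N), where S(G,N) is the set of rays of non-zero characters of G vanishing on N. -/
open Set

theorem Equiv.Perm.apply_inv_self {α : Type*} (f : Equiv.Perm α) (x : α) : f (f⁻¹ x) = x :=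
  Equiv.apply_symm_apply f x

theorem Equiv.Perm.inv_apply_self {α : Type*} (f : Equiv.Perm α) (x : α) : f⁻¹ (f x) = x :=
  Equiv.symm_apply_apply f x

set_option maxHeartbeats 1000000

namespace S15

/-! ### Permutation basics -/

lemma fix_inv_iff (σ : Equiv.Perm ℝ) {t : ℝ} : σ⁻¹ t = t ↔ σ t = t := by
  constructor
  · intro h; nth_rewrite 1 [← h]; exact σ.apply_inv_self t
  · intro h; nth_rewrite 1 [← h]; exact σ.inv_apply_self t

lemma supp_inv (σ : Equiv.Perm ℝ) : suppOf ⇑σ⁻¹ = suppOf ⇑σ := by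
  ext t; exact not_iff_not.mpr (fix_inv_iff σ)

lemma fix_pow {σ : Equiv.Perm ℝ} {t : ℝ} (h : σ t = t) (n : ℕ) : (σ ^ n) t = t := by
  induction n with
  | zero => simp
  | succ k ih => rw [pow_succ, Equiv.Perm.mul_apply, h, ih]

lemma supp_pow (σ : Equiv.Perm ℝ) (n : ℕ) : suppOf ⇑(σ ^ n) ⊆ suppOf ⇑σ := by
  intro t ht
  by_contra h
  exact ht (fix_pow (not_not.mp h) n)

lemma mem_supp_apply {σ : Equiv.Perm ℝ} {t : ℝ} (h : t ∈ suppOf ⇑σ) : σ t ∈ suppOf ⇑σ := by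
  intro hc
  exact h (σ.injective hc)

lemma commute_of_disjoint_supp {σ τ : Equiv.Perm ℝ}
    (h : ∀ t, t ∈ suppOf ⇑σ → t ∉ suppOf ⇑τ) : σ * τ = τ * σ := by
  ext t
  simp only [Equiv.Perm.mul_apply]
  by_cases hσ : t ∈ suppOf ⇑σ
  · have h1 : τ t = t := not_not.mp (h t hσ)
    have h2 : τ (σ t) = σ t := not_not.mp (h (σ t) (mem_supp_apply hσ))
    rw [h1, h2]
  · have h1 : σ t = t := not_not.mp hσ
    by_cases hτ : t ∈ suppOf ⇑τ
    · have h2 : σ (τ t) = τ t := by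
        have := mem_supp_apply hτ
        by_contra hc
        exact h (τ t) hc this
      rw [h1, h2]
    · have h2 : τ t = t := not_not.mp hτ
      rw [h2, h1, h2]

lemma strictMono_inv {σ : Equiv.Perm ℝ} (hm : StrictMono ⇑σ) : StrictMono ⇑σ⁻¹ := by
  intro r s hrs
  rw [← hm.lt_iff_lt]
  simpa using hrs

lemma continuous_of_strictMono {σ : Equiv.Perm ℝ} (hm : StrictMono ⇑σ) : Continuous ⇑σ := by
  have h := OrderIso.continuous (StrictMono.orderIsoOfSurjective ⇑σ hm σ.surjective)
  rwa [StrictMono.coe_orderIsoOfSurjective] at h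

lemma fix_of_fix_below {σ : Equiv.Perm ℝ} (hm : StrictMono ⇑σ) {p : ℝ}
    (h : ∀ t, t < p → σ t = t) : σ p = p := by
  rcases lt_trichotomy (σ p) p with hlt | heq | hgt
  · have := h (σ p) hlt
    exact absurd (σ.injective this) (ne_of_lt hlt)
  · exact heq
  · exfalso
    obtain ⟨w, hw1, hw2⟩ := exists_between hgt
    obtain ⟨r, hr⟩ := σ.surjective w
    rcases lt_trichotomy r p with h1 | h1 | h1
    · rw [h r h1] at hr; exact absurd hr (by linarith)
    · rw [h1] at hr; exact absurd hr (by linarith)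
    · have := hm h1; rw [hr] at this; linarith
lemma fix_of_fix_above {σ : Equiv.Perm ℝ} (hm : StrictMono ⇑σ) {p : ℝ}
    (h : ∀ t, p < t → σ t = t) : σ p = p := by
  rcases lt_trichotomy (σ p) p with hlt | heq | hgt
  · exfalso
    obtain ⟨w, hw1, hw2⟩ := exists_between hlt
    obtain ⟨r, hr⟩ := σ.surjective w
    rcases lt_trichotomy r p with h1 | h1 | h1
    · have := hm h1; rw [hr] at this; linarith
    · rw [h1] at hr; exact absurd hr (by linarith)
    · rw [h r h1] at hr; exact absurd hr (by linarith)
  · exact heq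
  · have := h (σ p) hgt
    exact absurd (σ.injective this) (ne_of_gt hgt)

lemma mem_supp_conj {σ τ : Equiv.Perm ℝ} {t : ℝ} :
    t ∈ suppOf ⇑(σ * τ * σ⁻¹) ↔ σ⁻¹ t ∈ suppOf ⇑τ := by
  simp only [suppOf, mem_setOf_eq, Equiv.Perm.mul_apply]
  constructor
  · intro h hc
    exact h (by rw [hc, σ.apply_inv_self])
  · intro h hc
    apply h
    have := congrArg ⇑σ⁻¹ hc
    simpa using this

/-! ### PL analysis -/

lemma affine_of_locally_affine {g : ℝ → ℝ} {x y : ℝ} (hxy : x < y)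
    (hloc : ∀ t ∈ Ioo x y, ∃ m b ε : ℝ, 0 < ε ∧ ∀ u : ℝ, |u - t| < ε → g u = m * u + b) :
    ∃ m b : ℝ, ∀ u ∈ Ioo x y, g u = m * u + b := by
  have ht₀m : (x + y) / 2 ∈ Ioo x y := ⟨by linarith, by linarith⟩
  obtain ⟨m, b, ε₀, hε₀, h₀⟩ := hloc _ ht₀m
  refine ⟨m, b, ?_⟩
  set U : Set ℝ := {t | ∃ ε > (0:ℝ), ∀ u : ℝ, |u - t| < ε → g u = m * u + b} with hU
  set V : Set ℝ := {t | ∃ ε > (0:ℝ), ∃ m' b' : ℝ, ¬(m' = m ∧ b' = b) ∧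
      ∀ u : ℝ, |u - t| < ε → g u = m' * u + b'} with hV
  have hUopen : IsOpen U := by
    rw [Metric.isOpen_iff]
    rintro t ⟨ε, hε, ht⟩
    refine ⟨ε/2, by linarith, fun s hs => ⟨ε/2, by linarith, fun u hu => ht u ?_⟩⟩
    rw [Metric.mem_ball, Real.dist_eq] at hs
    calc |u - t| ≤ |u - s| + |s - t| := abs_sub_le u s t
    _ < ε := by linarith
  have hVopen : IsOpen V := by
    rw [Metric.isOpen_iff]
    rintro t ⟨ε, hε, m', b', hne, ht⟩
    refine ⟨ε/2, by linarith, fun s hs => ⟨ε/2, by linarith, m', b', hne, fun u hu => ht u ?_⟩⟩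
    rw [Metric.mem_ball, Real.dist_eq] at hs
    calc |u - t| ≤ |u - s| + |s - t| := abs_sub_le u s t
    _ < ε := by linarith
  have hcover : Ioo x y ⊆ U ∪ V := by
    intro t ht
    obtain ⟨m', b', ε, hε, h⟩ := hloc t ht
    by_cases hc : m' = m ∧ b' = b
    · left; exact ⟨ε, hε, fun u hu => by rw [h u hu, hc.1, hc.2]⟩
    · right; exact ⟨ε, hε, m', b', hc, h⟩
  have hdisj : ¬ (Ioo x y ∩ (U ∩ V)).Nonempty := by
    rintro ⟨t, _, ⟨ε₁, hε₁, h₁⟩, ε₂, hε₂, m', b', hne, h₂⟩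
    set ε := min ε₁ ε₂ with hε
    have hεp : 0 < ε := lt_min hε₁ hε₂
    have e1 : g t = m * t + b := h₁ t (by simpa using hε₁)
    have e1' : g t = m' * t + b' := h₂ t (by simpa using hε₂)
    have e2 : g (t + ε/2) = m * (t + ε/2) + b := by
      apply h₁; rw [show t + ε/2 - t = ε/2 by ring, abs_of_pos (by linarith)]
      calc ε/2 < ε := by linarith
      _ ≤ ε₁ := min_le_left _ _
    have e2' : g (t + ε/2) = m' * (t + ε/2) + b' := by
      apply h₂; rw [show t + ε/2 - t = ε/2 by ring, abs_of_pos (by linarith)]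
      calc ε/2 < ε := by linarith
      _ ≤ ε₂ := min_le_right _ _
    have hmm : m = m' := by
      have := e2.symm.trans e2'
      have h3 := e1.symm.trans e1'
      have : m * (ε/2) = m' * (ε/2) := by linarith
      exact mul_right_cancel₀ (by linarith) this
    exact hne ⟨hmm.symm, by rw [hmm] at e1; linarith [e1.symm.trans e1']⟩
  have hne : (Ioo x y ∩ U).Nonempty := ⟨(x+y)/2, ht₀m, ε₀, hε₀, h₀⟩
  have key : ¬ (Ioo x y ∩ V).Nonempty := by
    intro hVne
    exact hdisj (by
      have := isPreconnected_Ioo (a := x) (b := y) U V hUopen hVopen hcover hne hVne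
      rwa [inter_comm U V] at this ⊢)
  intro u hu
  rcases hcover hu with h | h
  · obtain ⟨ε, hε, h⟩ := h
    exact h u (by simp [hε])
  · exact absurd ⟨u, hu, h⟩ key

lemma exists_breakfree_right {f : ℝ → ℝ} (hpl : IsFinitaryPL f) (a : ℝ) :
    ∃ δ : ℝ, 0 < δ ∧ ∀ t ∈ Ioo a (a + δ),
      ∃ m b ε : ℝ, 0 < ε ∧ ∀ u : ℝ, |u - t| < ε → f u = m * u + b := by
  classical
  obtain ⟨B, hB⟩ := hpl
  by_cases h : (B.filter (fun z => a < z)).Nonempty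
  · refine ⟨(B.filter (fun z => a < z)).min' h - a, ?_, ?_⟩
    · have hmem := Finset.mem_filter.mp ((B.filter (fun z => a < z)).min'_mem h)
      linarith [hmem.2]
    · intro t ht
      apply hB
      intro htB
      have hts : t ∈ B.filter (fun z => a < z) := Finset.mem_filter.mpr ⟨htB, ht.1⟩
      have := (B.filter (fun z => a < z)).min'_le t hts
      have h2 := ht.2
      linarith
  · refine ⟨1, one_pos, ?_⟩
    intro t ht
    apply hB
    intro htB
    exact h ⟨t, Finset.mem_filter.mpr ⟨htB, ht.1⟩⟩

lemma exists_breakfree_left {f : ℝ → ℝ} (hpl : IsFinitaryPL f) (c : ℝ) :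
    ∃ δ : ℝ, 0 < δ ∧ ∀ t ∈ Ioo (c - δ) c,
      ∃ m b ε : ℝ, 0 < ε ∧ ∀ u : ℝ, |u - t| < ε → f u = m * u + b := by
  classical
  obtain ⟨B, hB⟩ := hpl
  by_cases h : (B.filter (fun z => z < c)).Nonempty
  · refine ⟨c - (B.filter (fun z => z < c)).max' h, ?_, ?_⟩
    · have hmem := Finset.mem_filter.mp ((B.filter (fun z => z < c)).max'_mem h)
      linarith [hmem.2]
    · intro t ht
      apply hB
      intro htB
      have hts : t ∈ B.filter (fun z => z < c) := Finset.mem_filter.mpr ⟨htB, ht.2⟩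
      have := (B.filter (fun z => z < c)).le_max' t hts
      have h2 := ht.1
      linarith
  · refine ⟨1, one_pos, ?_⟩
    intro t ht
    apply hB
    intro htB
    exact h ⟨t, Finset.mem_filter.mpr ⟨htB, ht.2⟩⟩

lemma exists_affine_right {f : Equiv.Perm ℝ} (hm : StrictMono ⇑f) (hpl : IsFinitaryPL ⇑f)
    {a : ℝ} (hfa : f a = a) :
    ∃ δ m : ℝ, 0 < δ ∧ 0 < m ∧ ∀ u ∈ Ico a (a + δ), f u = m * (u - a) + a := by
  obtain ⟨δ, hδ, hloc⟩ := exists_breakfree_right hpl a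
  obtain ⟨m, b, haff⟩ := affine_of_locally_affine (by linarith : a < a + δ) hloc
  have hc : Continuous ⇑f := continuous_of_strictMono hm
  have hl1 : Filter.Tendsto (⇑f) (nhdsWithin a (Ioi a)) (nhds a) := by
    have h2 := (hc.continuousAt (x := a)).tendsto
    rw [hfa] at h2
    exact h2.mono_left nhdsWithin_le_nhds
  have hl2 : Filter.Tendsto (fun u => m * u + b) (nhdsWithin a (Ioi a)) (nhds (m * a + b)) := by
    apply Filter.Tendsto.mono_left _ nhdsWithin_le_nhds
    exact ((continuous_const.mul continuous_id).add continuous_const).tendsto a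
  have heq : ⇑f =ᶠ[nhdsWithin a (Ioi a)] fun u => m * u + b := by
    filter_upwards [Ioo_mem_nhdsGT_of_mem (⟨le_refl a, by linarith⟩ : a ∈ Ico a (a + δ))] with u hu
    exact haff u hu
  have htie : a = m * a + b := tendsto_nhds_unique (hl1.congr' heq) hl2
  have hmpos : 0 < m := by
    have h1 : f (a + δ/3) = m * (a + δ/3) + b := haff _ ⟨by linarith, by linarith⟩
    have h2 : f (a + 2*δ/3) = m * (a + 2*δ/3) + b := haff _ ⟨by linarith, by linarith⟩
    have h3 : f (a + δ/3) < f (a + 2*δ/3) := hm (by linarith)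
    nlinarith
  refine ⟨δ, m, hδ, hmpos, ?_⟩
  intro u hu
  rcases eq_or_lt_of_le hu.1 with h | h
  · rw [← h, hfa]; ring
  · have hb : b = a - m * a := by linarith
    rw [haff u ⟨h, hu.2⟩, hb]; ring

lemma exists_affine_left {f : Equiv.Perm ℝ} (hm : StrictMono ⇑f) (hpl : IsFinitaryPL ⇑f)
    {c : ℝ} (hfc : f c = c) :
    ∃ δ m : ℝ, 0 < δ ∧ 0 < m ∧ ∀ u ∈ Ioc (c - δ) c, f u = m * (u - c) + c := by
  obtain ⟨δ, hδ, hloc⟩ := exists_breakfree_left hpl c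
  obtain ⟨m, b, haff⟩ := affine_of_locally_affine (by linarith : c - δ < c) hloc
  have hc : Continuous ⇑f := continuous_of_strictMono hm
  have hl1 : Filter.Tendsto (⇑f) (nhdsWithin c (Iio c)) (nhds c) := by
    have h2 := (hc.continuousAt (x := c)).tendsto
    rw [hfc] at h2
    exact h2.mono_left nhdsWithin_le_nhds
  have hl2 : Filter.Tendsto (fun u => m * u + b) (nhdsWithin c (Iio c)) (nhds (m * c + b)) := by
    apply Filter.Tendsto.mono_left _ nhdsWithin_le_nhds
    exact ((continuous_const.mul continuous_id).add continuous_const).tendsto c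
  have heq : ⇑f =ᶠ[nhdsWithin c (Iio c)] fun u => m * u + b := by
    filter_upwards [Ioo_mem_nhdsLT_of_mem (⟨by linarith, le_refl c⟩ : c ∈ Ioc (c - δ) c)] with u hu
    exact haff u hu
  have htie : c = m * c + b := tendsto_nhds_unique (hl1.congr' heq) hl2
  have hmpos : 0 < m := by
    have h1 : f (c - δ/3) = m * (c - δ/3) + b := haff _ ⟨by linarith, by linarith⟩
    have h2 : f (c - 2*δ/3) = m * (c - 2*δ/3) + b := haff _ ⟨by linarith, by linarith⟩
    have h3 : f (c - 2*δ/3) < f (c - δ/3) := hm (by linarith)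
    nlinarith
  refine ⟨δ, m, hδ, hmpos, ?_⟩
  intro u hu
  rcases eq_or_lt_of_le hu.2 with h | h
  · rw [h, hfc]; ring
  · have hb : b = c - m * c := by linarith
    rw [haff u ⟨hu.1, h⟩, hb]; ring

lemma rightSlope_of_affine {g : ℝ → ℝ} {a δ m : ℝ} (hδ : 0 < δ)
    (h : ∀ u ∈ Ico a (a + δ), g u = m * (u - a) + a) : rightSlope g a = m := by
  have hbase : HasDerivAt (fun u : ℝ => m * (u - a) + a) m a := by
    have h1 : HasDerivAt (fun u : ℝ => u - a) 1 a := (hasDerivAt_id a).sub_const a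
    have h2 := (h1.const_mul m).add_const a
    simpa using h2
  have hd : HasDerivWithinAt g m (Ici a) a := by
    apply (hbase.hasDerivWithinAt (s := Ici a)).congr_of_eventuallyEq
    · filter_upwards [Ico_mem_nhdsGE_of_mem (⟨le_refl a, by linarith⟩ : a ∈ Ico a (a + δ))] with u hu
      exact h u hu
    · simpa using h a ⟨le_refl a, by linarith⟩
  exact hd.derivWithin ((uniqueDiffOn_Ici a) a self_mem_Ici)

lemma leftSlope_of_affine {g : ℝ → ℝ} {c δ m : ℝ} (hδ : 0 < δ)
    (h : ∀ u ∈ Ioc (c - δ) c, g u = m * (u - c) + c) : leftSlope g c = m := by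
  have hbase : HasDerivAt (fun u : ℝ => m * (u - c) + c) m c := by
    have h1 : HasDerivAt (fun u : ℝ => u - c) 1 c := (hasDerivAt_id c).sub_const c
    have h2 := (h1.const_mul m).add_const c
    simpa using h2
  have hd : HasDerivWithinAt g m (Iic c) c := by
    apply (hbase.hasDerivWithinAt (s := Iic c)).congr_of_eventuallyEq
    · filter_upwards [Ioc_mem_nhdsLE_of_mem (⟨by linarith, le_refl c⟩ : c ∈ Ioc (c - δ) c)] with u hu
      exact h u hu
    · simpa using h c ⟨by linarith, le_refl c⟩
  exact hd.derivWithin ((uniqueDiffOn_Iic c) c self_mem_Iic)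

lemma rightSlope_congr {g g' : ℝ → ℝ} {a b : ℝ} (hab : a < b)
    (h : ∀ u ∈ Ico a b, g u = g' u) : rightSlope g a = rightSlope g' a := by
  apply Filter.EventuallyEq.derivWithin_eq
  · filter_upwards [Ico_mem_nhdsGE_of_mem (⟨le_refl a, hab⟩ : a ∈ Ico a b)] with u hu
    exact h u hu
  · exact h a ⟨le_refl a, hab⟩

lemma leftSlope_congr {g g' : ℝ → ℝ} {b c : ℝ} (hbc : b < c)
    (h : ∀ u ∈ Ioc b c, g u = g' u) : leftSlope g c = leftSlope g' c := by
  apply Filter.EventuallyEq.derivWithin_eq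
  · filter_upwards [Ioc_mem_nhdsLE_of_mem (⟨hbc, le_refl c⟩ : c ∈ Ioc b c)] with u hu
    exact h u hu
  · exact h c ⟨hbc, le_refl c⟩

lemma rightSlope_one_of_fix {g : ℝ → ℝ} {a b : ℝ} (hab : a < b)
    (h : ∀ u ∈ Ico a b, g u = u) : rightSlope g a = 1 := by
  apply rightSlope_of_affine (show (0:ℝ) < b - a by linarith)
  intro u hu
  rw [h u (by rwa [show a + (b - a) = b by ring] at hu)]
  ring

lemma leftSlope_one_of_fix {g : ℝ → ℝ} {b c : ℝ} (hbc : b < c)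
    (h : ∀ u ∈ Ioc b c, g u = u) : leftSlope g c = 1 := by
  apply leftSlope_of_affine (show (0:ℝ) < c - b by linarith)
  intro u hu
  rw [h u (by rwa [show c - (c - b) = b by ring] at hu)]
  ring

lemma sign_dichotomy_Ioc {g : ℝ → ℝ} {a b : ℝ} (hab : a < b) (hc : Continuous g)
    (h : ∀ t ∈ Ioc a b, g t ≠ t) :
    (∀ t ∈ Ioc a b, g t < t) ∨ (∀ t ∈ Ioc a b, t < g t) := by
  by_contra hcon
  push_neg at hcon
  obtain ⟨⟨t₁, ht₁, hle₁⟩, t₂, ht₂, hle₂⟩ := hcon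
  have h₁ : t₁ < g t₁ := lt_of_le_of_ne hle₁ (Ne.symm (h t₁ ht₁))
  have h₂ : g t₂ < t₂ := lt_of_le_of_ne hle₂ (h t₂ ht₂)
  have hcont : Continuous (fun t => g t - t) := hc.sub continuous_id
  rcases le_total t₁ t₂ with hle | hle
  · have := intermediate_value_Icc' hle (hcont.continuousOn)
    have h0 : (0:ℝ) ∈ Icc (g t₂ - t₂) (g t₁ - t₁) := ⟨by linarith, by linarith⟩
    obtain ⟨t, htm, ht0⟩ := this h0
    have ht0' : g t - t = 0 := ht0
    exact h t ⟨lt_of_lt_of_le ht₁.1 htm.1, le_trans htm.2 ht₂.2⟩ (by linarith)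
  · have := intermediate_value_Icc hle (hcont.continuousOn)
    have h0 : (0:ℝ) ∈ Icc (g t₂ - t₂) (g t₁ - t₁) := ⟨by linarith, by linarith⟩
    obtain ⟨t, htm, ht0⟩ := this h0
    have ht0' : g t - t = 0 := ht0
    exact h t ⟨lt_of_lt_of_le ht₂.1 htm.1, le_trans htm.2 ht₁.2⟩ (by linarith)

lemma sign_dichotomy_Ico {g : ℝ → ℝ} {b c : ℝ} (hbc : b < c) (hc : Continuous g)
    (h : ∀ t ∈ Ico b c, g t ≠ t) :
    (∀ t ∈ Ico b c, g t < t) ∨ (∀ t ∈ Ico b c, t < g t) := by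
  by_contra hcon
  push_neg at hcon
  obtain ⟨⟨t₁, ht₁, hle₁⟩, t₂, ht₂, hle₂⟩ := hcon
  have h₁ : t₁ < g t₁ := lt_of_le_of_ne hle₁ (Ne.symm (h t₁ ht₁))
  have h₂ : g t₂ < t₂ := lt_of_le_of_ne hle₂ (h t₂ ht₂)
  have hcont : Continuous (fun t => g t - t) := hc.sub continuous_id
  rcases le_total t₁ t₂ with hle | hle
  · have := intermediate_value_Icc' hle (hcont.continuousOn)
    have h0 : (0:ℝ) ∈ Icc (g t₂ - t₂) (g t₁ - t₁) := ⟨by linarith, by linarith⟩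
    obtain ⟨t, htm, ht0⟩ := this h0
    have ht0' : g t - t = 0 := ht0
    exact h t ⟨le_trans ht₁.1 htm.1, lt_of_le_of_lt htm.2 ht₂.2⟩ (by linarith)
  · have := intermediate_value_Icc hle (hcont.continuousOn)
    have h0 : (0:ℝ) ∈ Icc (g t₂ - t₂) (g t₁ - t₁) := ⟨by linarith, by linarith⟩
    obtain ⟨t, htm, ht0⟩ := this h0
    have ht0' : g t - t = 0 := ht0
    exact h t ⟨le_trans ht₂.1 htm.1, lt_of_le_of_lt htm.2 ht₁.2⟩ (by linarith)



variable {Γ : Type*} [Group Γ]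

section char
variable {χ : Γ → ℝ} (hχ : IsChar χ)
include hχ

lemma char_one : χ 1 = 0 := by
  have := hχ 1 1
  simp at this
  linarith

lemma char_inv (g : Γ) : χ g⁻¹ = - χ g := by
  have := hχ g⁻¹ g
  simp [char_one hχ] at this
  linarith

lemma char_pow (g : Γ) (n : ℕ) : χ (g ^ n) = n * χ g := by
  induction n with
  | zero => simp [char_one hχ]
  | succ k ih => rw [pow_succ, hχ, ih]; push_cast; ring

lemma char_conj (w u : Γ) : χ (w * u * w⁻¹) = χ u := by
  rw [hχ, hχ, char_inv hχ]; ring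

end char

/-- all partial products (including empty and full) of `u * l` have `χ`-value at least `c`. -/
def valley (χ : Γ → ℝ) : ℝ → Γ → List Γ → Prop
  | c, u, [] => c ≤ χ u
  | c, u, y :: t => c ≤ χ u ∧ valley χ c (u * y) t

@[simp] lemma valley_nil {χ : Γ → ℝ} {c : ℝ} {u : Γ} : valley χ c u [] ↔ c ≤ χ u := Iff.rfl

@[simp] lemma valley_cons {χ : Γ → ℝ} {c : ℝ} {u y : Γ} {t : List Γ} :
    valley χ c u (y :: t) ↔ c ≤ χ u ∧ valley χ c (u * y) t := Iff.rfl

lemma valley_head {χ : Γ → ℝ} {c : ℝ} {u : Γ} {l : List Γ} (h : valley χ c u l) : c ≤ χ u := by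
  cases l with
  | nil => exact h
  | cons y t => exact h.1

lemma valley_mono {χ : Γ → ℝ} {c c' : ℝ} {u : Γ} {l : List Γ} (hcc : c' ≤ c)
    (h : valley χ c u l) : valley χ c' u l := by
  induction l generalizing u with
  | nil => exact le_trans hcc h
  | cons y t ih => exact ⟨le_trans hcc h.1, ih h.2⟩

lemma valley_append {χ : Γ → ℝ} {c : ℝ} {u : Γ} {l₁ l₂ : List Γ} :
    valley χ c u (l₁ ++ l₂) ↔ valley χ c u l₁ ∧ valley χ c (u * l₁.prod) l₂ := by
  induction l₁ generalizing u with
  | nil =>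
    simp only [List.nil_append, List.prod_nil, mul_one, valley_nil]
    constructor
    · intro h; exact ⟨valley_head h, h⟩
    · intro h; exact h.2
  | cons y t ih =>
    simp only [List.cons_append, valley_cons, List.prod_cons, ih, ← mul_assoc]
    tauto

lemma valley_last {χ : Γ → ℝ} {c : ℝ} {u : Γ} {l : List Γ} (h : valley χ c u l) :
    c ≤ χ (u * l.prod) := by
  induction l generalizing u with
  | nil => simpa using h
  | cons y t ih =>
    have := ih h.2
    simpa [mul_assoc] using this

lemma valley_translate {χ : Γ → ℝ} (hχ : IsChar χ) {c : ℝ} {u : Γ} {l : List Γ} (z : Γ)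
    (h : valley χ c u l) : valley χ (c + χ z) (z * u) l := by
  induction l generalizing u with
  | nil => simp only [valley_nil] at h ⊢; rw [hχ]; linarith
  | cons y t ih =>
    refine ⟨by rw [hχ]; linarith [h.1], ?_⟩
    have := ih h.2
    rwa [← mul_assoc] at this

/-- concatenated power of a list -/
def powList (l : List Γ) : ℕ → List Γ
  | 0 => []
  | n + 1 => powList l n ++ l

lemma powList_prod (l : List Γ) (n : ℕ) : (powList l n).prod = l.prod ^ n := by
  induction n with
  | zero => simp [powList]
  | succ k ih => rw [powList, List.prod_append, ih, pow_succ]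

lemma powList_mem {l : List Γ} {n : ℕ} {y : Γ} (h : y ∈ powList l n) : y ∈ l := by
  induction n with
  | zero => simp [powList] at h
  | succ k ih =>
    rw [powList, List.mem_append] at h
    tauto

lemma valley_powList {χ : Γ → ℝ} (hχ : IsChar χ) {c : ℝ} {l : List Γ}
    (h : valley χ c 1 l) (hc : c ≤ 0) (hp : 0 ≤ χ l.prod) (n : ℕ) :
    valley χ c 1 (powList l n) := by
  induction n with
  | zero => simpa [powList, char_one hχ] using hc
  | succ k ih =>
    rw [powList, valley_append]
    refine ⟨ih, ?_⟩
    have h2 := valley_translate hχ (l.prod ^ k) h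
    rw [mul_one] at h2
    rw [powList_prod, one_mul]
    apply valley_mono _ h2
    rw [char_pow hχ]
    have : (0:ℝ) ≤ (k : ℝ) * χ l.prod := by positivity
    linarith

lemma valley_replicate {χ : Γ → ℝ} (hχ : IsChar χ) {c : ℝ} {u x : Γ} {m : ℕ}
    (h : ∀ i : ℕ, i ≤ m → c ≤ χ (u * x ^ i)) : valley χ c u (List.replicate m x) := by
  induction m generalizing u with
  | zero =>
    simpa using h 0 (le_refl 0)
  | succ k ih =>
    refine ⟨by simpa using h 0 (Nat.zero_le _), ?_⟩
    apply ih
    intro i hi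
    have := h (i + 1) (by omega)
    rwa [pow_succ', ← mul_assoc] at this

/-- the word for the inverse -/
def invList (l : List Γ) : List Γ := (l.map (fun y => y⁻¹)).reverse

lemma invList_prod (l : List Γ) : (invList l).prod = l.prod⁻¹ := by
  induction l with
  | nil => simp [invList]
  | cons y t ih =>
    rw [invList, List.map_cons, List.reverse_cons, List.prod_append]
    simp only [List.prod_cons, List.prod_nil, mul_one]
    rw [show (List.map (fun y => y⁻¹) t).reverse = invList t from rfl, ih]
    rw [mul_inv_rev]

lemma invList_mem {l : List Γ} {y : Γ} (h : y ∈ invList l) : ∃ x ∈ l, y = x⁻¹ := by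
  rw [invList, List.mem_reverse, List.mem_map] at h
  obtain ⟨x, hx, hxy⟩ := h
  exact ⟨x, hx, hxy.symm⟩

lemma valley_invList {χ : Γ → ℝ} (hχ : IsChar χ) {d : ℝ} {u₀ : Γ} {l : List Γ}
    (h : valley χ d u₀ l) (u : Γ) :
    valley χ (χ u - (χ u₀ + χ l.prod) + d) u (invList l) := by
  induction l generalizing u₀ u with
  | nil =>
    simp only [invList, List.map_nil, List.reverse_nil, valley_nil, List.prod_nil,
      char_one hχ] at h ⊢
    linarith
  | cons y t ih =>
    obtain ⟨h1, h2⟩ := h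
    simp only [List.prod_cons]
    have key : invList (y :: t) = invList t ++ [y⁻¹] := by
      simp [invList]
    rw [key, valley_append]
    constructor
    · have := ih h2 u
      apply valley_mono _ this
      rw [hχ y t.prod, hχ u₀ y]
      linarith
    · rw [invList_prod]
      constructor
      · show _ ≤ χ (u * t.prod⁻¹)
        rw [hχ u t.prod⁻¹, char_inv hχ, hχ y t.prod]
        have := valley_head h2
        rw [hχ] at this
        linarith
      · show valley χ _ (u * t.prod⁻¹ * (y⁻¹ : Γ)) []
        rw [valley_nil]
        have e : u * t.prod⁻¹ * (y⁻¹ : Γ) = u * (y * t.prod)⁻¹ := by group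
        rw [e, hχ u (y * t.prod)⁻¹, char_inv hχ, hχ y t.prod]
        linarith

lemma exists_valley (χ : Γ → ℝ) (u : Γ) (l : List Γ) :
    ∃ d : ℝ, d ≤ 0 ∧ valley χ d u l := by
  induction l generalizing u with
  | nil => exact ⟨min (χ u) 0, min_le_right _ _, min_le_left _ _⟩
  | cons y t ih =>
    obtain ⟨d, hd0, hd⟩ := ih (u * y)
    exact ⟨min d (min (χ u) 0), by simp [hd0],
      ⟨le_trans (le_trans (min_le_right _ _) (min_le_left _ _)) (le_refl _),
        valley_mono (min_le_left _ _) hd⟩⟩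

/-! ### the Cayley subgraph -/

variable (X : Set Γ) (χ : Γ → ℝ)

def IsLetter (y : Γ) : Prop := y ∈ X ∨ y⁻¹ ∈ X

def grel : Γ → Γ → Prop :=
  fun u v : Γ => 0 ≤ χ u ∧ 0 ≤ χ v ∧ ∃ x ∈ X, v = u * x ∨ u = v * x

def conn : Γ → Γ → Prop := Relation.ReflTransGen (grel X χ)

variable {X χ}

lemma grel_symm : Symmetric (grel X χ) := by
  rintro u v ⟨h1, h2, x, hx, h⟩
  exact ⟨h2, h1, x, hx, h.symm⟩

lemma conn_symm {u v : Γ} (h : conn X χ u v) : conn X χ v u :=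
  by haveI : Std.Symm (grel X χ) := ⟨grel_symm⟩; exact Std.Symm.symm (r := Relation.ReflTransGen (grel X χ)) _ _ h

lemma conn_trans {u v w : Γ} (h1 : conn X χ u v) (h2 : conn X χ v w) : conn X χ u w :=
  Relation.ReflTransGen.trans h1 h2

lemma IsLetter.inv {y : Γ} (h : IsLetter X y) : IsLetter X y⁻¹ := by
  rcases h with h | h
  · right; simpa using h
  · left; exact h

lemma conn_of_valley {u : Γ} {l : List Γ} (hl : ∀ y ∈ l, IsLetter X y)
    (hv : valley χ 0 u l) : conn X χ u (u * l.prod) := by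
  induction l generalizing u with
  | nil => simp only [List.prod_nil, mul_one]; exact Relation.ReflTransGen.refl
  | cons y t ih =>
    have hstep : grel X χ u (u * y) := by
      refine ⟨hv.1, valley_head hv.2, ?_⟩
      rcases hl y List.mem_cons_self with h | h
      · exact ⟨y, h, Or.inl rfl⟩
      · exact ⟨y⁻¹, h, Or.inr (by group)⟩
    have := ih (fun z hz => hl z (List.mem_cons_of_mem y hz)) hv.2
    rw [List.prod_cons, ← mul_assoc]
    exact Relation.ReflTransGen.head hstep this

lemma conn_translate (hχ : IsChar χ) {u v : Γ} (z : Γ) (hz : 0 ≤ χ z)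
    (h : conn X χ u v) : conn X χ (z * u) (z * v) := by
  induction h with
  | refl => exact Relation.ReflTransGen.refl
  | tail hbc hstep ih =>
    rename_i b cc
    refine Relation.ReflTransGen.tail ih ?_
    obtain ⟨h1, h2, x, hx, h⟩ := hstep
    refine ⟨by rw [hχ]; linarith, by rw [hχ]; linarith, x, hx, ?_⟩
    rcases h with h | h
    · left; rw [h, mul_assoc]
    · right; rw [h, mul_assoc]

lemma conn_nonneg (hχ : IsChar χ) {g : Γ} (h : conn X χ 1 g) : 0 ≤ χ g := by
  induction h with
  | refl => rw [char_one hχ]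
  | tail hbc hstep ih => exact hstep.2.1

/-- the key criterion : an element `g` is connected to `1` provided some `z` connected to 1
conjugates well. -/
lemma key_lemma (hχ : IsChar χ) {g z : Γ} (hg : 0 ≤ χ g)
    (hz : conn X χ 1 z) (hzg : conn X χ 1 (g⁻¹ * z * g))
    (hw : ∃ l : List Γ, (∀ y ∈ l, IsLetter X y) ∧ l.prod = g ∧ valley χ (-χ z) 1 l) :
    conn X χ 1 g := by
  obtain ⟨l, hl, hp, hv⟩ := hw
  have c1 : conn X χ g (z * g) := by
    have := conn_translate hχ g hg hzg
    rw [mul_one] at this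
    rw [show g * (g⁻¹ * z * g) = z * g by group] at this
    exact this
  have c2 : conn X χ z (z * g) := by
    have hv2 := valley_translate hχ z hv
    rw [mul_one] at hv2
    have hv3 : valley χ 0 z l := valley_mono (by linarith) hv2
    have := conn_of_valley hl hv3
    rwa [hp] at this
  exact conn_trans (conn_trans hz c2) (conn_symm c1)

/-- every element of a group generated by X is a product of letters -/
lemma rtg_invariant {α : Type*} {r : α → α → Prop} {P : α → Prop}
    (hpres : ∀ u v, r u v → P u → P v) {x y : α}
    (h : Relation.ReflTransGen r x y) (hx : P x) : P y := by
  induction h with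
  | refl => exact hx
  | tail hcon hstep ih => exact hpres _ _ hstep ih

lemma exists_word (hX : Subgroup.closure X = ⊤) (g : Γ) :
    ∃ l : List Γ, (∀ y ∈ l, IsLetter X y) ∧ l.prod = g := by
  have hg : g ∈ Subgroup.closure X := by rw [hX]; trivial
  induction hg using Subgroup.closure_induction with
  | mem x hx => exact ⟨[x], by intro y hy; simp at hy; rw [hy]; exact Or.inl hx, by simp⟩
  | one => exact ⟨[], by simp, by simp⟩
  | mul x y hx hy ihx ihy =>
    obtain ⟨l₁, hl₁, hp₁⟩ := ihx
    obtain ⟨l₂, hl₂, hp₂⟩ := ihy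
    refine ⟨l₁ ++ l₂, ?_, by rw [List.prod_append, hp₁, hp₂]⟩
    intro z hz
    rw [List.mem_append] at hz
    rcases hz with hz | hz
    · exact hl₁ z hz
    · exact hl₂ z hz
  | inv x hx ihx =>
    obtain ⟨l, hl, hp⟩ := ihx
    refine ⟨invList l, ?_, by rw [invList_prod, hp]⟩
    intro z hz
    obtain ⟨w, hw, hzw⟩ := invList_mem hz
    rw [hzw]
    exact (hl w hw).inv

lemma char_prod (hχ : IsChar χ) (l : List Γ) : χ l.prod = (l.map χ).sum := by
  induction l with
  | nil => simpa using char_one hχ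
  | cons y t ih => rw [List.prod_cons, hχ, List.map_cons, List.sum_cons, ih]

/-- if `χ g > 0` and `g` is a product of letters, some letter has positive `χ`. -/
lemma exists_pos_letter (hχ : IsChar χ) (hX : Subgroup.closure X = ⊤) {g : Γ}
    (hg : 0 < χ g) : ∃ y : Γ, IsLetter X y ∧ 0 < χ y := by
  obtain ⟨l, hl, hp⟩ := exists_word hX g
  have : ∃ y ∈ l, 0 < χ y := by
    by_contra hcon
    push_neg at hcon
    have hsum : ∀ t : List Γ, (∀ y ∈ t, χ y ≤ 0) → (t.map χ).sum ≤ 0 := by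
      intro t
      induction t with
      | nil => simp
      | cons y r ih =>
        intro hyp
        simp only [List.map_cons, List.sum_cons]
        have h1 := hyp y List.mem_cons_self
        have h2 := ih (fun z hz => hyp z (List.mem_cons_of_mem y hz))
        linarith
    have : χ l.prod ≤ 0 := by
      rw [char_prod hχ]
      exact hsum l hcon
    rw [hp] at this
    linarith
  obtain ⟨y, hy, hy0⟩ := this
  exact ⟨y, hl y hy, hy0⟩


lemma group_props {S : Set (Equiv.Perm ℝ)} {a c : ℝ}
    (hS : ∀ σ ∈ S, StrictMono ⇑σ ∧ suppOf ⇑σ ⊆ Icc a c) :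
    ∀ u ∈ Subgroup.closure S, StrictMono ⇑u ∧ suppOf ⇑u ⊆ Icc a c := by
  intro u hu
  induction hu using Subgroup.closure_induction with
  | mem x hx => exact hS x hx
  | one =>
    constructor
    · intro x y hxy; simpa using hxy
    · intro t ht; simp [suppOf] at ht
  | mul x y hx hy ihx ihy =>
    constructor
    · have hco : ⇑(x * y) = ⇑x ∘ ⇑y := rfl
      rw [hco]; exact ihx.1.comp ihy.1
    · intro t ht
      by_cases h : y t = t
      · have hx : x t ≠ t := by
          intro hc; apply ht
          simp [Equiv.Perm.mul_apply, h, hc]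
        exact ihx.2 hx
      · exact ihy.2 h
  | inv x hx ihx =>
    refine ⟨strictMono_inv ihx.1, ?_⟩
    rw [supp_inv]; exact ihx.2

section main

variable {a a₀ c₀ c : ℝ} {H : Subgroup (Equiv.Perm ℝ)} {f : Equiv.Perm ℝ}

lemma connectivity
    (h1 : a < a₀) (h2 : a₀ < c₀) (h3 : c₀ < c)
    (hH : (H : Set (Equiv.Perm ℝ)) ⊆ PLo (Icc a₀ c₀))
    (hHirr : ∀ t : ℝ, a₀ < t → t < c₀ → ∃ g ∈ H, g t ≠ t)
    (hf : f ∈ PLo (Icc a c))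
    (hsupp : Ioc a a₀ ∪ Ico c₀ c ⊆ suppOf ⇑f)
    (G : Subgroup (Equiv.Perm ℝ))
    (hGdef : G = Subgroup.closure ((H : Set (Equiv.Perm ℝ)) ∪ {f}))
    (χ : ↥G → ℝ) (hχ : IsChar χ)
    (h₀ : ↥G)
    (hh₀H : (h₀ : Equiv.Perm ℝ) ∈ H) (hh₀pos : 0 < χ h₀)
    (X : Set ↥G)
    (hX : Subgroup.closure X = ⊤) :
    CayleyConnected X χ := by
  -- basic properties of all elements of G
  have hSgen : ∀ σ ∈ (H : Set (Equiv.Perm ℝ)) ∪ {f}, StrictMono ⇑σ ∧ suppOf ⇑σ ⊆ Icc a c := by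
    rintro σ (hσ | hσ)
    · refine ⟨(hH hσ).1, fun t ht => ?_⟩
      have := (hH hσ).2.2 ht
      exact ⟨le_trans (le_of_lt h1) this.1, le_trans this.2 (le_of_lt h3)⟩
    · rw [mem_singleton_iff] at hσ
      subst hσ
      exact ⟨hf.1, hf.2.2⟩
  have hGP : ∀ u : G, StrictMono ⇑(u : Equiv.Perm ℝ) ∧
      suppOf ⇑(u : Equiv.Perm ℝ) ⊆ Icc a c := fun u => group_props hSgen _ (hGdef ▸ u.2)
  have hGm : ∀ u : G, StrictMono ⇑(u : Equiv.Perm ℝ) := fun u => (hGP u).1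
  have hfix_a : ∀ u : G, (u : Equiv.Perm ℝ) a = a := by
    intro u
    apply fix_of_fix_below (hGm u)
    intro t ht
    by_contra hc
    exact absurd ((hGP u).2 hc).1 (not_le.mpr ht)
  have hfix_c : ∀ u : G, (u : Equiv.Perm ℝ) c = c := by
    intro u
    apply fix_of_fix_above (hGm u)
    intro t ht
    by_contra hc
    exact absurd ((hGP u).2 hc).2 (not_le.mpr ht)
  -- properties of elements of H
  have hHm : ∀ σ : Equiv.Perm ℝ, σ ∈ H → StrictMono ⇑σ := fun σ hσ => (hH hσ).1
  have hHfixa₀ : ∀ σ : Equiv.Perm ℝ, σ ∈ H → σ a₀ = a₀ := by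
    intro σ hσ
    apply fix_of_fix_below (hHm σ hσ)
    intro t ht
    by_contra hc
    exact absurd ((hH hσ).2.2 hc).1 (not_le.mpr ht)
  have hHfixc₀ : ∀ σ : Equiv.Perm ℝ, σ ∈ H → σ c₀ = c₀ := by
    intro σ hσ
    apply fix_of_fix_above (hHm σ hσ)
    intro t ht
    by_contra hc
    exact absurd ((hH hσ).2.2 hc).2 (not_le.mpr ht)
  have hHIoo : ∀ σ : Equiv.Perm ℝ, σ ∈ H → ∀ t ∈ Ioo a₀ c₀, σ t ∈ Ioo a₀ c₀ := by
    intro σ hσ t ht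
    constructor
    · have := hHm σ hσ ht.1
      rwa [hHfixa₀ σ hσ] at this
    · have := hHm σ hσ ht.2
      rwa [hHfixc₀ σ hσ] at this
  have HleG : ∀ σ : Equiv.Perm ℝ, σ ∈ H → σ ∈ G := by
    intro σ hσ
    rw [hGdef]
    exact Subgroup.subset_closure (Or.inl hσ)
  obtain ⟨fG, hfGcoe⟩ : ∃ fg : G, (fg : Equiv.Perm ℝ) = f :=
    ⟨⟨f, by rw [hGdef]; exact Subgroup.subset_closure (Or.inr rfl)⟩, rfl⟩
  have hfGinv : ((fG⁻¹ : G) : Equiv.Perm ℝ) = f⁻¹ := by rw [← hfGcoe]; rfl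
  -- the elements φ and ψ
  have hfc : Continuous ⇑f := continuous_of_strictMono hf.1
  have hφex : ∃ φ : G, ∀ t ∈ Ioc a a₀, (φ : Equiv.Perm ℝ) t < t := by
    rcases sign_dichotomy_Ioc h1 hfc (fun t ht h => hsupp (Or.inl ht) h) with hd | hd
    · exact ⟨fG, fun t ht => by rw [hfGcoe]; exact hd t ht⟩
    · refine ⟨fG⁻¹, fun t ht => ?_⟩
      rw [hfGinv]
      apply (hf.1.lt_iff_lt).mp
      rw [Equiv.Perm.apply_inv_self]
      exact hd t ht
  obtain ⟨φ, hφ⟩ := hφex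
  have hψex : ∃ ψ : G, ∀ t ∈ Ico c₀ c, t < (ψ : Equiv.Perm ℝ) t := by
    rcases sign_dichotomy_Ico h3 hfc (fun t ht h => hsupp (Or.inr ht) h) with hd | hd
    · refine ⟨fG⁻¹, fun t ht => ?_⟩
      rw [hfGinv]
      apply (hf.1.lt_iff_lt).mp
      rw [Equiv.Perm.apply_inv_self]
      exact hd t ht
    · exact ⟨fG, fun t ht => by rw [hfGcoe]; exact hd t ht⟩
  obtain ⟨ψ, hψ⟩ := hψex
  have hφa : (φ : Equiv.Perm ℝ) a = a := hfix_a φ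
  have happly_mul : ∀ (u v : G) (t : ℝ),
      ((u * v : G) : Equiv.Perm ℝ) t = (u : Equiv.Perm ℝ) ((v : Equiv.Perm ℝ) t) := by
    intro u v t
    rfl
  have happly_inv : ∀ (u : G) (t : ℝ),
      ((u⁻¹ : G) : Equiv.Perm ℝ) t = ((u : Equiv.Perm ℝ))⁻¹ t := fun u t => rfl
  -- φ⁻¹ pushes up on (a, a₀]
  have hφinv_gt : ∀ t ∈ Ioc a a₀, t < ((φ⁻¹ : G) : Equiv.Perm ℝ) t := by
    intro t ht
    rw [happly_inv]
    apply ((hGm φ).lt_iff_lt).mp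
    rw [Equiv.Perm.apply_inv_self]
    exact hφ t ht
  have hψinv_lt : ∀ t ∈ Ico c₀ c, ((ψ⁻¹ : G) : Equiv.Perm ℝ) t < t := by
    intro t ht
    rw [happly_inv]
    apply ((hGm ψ).lt_iff_lt).mp
    rw [Equiv.Perm.apply_inv_self]
    exact hψ t ht
  have hφIoc : ∀ t ∈ Ioc a a₀, (φ : Equiv.Perm ℝ) t ∈ Ioo a a₀ := by
    intro t ht
    constructor
    · have := hGm φ ht.1
      rwa [hφa] at this
    · exact lt_of_lt_of_le (hφ t ht) ht.2
  -- iterates of φ at a₀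
  have hupow : ∀ (v : G) (k : ℕ) (t : ℝ), ((v ^ (k+1) : G) : Equiv.Perm ℝ) t =
      (v : Equiv.Perm ℝ) (((v ^ k : G) : Equiv.Perm ℝ) t) := by
    intro v k t
    rw [pow_succ']
    rfl
  have hu0 : ∀ (v : G) (t : ℝ), ((v ^ 0 : G) : Equiv.Perm ℝ) t = t := by
    intro v t
    rw [pow_zero]
    rfl
  have hiter_mem : ∀ k : ℕ, ((φ ^ k : G) : Equiv.Perm ℝ) a₀ ∈ Ioc a a₀ := by
    intro k
    induction k with
    | zero => rw [hu0]; exact ⟨h1, le_refl _⟩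
    | succ n ih =>
      rw [hupow]
      exact Ioo_subset_Ioc_self (hφIoc _ ih)
  have hdeepk : ∀ β : ℝ, a < β → ∃ k : ℕ, ((φ ^ k : G) : Equiv.Perm ℝ) a₀ < β := by
    intro β hβ
    by_contra hcon
    push_neg at hcon
    have hbdd : BddBelow (range fun k : ℕ => ((φ ^ k : G) : Equiv.Perm ℝ) a₀) := by
      refine ⟨β, ?_⟩
      rintro x ⟨k, rfl⟩
      exact hcon k
    set L := ⨅ k : ℕ, ((φ ^ k : G) : Equiv.Perm ℝ) a₀ with hLdef
    have hLa : a < L := lt_of_lt_of_le hβ (le_ciInf hcon)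
    have hLa₀ : L ≤ a₀ := by
      have := ciInf_le hbdd 0
      rwa [hu0] at this
    have hstep : (φ : Equiv.Perm ℝ) L < L := hφ L ⟨hLa, hLa₀⟩
    have hLlt : L < ((φ⁻¹ : G) : Equiv.Perm ℝ) L := hφinv_gt L ⟨hLa, hLa₀⟩
    obtain ⟨k, hk⟩ := exists_lt_of_ciInf_lt (lt_of_le_of_lt (le_refl L) hLlt)
    have hk2 : ((φ ^ (k+1) : G) : Equiv.Perm ℝ) a₀ < L := by
      rw [hupow]
      have := hGm φ hk
      rwa [happly_inv φ L, Equiv.Perm.apply_inv_self] at this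
    exact absurd hk2 (not_lt.mpr (ciInf_le hbdd (k+1)))
  -- orbit lemmas
  have horb_low : ∀ t₁ ∈ Ioo a₀ c₀, ∀ γ : ℝ, a₀ < γ →
      ∃ σ : Equiv.Perm ℝ, σ ∈ H ∧ σ t₁ < γ := by
    intro t₁ ht₁ γ hγ
    by_contra hcon
    push_neg at hcon
    have hone : t₁ ∈ {s : ℝ | ∃ σ : Equiv.Perm ℝ, σ ∈ H ∧ σ t₁ = s} := ⟨1, H.one_mem, rfl⟩
    have hbdd : BddBelow {s : ℝ | ∃ σ : Equiv.Perm ℝ, σ ∈ H ∧ σ t₁ = s} := by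
      refine ⟨γ, ?_⟩
      rintro s ⟨σ, hσ, rfl⟩
      exact hcon σ hσ
    set ι := sInf {s : ℝ | ∃ σ : Equiv.Perm ℝ, σ ∈ H ∧ σ t₁ = s} with hιdef
    have hιb : γ ≤ ι := le_csInf ⟨t₁, hone⟩ (by rintro s ⟨σ, hσ, rfl⟩; exact hcon σ hσ)
    have hfixι : ∀ σ : Equiv.Perm ℝ, σ ∈ H → σ ι = ι := by
      intro σ hσ
      have hboth : ∀ τ : Equiv.Perm ℝ, τ ∈ H → τ ι ≤ ι := by
        intro τ hτ
        apply le_csInf ⟨t₁, hone⟩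
        rintro s ⟨ρ, hρ, rfl⟩
        have hmem : ι ≤ (τ⁻¹ * ρ) t₁ :=
          csInf_le hbdd ⟨τ⁻¹ * ρ, H.mul_mem (H.inv_mem hτ) hρ, rfl⟩
        rw [Equiv.Perm.mul_apply] at hmem
        have := (hHm τ hτ).monotone hmem
        rwa [Equiv.Perm.apply_inv_self] at this
      have h1' := hboth σ hσ
      have h2' := hboth σ⁻¹ (H.inv_mem hσ)
      have := (hHm σ hσ).monotone h2'
      rw [Equiv.Perm.apply_inv_self] at this
      linarith
    have hι1 : a₀ < ι := lt_of_lt_of_le hγ hιb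
    have hι2 : ι < c₀ := lt_of_le_of_lt (csInf_le hbdd hone) ht₁.2
    obtain ⟨σ, hσ, hne⟩ := hHirr ι hι1 hι2
    exact hne (hfixι σ hσ)
  have horb_high : ∀ t₁ ∈ Ioo a₀ c₀, ∀ γ : ℝ, γ < c₀ →
      ∃ σ : Equiv.Perm ℝ, σ ∈ H ∧ γ < σ t₁ := by
    intro t₁ ht₁ γ hγ
    by_contra hcon
    push_neg at hcon
    have hone : t₁ ∈ {s : ℝ | ∃ σ : Equiv.Perm ℝ, σ ∈ H ∧ σ t₁ = s} := ⟨1, H.one_mem, rfl⟩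
    have hbdd : BddAbove {s : ℝ | ∃ σ : Equiv.Perm ℝ, σ ∈ H ∧ σ t₁ = s} := by
      refine ⟨γ, ?_⟩
      rintro s ⟨σ, hσ, rfl⟩
      exact hcon σ hσ
    set ι := sSup {s : ℝ | ∃ σ : Equiv.Perm ℝ, σ ∈ H ∧ σ t₁ = s} with hιdef
    have hιb : ι ≤ γ := csSup_le ⟨t₁, hone⟩ (by rintro s ⟨σ, hσ, rfl⟩; exact hcon σ hσ)
    have hfixι : ∀ σ : Equiv.Perm ℝ, σ ∈ H → σ ι = ι := by
      intro σ hσ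
      have hboth : ∀ τ : Equiv.Perm ℝ, τ ∈ H → ι ≤ τ ι := by
        intro τ hτ
        apply csSup_le ⟨t₁, hone⟩
        rintro s ⟨ρ, hρ, rfl⟩
        have hmem : (τ⁻¹ * ρ) t₁ ≤ ι :=
          le_csSup hbdd ⟨τ⁻¹ * ρ, H.mul_mem (H.inv_mem hτ) hρ, rfl⟩
        rw [Equiv.Perm.mul_apply] at hmem
        have := (hHm τ hτ).monotone hmem
        rwa [Equiv.Perm.apply_inv_self] at this
      have h1' := hboth σ hσ
      have h2' := hboth σ⁻¹ (H.inv_mem hσ)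
      have := (hHm σ hσ).monotone h2'
      rw [Equiv.Perm.apply_inv_self] at this
      linarith
    have hι2 : ι < c₀ := lt_of_le_of_lt hιb hγ
    have hι1 : a₀ < ι := lt_of_lt_of_le ht₁.1 (le_csSup hbdd hone)
    obtain ⟨σ, hσ, hne⟩ := hHirr ι hι1 hι2
    exact hne (hfixι σ hσ)
  -- deep corner elements
  have hdeep : ∀ β : ℝ, a < β → β ≤ a₀ → ∃ v : G, (v : Equiv.Perm ℝ) c₀ < β := by
    intro β hβ hβ'
    have ht₁lt : ((ψ⁻¹ : G) : Equiv.Perm ℝ) c₀ < c₀ := hψinv_lt c₀ ⟨le_refl _, h3⟩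
    rcases le_or_gt (((ψ⁻¹ : G) : Equiv.Perm ℝ) c₀) a₀ with hcase | hcase
    · obtain ⟨k, hk⟩ := hdeepk β hβ
      refine ⟨φ ^ k * ψ⁻¹, ?_⟩
      rw [happly_mul]
      calc ((φ^k : G) : Equiv.Perm ℝ) (((ψ⁻¹:G) : Equiv.Perm ℝ) c₀)
          ≤ ((φ^k : G) : Equiv.Perm ℝ) a₀ := (hGm (φ^k)).monotone hcase
        _ < β := hk
    · have ht₁c₀ : ((ψ⁻¹ : G) : Equiv.Perm ℝ) c₀ ∈ Ioo a₀ c₀ := ⟨hcase, ht₁lt⟩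
      have hφinva₀ : a₀ < ((φ⁻¹ : G) : Equiv.Perm ℝ) a₀ := hφinv_gt a₀ ⟨h1, le_refl _⟩
      obtain ⟨σ, hσ, hσlt⟩ := horb_low _ ht₁c₀ (min (((φ⁻¹:G) : Equiv.Perm ℝ) a₀) c₀)
        (lt_min hφinva₀ h2)
      have hσmem := hHIoo σ hσ _ ht₁c₀
      have ht₂lt : (φ : Equiv.Perm ℝ) (σ (((ψ⁻¹:G) : Equiv.Perm ℝ) c₀)) < a₀ := by
        have hlt : σ (((ψ⁻¹:G) : Equiv.Perm ℝ) c₀) < ((φ⁻¹:G) : Equiv.Perm ℝ) a₀ :=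
          lt_of_lt_of_le hσlt (min_le_left _ _)
        have := hGm φ hlt
        rwa [happly_inv φ a₀, Equiv.Perm.apply_inv_self] at this
      obtain ⟨k, hk⟩ := hdeepk β hβ
      refine ⟨φ ^ k * (φ * (⟨σ, HleG σ hσ⟩ * ψ⁻¹)), ?_⟩
      rw [happly_mul, happly_mul, happly_mul]
      calc ((φ^k : G) : Equiv.Perm ℝ) ((φ : Equiv.Perm ℝ)
            (σ (((ψ⁻¹:G) : Equiv.Perm ℝ) c₀)))
          ≤ ((φ^k : G) : Equiv.Perm ℝ) a₀ := (hGm (φ^k)).monotone (le_of_lt ht₂lt)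
        _ < β := hk
  -- right corner element
  have hright : ∃ w₀ : G, c₀ < (w₀ : Equiv.Perm ℝ) a₀ := by
    have ht₁gt : a₀ < ((φ⁻¹ : G) : Equiv.Perm ℝ) a₀ := hφinv_gt a₀ ⟨h1, le_refl _⟩
    rcases lt_or_ge c₀ (((φ⁻¹ : G) : Equiv.Perm ℝ) a₀) with hcase | hcase
    · exact ⟨φ⁻¹, hcase⟩
    · rcases eq_or_lt_of_le hcase with heq | hlt
      · refine ⟨ψ * φ⁻¹, ?_⟩
        rw [happly_mul, heq]
        exact hψ c₀ ⟨le_refl _, h3⟩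
      · have ht₁mem : ((φ⁻¹ : G) : Equiv.Perm ℝ) a₀ ∈ Ioo a₀ c₀ := ⟨ht₁gt, hlt⟩
        have hψinvc₀ : ((ψ⁻¹ : G) : Equiv.Perm ℝ) c₀ < c₀ := hψinv_lt c₀ ⟨le_refl _, h3⟩
        obtain ⟨σ, hσ, hσgt⟩ := horb_high _ ht₁mem (max (((ψ⁻¹:G) : Equiv.Perm ℝ) c₀) a₀)
          (max_lt hψinvc₀ h2)
        refine ⟨ψ * (⟨σ, HleG σ hσ⟩ * φ⁻¹), ?_⟩
        rw [happly_mul, happly_mul]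
        have hgt : ((ψ⁻¹:G) : Equiv.Perm ℝ) c₀ < σ (((φ⁻¹:G) : Equiv.Perm ℝ) a₀) :=
          lt_of_le_of_lt (le_max_left _ _) hσgt
        have := hGm ψ hgt
        rwa [happly_inv ψ c₀, Equiv.Perm.apply_inv_self] at this
  -- characters of conjugates
  set s₀ := χ h₀ with hs₀def
  have hχconj : ∀ (w : G) (j : ℕ), χ (w * h₀ ^ j * w⁻¹) = j * s₀ := by
    intro w j
    rw [char_conj hχ, char_pow hχ]
  have hh₀supp : suppOf ⇑(h₀ : Equiv.Perm ℝ) ⊆ Icc a₀ c₀ := (hH hh₀H).2.2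
  have hconj_supp : ∀ (w : G) (j : ℕ),
      suppOf ⇑((w * h₀ ^ j * w⁻¹ : G) : Equiv.Perm ℝ) ⊆
        Icc ((w : Equiv.Perm ℝ) a₀) ((w : Equiv.Perm ℝ) c₀) := by
    intro w j t ht
    have hcoe : ((w * h₀ ^ j * w⁻¹ : G) : Equiv.Perm ℝ)
        = (w : Equiv.Perm ℝ) * ((h₀ : Equiv.Perm ℝ)) ^ j * ((w : Equiv.Perm ℝ))⁻¹ := by
      push_cast
      rfl
    rw [hcoe, mem_supp_conj] at ht
    have hmem : ((w : Equiv.Perm ℝ))⁻¹ t ∈ Icc a₀ c₀ := hh₀supp (supp_pow _ j ht)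
    constructor
    · have := (hGm w).monotone hmem.1
      rwa [Equiv.Perm.apply_inv_self] at this
    · have := (hGm w).monotone hmem.2
      rwa [Equiv.Perm.apply_inv_self] at this
  have hgencomm : ∀ (z p : G) (α β γ δ : ℝ), suppOf ⇑(z : Equiv.Perm ℝ) ⊆ Icc α β →
      suppOf ⇑(p : Equiv.Perm ℝ) ⊆ Icc γ δ → (β < γ ∨ δ < α) →
      p⁻¹ * z * p = z := by
    intro z p α β γ δ hz hp hdis
    have hc : (z : Equiv.Perm ℝ) * (p : Equiv.Perm ℝ)
        = (p : Equiv.Perm ℝ) * (z : Equiv.Perm ℝ) := by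
      apply commute_of_disjoint_supp
      intro t htz htp
      have hb1 := hz htz
      have hb2 := hp htp
      rcases hdis with h | h
      · linarith [hb1.2, hb2.1]
      · linarith [hb1.1, hb2.2]
    have hzp : z * p = p * z := Subtype.ext (by rw [Subgroup.coe_mul, Subgroup.coe_mul]; exact hc)
    rw [mul_assoc, hzp, ← mul_assoc, inv_mul_cancel, one_mul]
  -- words and letters
  have hword : ∀ g : G, ∃ l : List G, (∀ y ∈ l, IsLetter X y) ∧ l.prod = g := exists_word hX
  obtain ⟨y₁, hy₁L, hy₁pos⟩ := exists_pos_letter hχ hX hh₀pos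
  obtain ⟨l₀, hl₀L, hl₀p⟩ := hword h₀
  obtain ⟨d₀, hd₀0, hd₀⟩ := exists_valley χ 1 l₀
  obtain ⟨m₁, hm₁⟩ := Archimedean.arch (-d₀) hy₁pos
  rw [nsmul_eq_mul] at hm₁
  set Y := y₁ ^ m₁ with hYdef
  -- the seed family is connected to 1
  have hseed : ∀ K : ℕ, conn X χ 1 (Y * h₀ ^ K * Y⁻¹) := by
    intro K
    set l := List.replicate m₁ y₁ ++ (powList l₀ K ++ List.replicate m₁ y₁⁻¹) with hldef
    have hlet : ∀ y ∈ l, IsLetter X y := by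
      intro y hy
      rw [hldef] at hy
      simp only [List.mem_append, List.mem_replicate] at hy
      rcases hy with h | h | h
      · rw [h.2]; exact hy₁L
      · exact hl₀L y (powList_mem h)
      · rw [h.2]; exact hy₁L.inv
    have hval : valley χ 0 1 l := by
      rw [hldef, valley_append]
      constructor
      · apply valley_replicate hχ
        intro i hi
        rw [one_mul, char_pow hχ]
        positivity
      · rw [List.prod_replicate, valley_append]
        constructor
        · have hv1 : valley χ d₀ 1 (powList l₀ K) :=
            valley_powList hχ hd₀ hd₀0 (by rw [hl₀p]; exact le_of_lt hh₀pos) K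
          have hv2 := valley_translate hχ (y₁ ^ m₁) hv1
          rw [mul_one] at hv2
          rw [one_mul]
          apply valley_mono _ hv2
          rw [char_pow hχ]
          linarith
        · rw [powList_prod, hl₀p, one_mul]
          apply valley_replicate hχ
          intro i hi
          rw [hχ (y₁ ^ m₁ * h₀ ^ K) ((y₁⁻¹) ^ i), hχ (y₁ ^ m₁) (h₀ ^ K),
            char_pow hχ, char_pow hχ, char_pow hχ, char_inv hχ]
          have hK : (0:ℝ) ≤ (K:ℝ) * χ h₀ := mul_nonneg (Nat.cast_nonneg K) (le_of_lt hh₀pos)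
          have hmi : (i:ℝ) * χ y₁ ≤ (m₁:ℝ) * χ y₁ := by
            apply mul_le_mul_of_nonneg_right _ (le_of_lt hy₁pos)
            exact_mod_cast hi
          linarith
    have hprod : l.prod = Y * h₀ ^ K * Y⁻¹ := by
      rw [hldef, List.prod_append, List.prod_append, List.prod_replicate, List.prod_replicate,
        powList_prod, hl₀p, inv_pow, hYdef]
      exact (mul_assoc _ _ _).symm
    have hc := conn_of_valley hlet hval
    rwa [one_mul, hprod] at hc
  -- producing members of InD
  have hInD_of_partner : ∀ (w : G) (α β : ℝ),
      (∀ V : ℝ, ∃ z : G, conn X χ 1 z ∧ V ≤ χ z ∧ suppOf ⇑(z : Equiv.Perm ℝ) ⊆ Icc α β) →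
      (β < (w : Equiv.Perm ℝ) a₀ ∨ (w : Equiv.Perm ℝ) c₀ < α) →
      ∀ j : ℕ, 1 ≤ j → conn X χ 1 (w * h₀ ^ j * w⁻¹) := by
    intro w α β hP hdis j hj
    obtain ⟨lw, hlwL, hlwp⟩ := hword w
    obtain ⟨dw, hdw0, hdw⟩ := exists_valley χ 1 lw
    set E := min dw (min (χ w + d₀) (s₀ + dw)) with hEdef
    obtain ⟨z, hzC, hzval, hzsupp⟩ := hP (-E)
    apply key_lemma hχ (z := z)
    · rw [hχconj]
      exact mul_nonneg (Nat.cast_nonneg j) (le_of_lt hh₀pos)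
    · exact hzC
    · have heq : (w * h₀ ^ j * w⁻¹)⁻¹ * z * (w * h₀ ^ j * w⁻¹) = z :=
        hgencomm z _ α β ((w : Equiv.Perm ℝ) a₀) ((w : Equiv.Perm ℝ) c₀) hzsupp
          (hconj_supp w j) hdis
      rw [heq]; exact hzC
    · refine ⟨lw ++ (powList l₀ j ++ invList lw), ?_, ?_, ?_⟩
      · intro y hy
        simp only [List.mem_append] at hy
        rcases hy with h | h | h
        · exact hlwL y h
        · exact hl₀L y (powList_mem h)
        · obtain ⟨x, hx, hyx⟩ := invList_mem h
          rw [hyx]; exact (hlwL x hx).inv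
      · rw [List.prod_append, List.prod_append, powList_prod, hl₀p, invList_prod, hlwp]
        exact (mul_assoc _ _ _).symm
      · apply valley_mono (show -χ z ≤ E by linarith)
        rw [valley_append]
        constructor
        · exact valley_mono (min_le_left _ _) hdw
        · rw [valley_append]
          constructor
          · rw [hlwp, one_mul]
            have hv1 : valley χ d₀ 1 (powList l₀ j) :=
              valley_powList hχ hd₀ hd₀0 (by rw [hl₀p]; exact le_of_lt hh₀pos) j
            have hv2 := valley_translate hχ w hv1
            rw [mul_one] at hv2
            apply valley_mono _ hv2
            have hE1 := min_le_right dw (min (χ w + d₀) (s₀ + dw))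
            have hE2 := min_le_left (χ w + d₀) (s₀ + dw)
            linarith
          · rw [hlwp, powList_prod, hl₀p, one_mul]
            have hv3 := valley_invList hχ hdw (w * h₀ ^ j)
            rw [hlwp, char_one hχ] at hv3
            apply valley_mono _ hv3
            rw [hχ w (h₀ ^ j), char_pow hχ]
            have hjs : (1:ℝ) * s₀ ≤ (j:ℝ) * s₀ := by
              apply mul_le_mul_of_nonneg_right _ (le_of_lt hh₀pos)
              exact_mod_cast hj
            have hE1 := min_le_right dw (min (χ w + d₀) (s₀ + dw))
            have hE2 := min_le_right (χ w + d₀) (s₀ + dw)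
            linarith
  -- partner from InD family
  have hPartner_of_InD : ∀ v : G, (∀ j : ℕ, 1 ≤ j → conn X χ 1 (v * h₀ ^ j * v⁻¹)) →
      ∀ V : ℝ, ∃ z : G, conn X χ 1 z ∧ V ≤ χ z ∧
        suppOf ⇑(z : Equiv.Perm ℝ) ⊆ Icc ((v : Equiv.Perm ℝ) a₀) ((v : Equiv.Perm ℝ) c₀) := by
    intro v hv V
    obtain ⟨j, hj⟩ := Archimedean.arch V hh₀pos
    rw [nsmul_eq_mul] at hj
    refine ⟨v * h₀ ^ (j + 1) * v⁻¹, hv (j + 1) (by omega), ?_, hconj_supp v (j + 1)⟩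
    rw [hχconj]
    push_cast
    nlinarith [hh₀pos]
  have hseedPartner : ∀ V : ℝ, ∃ z : G, conn X χ 1 z ∧ V ≤ χ z ∧
      suppOf ⇑(z : Equiv.Perm ℝ) ⊆ Icc ((Y : Equiv.Perm ℝ) a₀) ((Y : Equiv.Perm ℝ) c₀) := by
    intro V
    obtain ⟨j, hj⟩ := Archimedean.arch V hh₀pos
    rw [nsmul_eq_mul] at hj
    refine ⟨Y * h₀ ^ (j + 1) * Y⁻¹, hseed (j + 1), ?_, hconj_supp Y (j + 1)⟩
    rw [hχconj]
    push_cast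
    nlinarith [hh₀pos]
  -- the chain of InD elements
  have hYa : a < (Y : Equiv.Perm ℝ) a₀ := by
    have := hGm Y h1
    rwa [hfix_a Y] at this
  obtain ⟨v₀, hv₀⟩ := hdeep (min ((Y : Equiv.Perm ℝ) a₀) a₀) (lt_min hYa h1) (min_le_right _ _)
  have hv₀D : ∀ j : ℕ, 1 ≤ j → conn X χ 1 (v₀ * h₀ ^ j * v₀⁻¹) :=
    hInD_of_partner v₀ _ _ hseedPartner
      (Or.inr (lt_of_lt_of_le hv₀ (min_le_left _ _)))
  obtain ⟨w₀, hw₀⟩ := hright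
  have hv₀c₀ : (v₀ : Equiv.Perm ℝ) c₀ < a₀ := lt_of_lt_of_le hv₀ (min_le_right _ _)
  have hw₀D : ∀ j : ℕ, 1 ≤ j → conn X χ 1 (w₀ * h₀ ^ j * w₀⁻¹) :=
    hInD_of_partner w₀ _ _ (hPartner_of_InD v₀ hv₀D) (Or.inl (by linarith))
  have hdeepD : ∀ β : ℝ, a < β → β ≤ a₀ → ∃ v : G, (v : Equiv.Perm ℝ) c₀ < β ∧
      ∀ j : ℕ, 1 ≤ j → conn X χ 1 (v * h₀ ^ j * v⁻¹) := by
    intro β hβ hβ'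
    obtain ⟨v, hv⟩ := hdeep β hβ hβ'
    exact ⟨v, hv, hInD_of_partner v _ _ (hPartner_of_InD w₀ hw₀D) (Or.inr (by linarith))⟩
  have hInD_all : ∀ w : G, ∀ j : ℕ, 1 ≤ j → conn X χ 1 (w * h₀ ^ j * w⁻¹) := by
    intro w
    have hwa : a < (w : Equiv.Perm ℝ) a₀ := by
      have := hGm w h1
      rwa [hfix_a w] at this
    obtain ⟨v, hvlt, hvD⟩ := hdeepD (min ((w : Equiv.Perm ℝ) a₀) a₀) (lt_min hwa h1)
      (min_le_right _ _)
    exact hInD_of_partner w _ _ (hPartner_of_InD v hvD)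
      (Or.inl (lt_of_lt_of_le hvlt (min_le_left _ _)))
  -- every nonnegative element is connected to 1
  have hmain : ∀ g : G, 0 ≤ χ g → conn X χ 1 g := by
    intro g hg
    obtain ⟨lg, hlgL, hlgp⟩ := hword g
    obtain ⟨dg, hdg0, hdg⟩ := exists_valley χ 1 lg
    obtain ⟨j', hj'⟩ := Archimedean.arch (-dg) hh₀pos
    rw [nsmul_eq_mul] at hj'
    apply key_lemma hχ (z := g * h₀ ^ (j' + 1) * g⁻¹) hg
    · exact hInD_all g (j' + 1) (by omega)
    · have hrw : g⁻¹ * (g * h₀ ^ (j' + 1) * g⁻¹) * g = h₀ ^ (j' + 1) := by group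
      rw [hrw]
      have := hInD_all 1 (j' + 1) (by omega)
      rwa [one_mul, inv_one, mul_one] at this
    · refine ⟨lg, hlgL, hlgp, ?_⟩
      apply valley_mono _ hdg
      rw [hχconj]
      push_cast
      nlinarith [hh₀pos]
  intro g h hg hh
  exact conn_trans (conn_symm (hmain g hg)) (hmain h hh)

lemma affine_inv_right {f : Equiv.Perm ℝ} {a δ m : ℝ} (hδ : 0 < δ) (hm : 0 < m)
    (h : ∀ u ∈ Ico a (a + δ), f u = m * (u - a) + a) :
    ∀ u ∈ Ico a (a + m * δ), f⁻¹ u = m⁻¹ * (u - a) + a := by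
  intro u hu
  have hv : m⁻¹ * (u - a) + a ∈ Ico a (a + δ) := by
    constructor
    · have : 0 ≤ m⁻¹ * (u - a) := mul_nonneg (by positivity) (by linarith [hu.1])
      linarith
    · have h2 := hu.2
      have h3 : m⁻¹ * (u - a) < m⁻¹ * (m * δ) := by
        apply mul_lt_mul_of_pos_left _ (by positivity)
        linarith
      rw [inv_mul_cancel_left₀ (ne_of_gt hm)] at h3
      linarith
  have hfv : f (m⁻¹ * (u - a) + a) = u := by
    rw [h _ hv]
    field_simp
    ring
  calc f⁻¹ u = f⁻¹ (f (m⁻¹ * (u - a) + a)) := by rw [hfv]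
  _ = _ := f.inv_apply_self _

lemma affine_inv_left {f : Equiv.Perm ℝ} {c δ m : ℝ} (hδ : 0 < δ) (hm : 0 < m)
    (h : ∀ u ∈ Ioc (c - δ) c, f u = m * (u - c) + c) :
    ∀ u ∈ Ioc (c - m * δ) c, f⁻¹ u = m⁻¹ * (u - c) + c := by
  intro u hu
  have hv : m⁻¹ * (u - c) + c ∈ Ioc (c - δ) c := by
    constructor
    · have h2 := hu.1
      have h3 : m⁻¹ * (c - m * δ - c) < m⁻¹ * (u - c) := by
        apply mul_lt_mul_of_pos_left _ (by positivity)
        linarith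
      have h4 : m⁻¹ * (c - m * δ - c) = -δ := by field_simp; ring
      rw [h4] at h3
      linarith
    · have : m⁻¹ * (u - c) ≤ 0 :=
        mul_nonpos_of_nonneg_of_nonpos (by positivity) (by linarith [hu.2])
      linarith
  have hfv : f (m⁻¹ * (u - c) + c) = u := by
    rw [h _ hv]
    field_simp
    ring
  calc f⁻¹ u = f⁻¹ (f (m⁻¹ * (u - c) + c)) := by rw [hfv]
  _ = _ := f.inv_apply_self _

lemma part_one
    (h1 : a < a₀) (h2 : a₀ < c₀) (h3 : c₀ < c)
    (hH : (H : Set (Equiv.Perm ℝ)) ⊆ PLo (Icc a₀ c₀))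
    (hHirr : ∀ t : ℝ, a₀ < t → t < c₀ → ∃ g ∈ H, g t ≠ t)
    (hf : f ∈ PLo (Icc a c))
    (hsupp : Ioc a a₀ ∪ Ico c₀ c ⊆ suppOf ⇑f)
    (G : Subgroup (Equiv.Perm ℝ))
    (hGdef : G = Subgroup.closure ((H : Set (Equiv.Perm ℝ)) ∪ {f})) :
    (∃ g : ↥G, chiL G a g ≠ 0) ∧ ¬ MemSigma1 (chiL G a) := by
  have hSgen : ∀ σ ∈ (H : Set (Equiv.Perm ℝ)) ∪ {f}, StrictMono ⇑σ ∧ suppOf ⇑σ ⊆ Icc a c := by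
    rintro σ (hσ | hσ)
    · refine ⟨(hH hσ).1, fun t ht => ?_⟩
      have := (hH hσ).2.2 ht
      exact ⟨le_trans (le_of_lt h1) this.1, le_trans this.2 (le_of_lt h3)⟩
    · rw [mem_singleton_iff] at hσ
      subst hσ
      exact ⟨hf.1, hf.2.2⟩
  have hGP : ∀ u : G, StrictMono ⇑(u : Equiv.Perm ℝ) ∧
      suppOf ⇑(u : Equiv.Perm ℝ) ⊆ Icc a c := fun u => group_props hSgen _ (hGdef ▸ u.2)
  have hGm : ∀ u : G, StrictMono ⇑(u : Equiv.Perm ℝ) := fun u => (hGP u).1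
  have hfix_a : ∀ u : G, (u : Equiv.Perm ℝ) a = a := by
    intro u
    apply fix_of_fix_below (hGm u)
    intro t ht
    by_contra hc
    exact absurd ((hGP u).2 hc).1 (not_le.mpr ht)
  have HleG : ∀ σ : Equiv.Perm ℝ, σ ∈ H → σ ∈ G := by
    intro σ hσ
    rw [hGdef]
    exact Subgroup.subset_closure (Or.inl hσ)
  obtain ⟨fG, hfGcoe⟩ : ∃ fg : G, (fg : Equiv.Perm ℝ) = f :=
    ⟨⟨f, by rw [hGdef]; exact Subgroup.subset_closure (Or.inr rfl)⟩, rfl⟩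
  have hfGinv : ((fG⁻¹ : G) : Equiv.Perm ℝ) = f⁻¹ := by rw [← hfGcoe]; rfl
  have hfc : Continuous ⇑f := continuous_of_strictMono hf.1
  have hfa : f a = a := by
    have := hfix_a fG
    rwa [hfGcoe] at this
  obtain ⟨δf, mf, hδf, hmf, hfaff⟩ := exists_affine_right hf.1 hf.2.1 hfa
  -- the contracting generator φ and its slope
  have hφex : ∃ φ : G, (φ = fG ∨ φ = fG⁻¹) ∧ (∀ t ∈ Ioc a a₀, (φ : Equiv.Perm ℝ) t < t) ∧
      ∃ δ m : ℝ, 0 < δ ∧ 0 < m ∧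
        ∀ u ∈ Ico a (a + δ), (φ : Equiv.Perm ℝ) u = m * (u - a) + a := by
    rcases sign_dichotomy_Ioc h1 hfc (fun t ht h => hsupp (Or.inl ht) h) with hd | hd
    · refine ⟨fG, Or.inl rfl, fun t ht => by rw [hfGcoe]; exact hd t ht,
        δf, mf, hδf, hmf, fun u hu => by rw [hfGcoe]; exact hfaff u hu⟩
    · refine ⟨fG⁻¹, Or.inr rfl, fun t ht => ?_, mf * δf, mf⁻¹, by positivity, by positivity,
        fun u hu => by rw [hfGinv]; exact affine_inv_right hδf hmf hfaff u hu⟩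
      rw [hfGinv]
      apply (hf.1.lt_iff_lt).mp
      rw [Equiv.Perm.apply_inv_self]
      exact hd t ht
  obtain ⟨φ, hφf, hφ, δφ, mφ, hδφ, hmφ, hφaff⟩ := hφex
  have hφa : (φ : Equiv.Perm ℝ) a = a := hfix_a φ
  have happly_mul : ∀ (u v : G) (t : ℝ),
      ((u * v : G) : Equiv.Perm ℝ) t = (u : Equiv.Perm ℝ) ((v : Equiv.Perm ℝ) t) :=
    fun u v t => rfl
  have happly_inv : ∀ (u : G) (t : ℝ),
      ((u⁻¹ : G) : Equiv.Perm ℝ) t = ((u : Equiv.Perm ℝ))⁻¹ t := fun u t => rfl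
  have hslopeφ : rightSlope ⇑(φ : Equiv.Perm ℝ) a = mφ := rightSlope_of_affine hδφ hφaff
  have hmφlt : mφ < 1 := by
    set t := a + min δφ (a₀ - a) / 2 with htdef
    have ht1 : t ∈ Ico a (a + δφ) := by
      constructor
      · have : 0 < min δφ (a₀ - a) := lt_min hδφ (by linarith)
        rw [htdef]; linarith
      · have := min_le_left δφ (a₀ - a)
        rw [htdef]; linarith [hδφ]
    have ht2 : t ∈ Ioc a a₀ := by
      constructor
      · have : 0 < min δφ (a₀ - a) := lt_min hδφ (by linarith)
        rw [htdef]; linarith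
      · have := min_le_right δφ (a₀ - a)
        rw [htdef]; linarith
    have hlt := hφ t ht2
    rw [hφaff t ht1] at hlt
    have hta : 0 < t - a := by
      have : 0 < min δφ (a₀ - a) := lt_min hδφ (by linarith)
      rw [htdef]; linarith
    nlinarith
  have hchiφ : chiL G a φ < 0 := by
    show Real.log (rightSlope ⇑(φ : Equiv.Perm ℝ) a) < 0
    rw [hslopeφ]
    exact Real.log_neg hmφ hmφlt
  refine ⟨⟨φ, ne_of_lt hchiφ⟩, ?_⟩
  -- now the negation of MemSigma1
  intro hMS
  set Xbad : Set ↥G := {g : ↥G | (g : Equiv.Perm ℝ) ∈ H ∨ g = fG} with hXdef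
  have hXgen : Subgroup.closure Xbad = ⊤ := by
    have hle : G ≤ (Subgroup.closure Xbad).map G.subtype := by
      conv_lhs => rw [hGdef]
      rw [Subgroup.closure_le]
      rintro σ (hσ | hσ)
      · exact ⟨⟨σ, HleG σ hσ⟩, Subgroup.subset_closure (Or.inl hσ), rfl⟩
      · rw [mem_singleton_iff] at hσ
        subst hσ
        exact ⟨fG, Subgroup.subset_closure (Or.inr rfl), hfGcoe⟩
    rw [eq_top_iff]
    intro g _
    obtain ⟨g', hg', hgg'⟩ := hle g.2
    have : g' = g := Subtype.ext hgg'
    rwa [← this]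
  -- the moved point t₀ and the element gstar
  have hφinva₀ : a₀ < ((φ⁻¹ : G) : Equiv.Perm ℝ) a₀ := by
    rw [happly_inv]
    apply ((hGm φ).lt_iff_lt).mp
    rw [Equiv.Perm.apply_inv_self]
    exact hφ a₀ ⟨h1, le_refl _⟩
  set t₀ := (a₀ + min (((φ⁻¹ : G) : Equiv.Perm ℝ) a₀) c₀) / 2 with ht₀def
  have ht₀gt : a₀ < t₀ := by
    have := lt_min hφinva₀ h2
    rw [ht₀def]; linarith
  have ht₀lt : t₀ < min (((φ⁻¹ : G) : Equiv.Perm ℝ) a₀) c₀ := by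
    have := lt_min hφinva₀ h2
    rw [ht₀def]; linarith
  obtain ⟨σs, hσsH, hσsne⟩ := hHirr t₀ ht₀gt (lt_of_lt_of_le ht₀lt (min_le_right _ _))
  set hstar : ↥G := ⟨σs, HleG σs hσsH⟩ with hstardef
  set gstar : ↥G := φ * hstar * φ⁻¹ with hgstardef
  have hφt₀a₀ : (φ : Equiv.Perm ℝ) t₀ < a₀ := by
    have h5 : t₀ < ((φ⁻¹ : ↥G) : Equiv.Perm ℝ) a₀ := lt_of_lt_of_le ht₀lt (min_le_left _ _)
    have := hGm φ h5
    rwa [happly_inv φ a₀, Equiv.Perm.apply_inv_self] at this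
  have hφt₀a : a < (φ : Equiv.Perm ℝ) t₀ := by
    have := hGm φ (lt_trans h1 ht₀gt)
    rwa [hφa] at this
  have hgstar_fix : ∀ t : ℝ, t < (φ : Equiv.Perm ℝ) a₀ → (gstar : Equiv.Perm ℝ) t = t := by
    intro t ht
    by_contra hne
    have hsupp' : ((φ : Equiv.Perm ℝ))⁻¹ t ∈ suppOf ⇑σs := by
      have hcoe : (gstar : Equiv.Perm ℝ) =
          (φ : Equiv.Perm ℝ) * σs * ((φ : Equiv.Perm ℝ))⁻¹ := rfl
      rw [hcoe] at hne
      exact mem_supp_conj.mp hne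
    have hb := ((hH hσsH).2.2 hsupp').1
    have := (hGm φ).monotone hb
    rw [Equiv.Perm.apply_inv_self] at this
    linarith
  have hchi1 : chiL G a (1 : ↥G) = 0 := by
    show Real.log (rightSlope ⇑((1 : ↥G) : Equiv.Perm ℝ) a) = 0
    rw [rightSlope_one_of_fix (g := ⇑((1 : ↥G) : Equiv.Perm ℝ)) h1 (fun u _ => rfl)]
    exact Real.log_one
  have hchig : chiL G a gstar = 0 := by
    show Real.log (rightSlope ⇑((gstar : ↥G) : Equiv.Perm ℝ) a) = 0
    have hlt : a < (φ : Equiv.Perm ℝ) a₀ := by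
      have := hGm φ h1; rwa [hφa] at this
    rw [rightSlope_one_of_fix hlt (fun u hu => hgstar_fix u hu.2)]
    exact Real.log_one
  have hconn := hMS Xbad hXgen 1 gstar (by rw [hchi1]) (by rw [hchig])
  have hupow : ∀ (v : ↥G) (k : ℕ) (t : ℝ), ((v ^ (k+1) : ↥G) : Equiv.Perm ℝ) t =
      (v : Equiv.Perm ℝ) (((v ^ k : ↥G) : Equiv.Perm ℝ) t) := by
    intro v k t; rw [pow_succ']; rfl
  have hu0 : ∀ (v : ↥G) (t : ℝ), ((v ^ 0 : ↥G) : Equiv.Perm ℝ) t = t := by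
    intro v t; rw [pow_zero]; rfl
  have hφIoo : ∀ t ∈ Ioo a a₀, (φ : Equiv.Perm ℝ) t ∈ Ioo a a₀ := by
    intro t ht
    constructor
    · have := hGm φ ht.1; rwa [hφa] at this
    · exact lt_trans (hφ t ⟨ht.1, le_of_lt ht.2⟩) ht.2
  have hiterIoo : ∀ (k : ℕ), ∀ t ∈ Ioo a a₀, ((φ ^ k : ↥G) : Equiv.Perm ℝ) t ∈ Ioo a a₀ := by
    intro k
    induction k with
    | zero => intro t ht; rw [hu0]; exact ht
    | succ n ih => intro t ht; rw [hupow]; exact hφIoo _ (ih t ht)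
  have hiter_le : ∀ (k : ℕ), ∀ t ∈ Ioo a a₀, ((φ ^ k : ↥G) : Equiv.Perm ℝ) t ≤ t := by
    intro k
    induction k with
    | zero => intro t ht; rw [hu0]
    | succ n ih =>
      intro t ht
      rw [hupow]
      have hmem := hiterIoo n t ht
      have := hφ _ ⟨hmem.1, le_of_lt hmem.2⟩
      linarith [ih t ht]
  have hHfixlow : ∀ (y : ↥G), ((y : Equiv.Perm ℝ) ∈ H) → ∀ t : ℝ, t < a₀ →
      (y : Equiv.Perm ℝ) t = t := by
    intro y hy t ht
    by_contra hne
    exact absurd ((hH hy).2.2 hne).1 (not_le.mpr ht)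
  have hPpres : ∀ u v : ↥G,
      (0 ≤ chiL G a u ∧ 0 ≤ chiL G a v ∧ ∃ x ∈ Xbad, v = u * x ∨ u = v * x) →
      (∃ n : ℕ, ∀ t ∈ Ioo a a₀, ((u * φ ^ n : ↥G) : Equiv.Perm ℝ) t = t) →
      (∃ n : ℕ, ∀ t ∈ Ioo a a₀, ((v * φ ^ n : ↥G) : Equiv.Perm ℝ) t = t) := by
    rintro u v ⟨hu0, hv0, x, hx, hvu⟩ ⟨n, hn⟩
    rcases hx with hxH | hxf
    · have hyex : ∃ y : ↥G, ((y : Equiv.Perm ℝ) ∈ H) ∧ v = u * y := by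
        rcases hvu with h | h
        · exact ⟨x, hxH, h⟩
        · refine ⟨x⁻¹, ?_, by rw [h]; group⟩
          have hci : ((x⁻¹ : ↥G) : Equiv.Perm ℝ) = ((x : Equiv.Perm ℝ))⁻¹ := rfl
          rw [hci]
          exact H.inv_mem hxH
      obtain ⟨y, hyH, hvy⟩ := hyex
      refine ⟨n, fun t ht => ?_⟩
      have hmem := hiterIoo n t ht
      have hyfix := hHfixlow y hyH _ hmem.2
      rw [hvy]
      have hrw : ((u * y * φ ^ n : ↥G) : Equiv.Perm ℝ) t
          = (u : Equiv.Perm ℝ) ((y : Equiv.Perm ℝ) (((φ ^ n : ↥G) : Equiv.Perm ℝ) t)) := rfl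
      rw [hrw, hyfix]
      exact hn t ht
    · have hvφ : v = u * φ ∨ v = u * φ⁻¹ := by
        rcases hφf with hh | hh
        · rcases hvu with h | h
          · left; rw [h, hxf, hh]
          · right; rw [h, hxf, hh]; try group
        · rcases hvu with h | h
          · right; rw [h, hxf, hh]; try group
          · left; rw [h, hxf, hh]; try group
      rcases hvφ with hv | hv
      · rcases n with _ | n'
        · exfalso
          have hufix : ∀ t ∈ Ioo a a₀, (u : Equiv.Perm ℝ) t = t := by
            intro t ht
            have := hn t ht
            rwa [pow_zero, mul_one] at this
          have hveq : ∀ t ∈ Ico a a₀, (v : Equiv.Perm ℝ) t = (φ : Equiv.Perm ℝ) t := by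
            intro t ht
            rcases eq_or_lt_of_le ht.1 with he | hlt
            · rw [← he, hfix_a v, hφa]
            · rw [hv]
              have hrw : ((u * φ : ↥G) : Equiv.Perm ℝ) t
                  = (u : Equiv.Perm ℝ) ((φ : Equiv.Perm ℝ) t) := rfl
              rw [hrw, hufix _ (hφIoo t ⟨hlt, ht.2⟩)]
          have hval : chiL G a v = Real.log mφ := by
            show Real.log (rightSlope ⇑(v : Equiv.Perm ℝ) a) = _
            rw [rightSlope_congr h1 hveq, hslopeφ]
          rw [hval] at hv0
          exact absurd hv0 (not_le.mpr (Real.log_neg hmφ hmφlt))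
        · refine ⟨n', fun t ht => ?_⟩
          have hgrp : v * φ ^ n' = u * φ ^ (n' + 1) := by rw [hv, pow_succ']; group
          rw [hgrp]
          exact hn t ht
      · refine ⟨n + 1, fun t ht => ?_⟩
        have hgrp : v * φ ^ (n + 1) = u * φ ^ n := by rw [hv, pow_succ']; group
        rw [hgrp]
        exact hn t ht
  have hP1 : ∃ n : ℕ, ∀ t ∈ Ioo a a₀, (((1 : ↥G) * φ ^ n : ↥G) : Equiv.Perm ℝ) t = t :=
    ⟨0, fun t _ => by rw [pow_zero, mul_one]; rfl⟩
  have hPg := rtg_invariant hPpres hconn hP1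
  obtain ⟨n, hn⟩ := hPg
  have htmem : (φ : Equiv.Perm ℝ) t₀ ∈ Ioo a a₀ := ⟨hφt₀a, hφt₀a₀⟩
  rcases n with _ | n'
  · have hthis := hn _ htmem
    rw [pow_zero, mul_one] at hthis
    have hrw : (gstar : Equiv.Perm ℝ) ((φ : Equiv.Perm ℝ) t₀)
        = (φ : Equiv.Perm ℝ) (σs t₀) := by
      have hc1 : (gstar : Equiv.Perm ℝ) ((φ : Equiv.Perm ℝ) t₀)
          = (φ : Equiv.Perm ℝ) ((hstar : Equiv.Perm ℝ)
            (((φ⁻¹ : ↥G) : Equiv.Perm ℝ) ((φ : Equiv.Perm ℝ) t₀))) := rfl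
      rw [hc1, happly_inv φ, Equiv.Perm.inv_apply_self]
    rw [hrw] at hthis
    exact hσsne ((hGm φ).injective hthis)
  · have hiter := hiterIoo n' _ htmem
    have hlt : ((φ ^ (n' + 1) : ↥G) : Equiv.Perm ℝ) ((φ : Equiv.Perm ℝ) t₀)
        < (φ : Equiv.Perm ℝ) a₀ := by
      rw [hupow]
      exact hGm φ hiter.2
    have hfixed := hgstar_fix _ hlt
    have hthis := hn _ htmem
    have hrw : ((gstar * φ ^ (n' + 1) : ↥G) : Equiv.Perm ℝ) ((φ : Equiv.Perm ℝ) t₀)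
        = (gstar : Equiv.Perm ℝ) (((φ ^ (n' + 1) : ↥G) : Equiv.Perm ℝ)
          ((φ : Equiv.Perm ℝ) t₀)) := rfl
    rw [hrw, hfixed] at hthis
    have hstrict : ((φ ^ (n' + 1) : ↥G) : Equiv.Perm ℝ) ((φ : Equiv.Perm ℝ) t₀)
        < (φ : Equiv.Perm ℝ) t₀ := by
      rw [hupow]
      have hmem := hiterIoo n' _ htmem
      calc (φ : Equiv.Perm ℝ) (((φ ^ n' : ↥G) : Equiv.Perm ℝ) ((φ : Equiv.Perm ℝ) t₀))
          < ((φ ^ n' : ↥G) : Equiv.Perm ℝ) ((φ : Equiv.Perm ℝ) t₀) :=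
            hφ _ ⟨hmem.1, le_of_lt hmem.2⟩
        _ ≤ (φ : Equiv.Perm ℝ) t₀ := hiter_le n' _ htmem
    rw [hthis] at hstrict
    exact lt_irrefl _ hstrict

lemma part_two
    (h1 : a < a₀) (h2 : a₀ < c₀) (h3 : c₀ < c)
    (hH : (H : Set (Equiv.Perm ℝ)) ⊆ PLo (Icc a₀ c₀))
    (hHirr : ∀ t : ℝ, a₀ < t → t < c₀ → ∃ g ∈ H, g t ≠ t)
    (hf : f ∈ PLo (Icc a c))
    (hsupp : Ioc a a₀ ∪ Ico c₀ c ⊆ suppOf ⇑f)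
    (G : Subgroup (Equiv.Perm ℝ))
    (hGdef : G = Subgroup.closure ((H : Set (Equiv.Perm ℝ)) ∪ {f})) :
    (∃ g : ↥G, chiR G c g ≠ 0) ∧ ¬ MemSigma1 (chiR G c) := by
  have hSgen : ∀ σ ∈ (H : Set (Equiv.Perm ℝ)) ∪ {f}, StrictMono ⇑σ ∧ suppOf ⇑σ ⊆ Icc a c := by
    rintro σ (hσ | hσ)
    · refine ⟨(hH hσ).1, fun t ht => ?_⟩
      have := (hH hσ).2.2 ht
      exact ⟨le_trans (le_of_lt h1) this.1, le_trans this.2 (le_of_lt h3)⟩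
    · rw [mem_singleton_iff] at hσ
      subst hσ
      exact ⟨hf.1, hf.2.2⟩
  have hGP : ∀ u : G, StrictMono ⇑(u : Equiv.Perm ℝ) ∧
      suppOf ⇑(u : Equiv.Perm ℝ) ⊆ Icc a c := fun u => group_props hSgen _ (hGdef ▸ u.2)
  have hGm : ∀ u : G, StrictMono ⇑(u : Equiv.Perm ℝ) := fun u => (hGP u).1
  have hfix_c : ∀ u : G, (u : Equiv.Perm ℝ) c = c := by
    intro u
    apply fix_of_fix_above (hGm u)
    intro t ht
    by_contra hc
    exact absurd ((hGP u).2 hc).2 (not_le.mpr ht)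
  have HleG : ∀ σ : Equiv.Perm ℝ, σ ∈ H → σ ∈ G := by
    intro σ hσ
    rw [hGdef]
    exact Subgroup.subset_closure (Or.inl hσ)
  obtain ⟨fG, hfGcoe⟩ : ∃ fg : G, (fg : Equiv.Perm ℝ) = f :=
    ⟨⟨f, by rw [hGdef]; exact Subgroup.subset_closure (Or.inr rfl)⟩, rfl⟩
  have hfGinv : ((fG⁻¹ : G) : Equiv.Perm ℝ) = f⁻¹ := by rw [← hfGcoe]; rfl
  have hfc : Continuous ⇑f := continuous_of_strictMono hf.1
  have hfcc : f c = c := by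
    have := hfix_c fG
    rwa [hfGcoe] at this
  obtain ⟨δf, mf, hδf, hmf, hfaff⟩ := exists_affine_left hf.1 hf.2.1 hfcc
  -- the generator ψ pushing up near c, with its slope at c
  have hψex : ∃ ψ : G, (ψ = fG ∨ ψ = fG⁻¹) ∧ (∀ t ∈ Ico c₀ c, t < (ψ : Equiv.Perm ℝ) t) ∧
      ∃ δ m : ℝ, 0 < δ ∧ 0 < m ∧
        ∀ u ∈ Ioc (c - δ) c, (ψ : Equiv.Perm ℝ) u = m * (u - c) + c := by
    rcases sign_dichotomy_Ico h3 hfc (fun t ht h => hsupp (Or.inr ht) h) with hd | hd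
    · refine ⟨fG⁻¹, Or.inr rfl, fun t ht => ?_, mf * δf, mf⁻¹, by positivity, by positivity,
        fun u hu => by rw [hfGinv]; exact affine_inv_left hδf hmf hfaff u hu⟩
      rw [hfGinv]
      apply (hf.1.lt_iff_lt).mp
      rw [Equiv.Perm.apply_inv_self]
      exact hd t ht
    · exact ⟨fG, Or.inl rfl, fun t ht => by rw [hfGcoe]; exact hd t ht,
        δf, mf, hδf, hmf, fun u hu => by rw [hfGcoe]; exact hfaff u hu⟩
  obtain ⟨ψ, hψf, hψ, δψ, mψ, hδψ, hmψ, hψaff⟩ := hψex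
  have hψc : (ψ : Equiv.Perm ℝ) c = c := hfix_c ψ
  have happly_inv : ∀ (u : G) (t : ℝ),
      ((u⁻¹ : G) : Equiv.Perm ℝ) t = ((u : Equiv.Perm ℝ))⁻¹ t := fun u t => rfl
  have hslopeψ : leftSlope ⇑(ψ : Equiv.Perm ℝ) c = mψ := leftSlope_of_affine hδψ hψaff
  have hmψlt : mψ < 1 := by
    set t := c - min δψ (c - c₀) / 2 with htdef
    have hmin : 0 < min δψ (c - c₀) := lt_min hδψ (by linarith)
    have ht1 : t ∈ Ioc (c - δψ) c := by
      constructor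
      · have := min_le_left δψ (c - c₀)
        rw [htdef]; linarith
      · rw [htdef]; linarith
    have ht2 : t ∈ Ico c₀ c := by
      constructor
      · have := min_le_right δψ (c - c₀)
        rw [htdef]; linarith
      · rw [htdef]; linarith
    have hlt := hψ t ht2
    rw [hψaff t ht1] at hlt
    have htc : t - c < 0 := by
      rw [htdef]; linarith
    nlinarith
  have hchiψ : chiR G c ψ < 0 := by
    show Real.log (leftSlope ⇑(ψ : Equiv.Perm ℝ) c) < 0
    rw [hslopeψ]
    exact Real.log_neg hmψ hmψlt
  refine ⟨⟨ψ, ne_of_lt hchiψ⟩, ?_⟩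
  intro hMS
  set Xbad : Set ↥G := {g : ↥G | (g : Equiv.Perm ℝ) ∈ H ∨ g = fG} with hXdef
  have hXgen : Subgroup.closure Xbad = ⊤ := by
    have hle : G ≤ (Subgroup.closure Xbad).map G.subtype := by
      conv_lhs => rw [hGdef]
      rw [Subgroup.closure_le]
      rintro σ (hσ | hσ)
      · exact ⟨⟨σ, HleG σ hσ⟩, Subgroup.subset_closure (Or.inl hσ), rfl⟩
      · rw [mem_singleton_iff] at hσ
        subst hσ
        exact ⟨fG, Subgroup.subset_closure (Or.inr rfl), hfGcoe⟩
    rw [eq_top_iff]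
    intro g _
    obtain ⟨g', hg', hgg'⟩ := hle g.2
    have : g' = g := Subtype.ext hgg'
    rwa [← this]
  have hψinvc₀ : ((ψ⁻¹ : G) : Equiv.Perm ℝ) c₀ < c₀ := by
    rw [happly_inv]
    apply ((hGm ψ).lt_iff_lt).mp
    rw [Equiv.Perm.apply_inv_self]
    exact hψ c₀ ⟨le_refl _, h3⟩
  set t₀ := (max (((ψ⁻¹ : G) : Equiv.Perm ℝ) c₀) a₀ + c₀) / 2 with ht₀def
  have ht₀lt : t₀ < c₀ := by
    have := max_lt hψinvc₀ h2
    rw [ht₀def]; linarith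
  have ht₀gt : max (((ψ⁻¹ : G) : Equiv.Perm ℝ) c₀) a₀ < t₀ := by
    have := max_lt hψinvc₀ h2
    rw [ht₀def]; linarith
  obtain ⟨σs, hσsH, hσsne⟩ := hHirr t₀ (lt_of_le_of_lt (le_max_right _ _) ht₀gt) ht₀lt
  set hstar : ↥G := ⟨σs, HleG σs hσsH⟩ with hstardef
  set gstar : ↥G := ψ * hstar * ψ⁻¹ with hgstardef
  have hψt₀c₀ : c₀ < (ψ : Equiv.Perm ℝ) t₀ := by
    have h5 : ((ψ⁻¹ : G) : Equiv.Perm ℝ) c₀ < t₀ :=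
      lt_of_le_of_lt (le_max_left _ _) ht₀gt
    have := hGm ψ h5
    rwa [happly_inv ψ c₀, Equiv.Perm.apply_inv_self] at this
  have hψt₀c : (ψ : Equiv.Perm ℝ) t₀ < c := by
    have := hGm ψ (lt_trans ht₀lt h3)
    rwa [hψc] at this
  have hgstar_fix : ∀ t : ℝ, (ψ : Equiv.Perm ℝ) c₀ < t → (gstar : Equiv.Perm ℝ) t = t := by
    intro t ht
    by_contra hne
    have hsupp' : ((ψ : Equiv.Perm ℝ))⁻¹ t ∈ suppOf ⇑σs := by
      have hcoe : (gstar : Equiv.Perm ℝ) =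
          (ψ : Equiv.Perm ℝ) * σs * ((ψ : Equiv.Perm ℝ))⁻¹ := rfl
      rw [hcoe] at hne
      exact mem_supp_conj.mp hne
    have hb := ((hH hσsH).2.2 hsupp').2
    have := (hGm ψ).monotone hb
    rw [Equiv.Perm.apply_inv_self] at this
    linarith
  have hchi1 : chiR G c (1 : ↥G) = 0 := by
    show Real.log (leftSlope ⇑((1 : ↥G) : Equiv.Perm ℝ) c) = 0
    rw [leftSlope_one_of_fix (g := ⇑((1 : ↥G) : Equiv.Perm ℝ)) h3 (fun u _ => rfl)]
    exact Real.log_one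
  have hchig : chiR G c gstar = 0 := by
    show Real.log (leftSlope ⇑((gstar : ↥G) : Equiv.Perm ℝ) c) = 0
    have hlt : (ψ : Equiv.Perm ℝ) c₀ < c := by
      have := hGm ψ h3; rwa [hψc] at this
    rw [leftSlope_one_of_fix hlt (fun u hu => hgstar_fix u hu.1)]
    exact Real.log_one
  have hconn := hMS Xbad hXgen 1 gstar (by rw [hchi1]) (by rw [hchig])
  have hupow : ∀ (v : ↥G) (k : ℕ) (t : ℝ), ((v ^ (k+1) : ↥G) : Equiv.Perm ℝ) t =
      (v : Equiv.Perm ℝ) (((v ^ k : ↥G) : Equiv.Perm ℝ) t) := by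
    intro v k t; rw [pow_succ']; rfl
  have hu0 : ∀ (v : ↥G) (t : ℝ), ((v ^ 0 : ↥G) : Equiv.Perm ℝ) t = t := by
    intro v t; rw [pow_zero]; rfl
  have hψIoo : ∀ t ∈ Ioo c₀ c, (ψ : Equiv.Perm ℝ) t ∈ Ioo c₀ c := by
    intro t ht
    constructor
    · exact lt_trans ht.1 (hψ t ⟨le_of_lt ht.1, ht.2⟩)
    · have := hGm ψ ht.2; rwa [hψc] at this
  have hiterIoo : ∀ (k : ℕ), ∀ t ∈ Ioo c₀ c, ((ψ ^ k : ↥G) : Equiv.Perm ℝ) t ∈ Ioo c₀ c := by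
    intro k
    induction k with
    | zero => intro t ht; rw [hu0]; exact ht
    | succ n ih => intro t ht; rw [hupow]; exact hψIoo _ (ih t ht)
  have hiter_ge : ∀ (k : ℕ), ∀ t ∈ Ioo c₀ c, t ≤ ((ψ ^ k : ↥G) : Equiv.Perm ℝ) t := by
    intro k
    induction k with
    | zero => intro t ht; rw [hu0]
    | succ n ih =>
      intro t ht
      rw [hupow]
      have hmem := hiterIoo n t ht
      have := hψ _ ⟨le_of_lt hmem.1, hmem.2⟩
      linarith [ih t ht]
  have hHfixhigh : ∀ (y : ↥G), ((y : Equiv.Perm ℝ) ∈ H) → ∀ t : ℝ, c₀ < t →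
      (y : Equiv.Perm ℝ) t = t := by
    intro y hy t ht
    by_contra hne
    exact absurd ((hH hy).2.2 hne).2 (not_le.mpr ht)
  have hPpres : ∀ u v : ↥G,
      (0 ≤ chiR G c u ∧ 0 ≤ chiR G c v ∧ ∃ x ∈ Xbad, v = u * x ∨ u = v * x) →
      (∃ n : ℕ, ∀ t ∈ Ioo c₀ c, ((u * ψ ^ n : ↥G) : Equiv.Perm ℝ) t = t) →
      (∃ n : ℕ, ∀ t ∈ Ioo c₀ c, ((v * ψ ^ n : ↥G) : Equiv.Perm ℝ) t = t) := by
    rintro u v ⟨hu0, hv0, x, hx, hvu⟩ ⟨n, hn⟩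
    rcases hx with hxH | hxf
    · have hyex : ∃ y : ↥G, ((y : Equiv.Perm ℝ) ∈ H) ∧ v = u * y := by
        rcases hvu with h | h
        · exact ⟨x, hxH, h⟩
        · refine ⟨x⁻¹, ?_, by rw [h]; group⟩
          have hci : ((x⁻¹ : ↥G) : Equiv.Perm ℝ) = ((x : Equiv.Perm ℝ))⁻¹ := rfl
          rw [hci]
          exact H.inv_mem hxH
      obtain ⟨y, hyH, hvy⟩ := hyex
      refine ⟨n, fun t ht => ?_⟩
      have hmem := hiterIoo n t ht
      have hyfix := hHfixhigh y hyH _ hmem.1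
      rw [hvy]
      have hrw : ((u * y * ψ ^ n : ↥G) : Equiv.Perm ℝ) t
          = (u : Equiv.Perm ℝ) ((y : Equiv.Perm ℝ) (((ψ ^ n : ↥G) : Equiv.Perm ℝ) t)) := rfl
      rw [hrw, hyfix]
      exact hn t ht
    · have hvψ : v = u * ψ ∨ v = u * ψ⁻¹ := by
        rcases hψf with hh | hh
        · rcases hvu with h | h
          · left; rw [h, hxf, hh]
          · right; rw [h, hxf, hh]; try group
        · rcases hvu with h | h
          · right; rw [h, hxf, hh]; try group
          · left; rw [h, hxf, hh]; try group
      rcases hvψ with hv | hv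
      · rcases n with _ | n'
        · exfalso
          have hufix : ∀ t ∈ Ioo c₀ c, (u : Equiv.Perm ℝ) t = t := by
            intro t ht
            have := hn t ht
            rwa [pow_zero, mul_one] at this
          have hveq : ∀ t ∈ Ioc c₀ c, (v : Equiv.Perm ℝ) t = (ψ : Equiv.Perm ℝ) t := by
            intro t ht
            rcases eq_or_lt_of_le ht.2 with he | hlt
            · rw [he, hfix_c v, hψc]
            · rw [hv]
              have hrw : ((u * ψ : ↥G) : Equiv.Perm ℝ) t
                  = (u : Equiv.Perm ℝ) ((ψ : Equiv.Perm ℝ) t) := rfl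
              rw [hrw, hufix _ (hψIoo t ⟨ht.1, hlt⟩)]
          have hval : chiR G c v = Real.log mψ := by
            show Real.log (leftSlope ⇑(v : Equiv.Perm ℝ) c) = _
            rw [leftSlope_congr h3 hveq, hslopeψ]
          rw [hval] at hv0
          exact absurd hv0 (not_le.mpr (Real.log_neg hmψ hmψlt))
        · refine ⟨n', fun t ht => ?_⟩
          have hgrp : v * ψ ^ n' = u * ψ ^ (n' + 1) := by rw [hv, pow_succ']; group
          rw [hgrp]
          exact hn t ht
      · refine ⟨n + 1, fun t ht => ?_⟩
        have hgrp : v * ψ ^ (n + 1) = u * ψ ^ n := by rw [hv, pow_succ']; group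
        rw [hgrp]
        exact hn t ht
  have hP1 : ∃ n : ℕ, ∀ t ∈ Ioo c₀ c, (((1 : ↥G) * ψ ^ n : ↥G) : Equiv.Perm ℝ) t = t :=
    ⟨0, fun t _ => by rw [pow_zero, mul_one]; rfl⟩
  have hPg := rtg_invariant hPpres hconn hP1
  obtain ⟨n, hn⟩ := hPg
  have htmem : (ψ : Equiv.Perm ℝ) t₀ ∈ Ioo c₀ c := ⟨hψt₀c₀, hψt₀c⟩
  rcases n with _ | n'
  · have hthis := hn _ htmem
    rw [pow_zero, mul_one] at hthis
    have hrw : (gstar : Equiv.Perm ℝ) ((ψ : Equiv.Perm ℝ) t₀)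
        = (ψ : Equiv.Perm ℝ) (σs t₀) := by
      have hc1 : (gstar : Equiv.Perm ℝ) ((ψ : Equiv.Perm ℝ) t₀)
          = (ψ : Equiv.Perm ℝ) ((hstar : Equiv.Perm ℝ)
            (((ψ⁻¹ : ↥G) : Equiv.Perm ℝ) ((ψ : Equiv.Perm ℝ) t₀))) := rfl
      rw [hc1, happly_inv ψ, Equiv.Perm.inv_apply_self]
    rw [hrw] at hthis
    exact hσsne ((hGm ψ).injective hthis)
  · have hiter := hiterIoo n' _ htmem
    have hlt : (ψ : Equiv.Perm ℝ) c₀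
        < ((ψ ^ (n' + 1) : ↥G) : Equiv.Perm ℝ) ((ψ : Equiv.Perm ℝ) t₀) := by
      rw [hupow]
      exact hGm ψ hiter.1
    have hfixed := hgstar_fix _ hlt
    have hthis := hn _ htmem
    have hrw : ((gstar * ψ ^ (n' + 1) : ↥G) : Equiv.Perm ℝ) ((ψ : Equiv.Perm ℝ) t₀)
        = (gstar : Equiv.Perm ℝ) (((ψ ^ (n' + 1) : ↥G) : Equiv.Perm ℝ)
          ((ψ : Equiv.Perm ℝ) t₀)) := rfl
    rw [hrw, hfixed] at hthis
    have hstrict : (ψ : Equiv.Perm ℝ) t₀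
        < ((ψ ^ (n' + 1) : ↥G) : Equiv.Perm ℝ) ((ψ : Equiv.Perm ℝ) t₀) := by
      rw [hupow]
      have hmem := hiterIoo n' _ htmem
      calc (ψ : Equiv.Perm ℝ) t₀
          ≤ ((ψ ^ n' : ↥G) : Equiv.Perm ℝ) ((ψ : Equiv.Perm ℝ) t₀) := hiter_ge n' _ htmem
        _ < (ψ : Equiv.Perm ℝ) (((ψ ^ n' : ↥G) : Equiv.Perm ℝ) ((ψ : Equiv.Perm ℝ) t₀)) :=
            hψ _ ⟨le_of_lt hmem.1, hmem.2⟩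
    rw [hthis] at hstrict
    exact lt_irrefl _ hstrict

end main

end S15

/-- **Lemma (Statement 15).** Let `a < a₀ < c₀ < c`, let `H ≤ PL_o([a₀,c₀])` be
irreducible, let `f ∈ PL_o([a,c])` have support containing `]a,a₀] ∪ [c₀,c[`, let
`G = gp(H ∪ {f})` and let `N` be the normal closure of `H` in `G`. Then
`{[χ_ℓ], [χ_r]} ⊆ Σ¹(G)^c ⊆ S(G, N)`. -/
theorem sigma1_complement_bounded_by_infinite_cyclic
    (a a₀ c₀ c : ℝ) (h1 : a < a₀) (h2 : a₀ < c₀) (h3 : c₀ < c)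
    (H : Subgroup (Equiv.Perm ℝ)) (hH : (H : Set (Equiv.Perm ℝ)) ⊆ PLo (Icc a₀ c₀))
    (hHirr : ∀ t : ℝ, a₀ < t → t < c₀ → ∃ g ∈ H, g t ≠ t)
    (f : Equiv.Perm ℝ) (hf : f ∈ PLo (Icc a c))
    (hsupp : Ioc a a₀ ∪ Ico c₀ c ⊆ suppOf ⇑f) :
    ∀ G : Subgroup (Equiv.Perm ℝ),
      G = Subgroup.closure ((H : Set (Equiv.Perm ℝ)) ∪ {f}) →
    ∀ N : Subgroup G,
      N = Subgroup.normalClosure {x : G | (x : Equiv.Perm ℝ) ∈ H} →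
      ((∃ g : G, chiL G a g ≠ 0) ∧ ¬ MemSigma1 (chiL G a)) ∧
      ((∃ g : G, chiR G c g ≠ 0) ∧ ¬ MemSigma1 (chiR G c)) ∧
      (∀ χ : G → ℝ, IsChar χ → χ ≠ 0 → ¬ MemSigma1 χ → ∀ x ∈ N, χ x = 0) := by
  intro G hG N hN
  refine ⟨S15.part_one h1 h2 h3 hH hHirr hf hsupp G hG,
    S15.part_two h1 h2 h3 hH hHirr hf hsupp G hG, ?_⟩
  intro χ hχ _ hnM x hx
  by_contra hx0
  have hex : ∃ s : ↥G, (s : Equiv.Perm ℝ) ∈ H ∧ χ s ≠ 0 := by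
    by_contra hcon
    push_neg at hcon
    let K : Subgroup ↥G :=
      { carrier := {g : ↥G | χ g = 0}
        one_mem' := S15.char_one hχ
        mul_mem' := by
          intro p q hp hq
          have hp' : χ p = 0 := hp
          have hq' : χ q = 0 := hq
          show χ (p * q) = 0
          rw [hχ, hp', hq']
          ring
        inv_mem' := by
          intro p hp
          have hp' : χ p = 0 := hp
          show χ p⁻¹ = 0
          rw [S15.char_inv hχ, hp']
          ring }
    have hKn : K.Normal := by
      constructor
      intro n hn g
      have hn' : χ n = 0 := hn
      show χ (g * n * g⁻¹) = 0
      rw [S15.char_conj hχ, hn']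
    have hNK : N ≤ K := by
      rw [hN]
      exact Subgroup.normalClosure_le_normal (fun y hy => hcon y hy)
    exact hx0 (hNK hx)
  obtain ⟨s, hsH, hs0⟩ := hex
  have hpos : ∃ h₀ : ↥G, (h₀ : Equiv.Perm ℝ) ∈ H ∧ 0 < χ h₀ := by
    rcases lt_or_gt_of_ne hs0 with h | h
    · refine ⟨s⁻¹, ?_, ?_⟩
      · have hci : ((s⁻¹ : ↥G) : Equiv.Perm ℝ) = ((s : Equiv.Perm ℝ))⁻¹ := rfl
        rw [hci]
        exact H.inv_mem hsH
      · rw [S15.char_inv hχ]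
        linarith
    · exact ⟨s, hsH, h⟩
  obtain ⟨h₀, hh₀H, hh₀pos⟩ := hpos
  exact hnM (fun X hX =>
    S15.connectivity h1 h2 h3 hH hHirr hf hsupp G hG χ hχ h₀ hh₀H hh₀pos X hX)
end
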